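/- arXiv:2306.03628 — 4 statements merged into one kernel-verified Lean document; each statement's English description precedes it below -/
import Mathlib

section
/- Every weighted linear indexed grammar is weakly equivalent to a top-down weighted linear indexed grammar, i.e., one in which every production either pops exactly one stack symbol from the distinguished nonterminal's stack (X[∘A] → Ψ X'[∘β] Ψ') or is terminal with singleton stack (X[A] → a), and all other nonterminals on right-hand sides carry the fixed initial stack [S]. -/
open scoped BigOperators

namespace CtrlForm

/-- Sentential forms: nonterminals carrying a stack (top at the right of the
list), and terminals. -/
abbrev SForm (N T Γ : Type) := List ((N × List Γ) ⊕ T)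

/-- Productions of a (weighted) linear indexed grammar:
`rw X β Ψ X' β' Ψ'` is the production `X[∘β] → Ψ X'[∘β'] Ψ'`, where `X'` is
the distinguished child inheriting the rest of the stack, and
`term X β a` is the production `X[β] → a` with `a ∈ Σ ∪ {ε}`. -/
inductive LIGProd (N T Γ : Type) where
  | rw (X : N) (β : List Γ) (Ψ : SForm N T Γ) (X' : N) (β' : List Γ) (Ψ' : SForm N T Γ)
  | term (X : N) (β : List Γ) (a : Option T)

/-- A weighted linear indexed grammar (WLIG) over a weight type `A`. -/
structure WLIG (N T Γ A : Type) where
  prods : List (LIGProd N T Γ)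
  start : N
  initStack : List Γ
  wt : LIGProd N T Γ → A

namespace WLIG

variable {N T Γ A : Type}

/-- A single derivation step of a WLIG. -/
inductive Step (G : WLIG N T Γ A) : SForm N T Γ → SForm N T Γ → Prop where
  | rw (pre post : SForm N T Γ) (σ : List Γ) {X : N} {β : List Γ} {Ψ : SForm N T Γ}
      {X' : N} {β' : List Γ} {Ψ' : SForm N T Γ}
      (hp : LIGProd.rw X β Ψ X' β' Ψ' ∈ G.prods) :
      Step G (pre ++ [Sum.inl (X, σ ++ β)] ++ post)
        (pre ++ Ψ ++ [Sum.inl (X', σ ++ β')] ++ Ψ' ++ post)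
  | term (pre post : SForm N T Γ) {X : N} {β : List Γ} {a : Option T}
      (hp : LIGProd.term X β a ∈ G.prods) :
      Step G (pre ++ [Sum.inl (X, β)] ++ post)
        (pre ++ a.toList.map Sum.inr ++ post)

/-- The derivation relation of a WLIG. -/
def Derives (G : WLIG N T Γ A) : SForm N T Γ → SForm N T Γ → Prop :=
  Relation.ReflTransGen G.Step

/-- The string language of a WLIG (weights ignored). -/
def language (G : WLIG N T Γ A) : Set (List T) :=
  { w | G.Derives [Sum.inl (G.start, G.initStack)] (w.map Sum.inr) }

/-- Every nonterminal occurring in the sentential form `Ψ` carries the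
stack `[S]`. -/
def AuxTD (S : Γ) (Ψ : SForm N T Γ) : Prop :=
  ∀ x ∈ Ψ, ∀ Y : N, ∀ σ : List Γ, x = Sum.inl (Y, σ) → σ = [S]

/-- A WLIG is top-down if every production either pops exactly one stack
symbol from the distinguished nonterminal's stack (`X[∘A] → Ψ X'[∘β] Ψ'`)
or is terminal with singleton stack (`X[A] → a`), all auxiliary
nonterminals carry the initial stack `[S]`, and the initial stack is `[S]`. -/
def IsTopDown (G : WLIG N T Γ A) : Prop :=
  ∃ S : Γ, G.initStack = [S] ∧
    ∀ p ∈ G.prods,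
      (∃ X A' Ψ X' β Ψ', p = LIGProd.rw X [A'] Ψ X' β Ψ' ∧ AuxTD S Ψ ∧ AuxTD S Ψ') ∨
      (∃ X A' a, p = LIGProd.term X [A'] a)

end WLIG

-- ===================== auxiliary development =====================

namespace TD

open WLIG

variable {N T Γ A : Type}

/-- Helper: a step with explicitly provided equalities. -/
lemma step_rw_eq {G : WLIG N T Γ A} {X : N} {β : List Γ} {Ψ : SForm N T Γ}
    {X' : N} {β' : List Γ} {Ψ' : SForm N T Γ} {u v : SForm N T Γ}
    (pre post : SForm N T Γ) (σ : List Γ)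
    (hp : LIGProd.rw X β Ψ X' β' Ψ' ∈ G.prods)
    (h1 : u = pre ++ [Sum.inl (X, σ ++ β)] ++ post)
    (h2 : v = pre ++ Ψ ++ [Sum.inl (X', σ ++ β')] ++ Ψ' ++ post) :
    G.Step u v := by
  subst h1; subst h2; exact Step.rw pre post σ hp

lemma step_term_eq {G : WLIG N T Γ A} {X : N} {β : List Γ} {a : Option T}
    {u v : SForm N T Γ} (pre post : SForm N T Γ)
    (hp : LIGProd.term X β a ∈ G.prods)
    (h1 : u = pre ++ [Sum.inl (X, β)] ++ post)
    (h2 : v = pre ++ a.toList.map Sum.inr ++ post) :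
    G.Step u v := by
  subst h1; subst h2; exact Step.term pre post hp

lemma step_context {G : WLIG N T Γ A} {u v : SForm N T Γ} (a b : SForm N T Γ)
    (h : G.Step u v) : G.Step (a ++ u ++ b) (a ++ v ++ b) := by
  cases h with
  | rw pre post σ hp =>
      refine step_rw_eq (a ++ pre) (post ++ b) σ hp ?_ ?_ <;> simp
  | term pre post hp =>
      refine step_term_eq (a ++ pre) (post ++ b) hp ?_ ?_ <;> simp

lemma derives_context {G : WLIG N T Γ A} {u v : SForm N T Γ} (a b : SForm N T Γ)
    (h : G.Derives u v) : G.Derives (a ++ u ++ b) (a ++ v ++ b) := by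
  induction h with
  | refl => exact Relation.ReflTransGen.refl
  | tail _ hstep ih => exact ih.tail (step_context a b hstep)

-- ------------- the construction -------------

abbrev NT (N T Γ : Type) := N ⊕ ((N × List Γ) ⊕ (LIGProd N T Γ × List Γ × Bool))

def flatE (γ : List Γ) : List (Option Γ) := γ.flatMap (fun b => [some b, none])

def encS (γ : List Γ) : List (Option Γ) := none :: flatE γ

def liv (X : N) : NT N T Γ := Sum.inl X
def frz (yγ : N × List Γ) : NT N T Γ := Sum.inr (Sum.inl yγ)
def ch (p : LIGProd N T Γ) (d : List Γ) (b : Bool) : NT N T Γ := Sum.inr (Sum.inr (p, d, b))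

def hd : LIGProd N T Γ → N
  | .rw X _ _ _ _ _ => X
  | .term X _ _ => X

def unflat (stk : List (Option Γ)) : List Γ := stk.filterMap id

def dNT : (NT N T Γ) × List (Option Γ) → N × List Γ
  | (Sum.inl X, stk) => (X, unflat stk)
  | (Sum.inr (Sum.inl yγ), stk) => (yγ.1, unflat stk ++ yγ.2)
  | (Sum.inr (Sum.inr c), stk) => (hd c.1, unflat stk ++ c.2.1)

def dec : SForm (NT N T Γ) T (Option Γ) → SForm N T Γ := List.map (Sum.map dNT id)

def frzE : SForm N T Γ → SForm (NT N T Γ) T (Option Γ) :=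
  List.map (Sum.map (fun yγ => (frz yγ, ([none] : List (Option Γ)))) id)

def livE : SForm N T Γ → SForm (NT N T Γ) T (Option Γ) :=
  List.map (Sum.map (fun yγ => (liv yγ.1, encS yγ.2)) id)

def ufProd (yγ : N × List Γ) : LIGProd (NT N T Γ) T (Option Γ) :=
  .rw (frz yγ) [none] [] (liv yγ.1) (encS yγ.2) []

def entryP (p : LIGProd N T Γ) (X : N) : LIGProd (NT N T Γ) T (Option Γ) :=
  .rw (liv X) [none] [] (ch p [] false) [] []

def popSomes (p : LIGProd N T Γ) (β : List Γ) : List (LIGProd (NT N T Γ) T (Option Γ)) :=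
  (List.range β.length).filterMap fun j =>
    (β[j]?).map fun B =>
      .rw (ch p (β.drop (j+1)) false) [some B] [] (ch p (β.drop j) true) [] []

def popNones (p : LIGProd N T Γ) (β : List Γ) : List (LIGProd (NT N T Γ) T (Option Γ)) :=
  (List.range β.length).map fun j =>
    .rw (ch p (β.drop j) true) [none] [] (ch p (β.drop j) false) [] []

def compile : LIGProd N T Γ → List (LIGProd (NT N T Γ) T (Option Γ))
  | .rw X [] Ψ X' β' Ψ' => [.rw (liv X) [none] (frzE Ψ) (liv X') (encS β') (frzE Ψ')]
  | .rw X (B :: βt) Ψ X' β' Ψ' =>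
      let p := LIGProd.rw X (B :: βt) Ψ X' β' Ψ'
      entryP p X :: (popSomes p (B :: βt) ++ popNones p (B :: βt)
        ++ [.rw (ch p (B :: βt) true) [none] (frzE Ψ) (liv X') (encS β') (frzE Ψ')])
  | .term X [] a => [.term (liv X) [none] a]
  | .term X (B :: βt) a =>
      let p := LIGProd.term X (B :: βt) a
      entryP p X :: (popSomes p (B :: βt) ++ popNones p (B :: βt)
        ++ [.term (ch p (B :: βt) true) [none] a])

def frozPairs : LIGProd N T Γ → List (N × List Γ)
  | .rw _ _ Ψ _ _ Ψ' => (Ψ ++ Ψ').filterMap Sum.getLeft?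
  | .term _ _ _ => []

def construct (G : WLIG N T Γ A) (w0 : A) : WLIG (NT N T Γ) T (Option Γ) A where
  prods := G.prods.flatMap compile
    ++ ufProd (G.start, G.initStack) :: (G.prods.flatMap frozPairs).map ufProd
  start := frz (G.start, G.initStack)
  initStack := [none]
  wt := fun _ => w0


-- ------------- basic lemmas -------------

@[simp] lemma unflat_nil : unflat ([] : List (Option Γ)) = [] := rfl

@[simp] lemma unflat_append (a b : List (Option Γ)) :
    unflat (a ++ b) = unflat a ++ unflat b := List.filterMap_append ..

@[simp] lemma unflat_none : unflat ([none] : List (Option Γ)) = [] := rfl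

@[simp] lemma unflat_some (B : Γ) : unflat [some B] = [B] := rfl

@[simp] lemma flatE_nil : flatE ([] : List Γ) = [] := rfl

@[simp] lemma flatE_append (a b : List Γ) : flatE (a ++ b) = flatE a ++ flatE b := by
  simp [flatE]

@[simp] lemma unflat_flatE (γ : List Γ) : unflat (flatE γ) = γ := by
  simp only [unflat]
  induction γ with
  | nil => rfl
  | cons B γ ih =>
      simp only [flatE, List.flatMap_cons, List.flatMap] at ih ⊢
      simp [List.filterMap_cons, List.filterMap_append] at ih ⊢
      exact ih

@[simp] lemma unflat_cons_none (l : List (Option Γ)) : unflat (none :: l) = unflat l := rfl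

@[simp] lemma unflat_cons_some (B : Γ) (l : List (Option Γ)) :
    unflat (some B :: l) = B :: unflat l := rfl

@[simp] lemma unflat_encS (γ : List Γ) : unflat (encS γ) = γ := by
  simp [encS]

lemma encS_append (a b : List Γ) : encS (a ++ b) = encS a ++ flatE b := by
  simp [encS]

lemma encS_concat (σ : List Γ) : ∃ τ, encS σ = τ ++ [(none : Option Γ)] := by
  induction σ using List.reverseRecOn with
  | nil => exact ⟨[], rfl⟩
  | append_singleton γ b _ =>
      exact ⟨none :: (flatE γ ++ [some b]), by simp [encS, flatE]⟩

@[simp] lemma dec_nil : dec ([] : SForm (NT N T Γ) T (Option Γ)) = [] := rfl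

@[simp] lemma dec_append (a b : SForm (NT N T Γ) T (Option Γ)) :
    dec (a ++ b) = dec a ++ dec b := List.map_append ..

@[simp] lemma dec_terms (w : List T) :
    dec (w.map Sum.inr : SForm (NT N T Γ) T (Option Γ)) = w.map Sum.inr := by
  simp [dec, Function.comp]

@[simp] lemma dec_frzE (Ψ : SForm N T Γ) : dec (frzE Ψ) = Ψ := by
  induction Ψ with
  | nil => rfl
  | cons x Ψ ih =>
      cases x with
      | inl yγ => simpa [dec, frzE, dNT, frz] using ih
      | inr t => simpa [dec, frzE] using ih

@[simp] lemma livE_nil : livE ([] : SForm N T Γ) = [] := rfl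

@[simp] lemma livE_append (a b : SForm N T Γ) :
    livE (a ++ b) = livE a ++ livE b := List.map_append ..

@[simp] lemma livE_terms (w : List T) :
    livE (w.map Sum.inr : SForm N T Γ) = w.map Sum.inr := by
  simp [livE, Function.comp]

-- membership helpers

lemma mem_prods_cases {G : WLIG N T Γ A} {w0 : A} {q : LIGProd (NT N T Γ) T (Option Γ)}
    (hq : q ∈ (construct G w0).prods) :
    (∃ p ∈ G.prods, q ∈ compile p) ∨ (∃ yγ : N × List Γ, q = ufProd yγ) := by
  simp only [construct, List.mem_append, List.mem_cons, List.mem_flatMap,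
    List.mem_map] at hq
  rcases hq with ⟨p, hp, hc⟩ | h | ⟨yγ, _, rfl⟩
  · exact Or.inl ⟨p, hp, hc⟩
  · exact Or.inr ⟨_, h⟩
  · exact Or.inr ⟨yγ, rfl⟩

lemma mem_compile_sub {G : WLIG N T Γ A} {w0 : A} {p : LIGProd N T Γ}
    (hp : p ∈ G.prods) {q : LIGProd (NT N T Γ) T (Option Γ)} (hq : q ∈ compile p) :
    q ∈ (construct G w0).prods := by
  simp only [construct, List.mem_append, List.mem_cons, List.mem_flatMap]
  exact Or.inl ⟨p, hp, hq⟩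

lemma uf_start_mem {G : WLIG N T Γ A} {w0 : A} :
    ufProd (G.start, G.initStack) ∈ (construct G w0).prods := by
  simp [construct]

lemma uf_mem {G : WLIG N T Γ A} {w0 : A} {p : LIGProd N T Γ} (hp : p ∈ G.prods)
    {yγ : N × List Γ} (hyγ : yγ ∈ frozPairs p) :
    ufProd yγ ∈ (construct G w0).prods := by
  simp only [construct, List.mem_append, List.mem_cons, List.mem_flatMap, List.mem_map]
  exact Or.inr (Or.inr ⟨yγ, ⟨p, hp, hyγ⟩, rfl⟩)


@[simp] lemma dNT_liv (X : N) (stk : List (Option Γ)) :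
    dNT (T := T) (liv X, stk) = (X, unflat stk) := rfl

@[simp] lemma dNT_frz (yγ : N × List Γ) (stk : List (Option Γ)) :
    dNT (T := T) (frz yγ, stk) = (yγ.1, unflat stk ++ yγ.2) := rfl

@[simp] lemma dNT_ch (p : LIGProd N T Γ) (d : List Γ) (b : Bool) (stk : List (Option Γ)) :
    dNT (ch p d b, stk) = (hd p, unflat stk ++ d) := rfl

@[simp] lemma dec_cons_inl (x : NT N T Γ × List (Option Γ))
    (l : SForm (NT N T Γ) T (Option Γ)) :
    dec (Sum.inl x :: l) = Sum.inl (dNT x) :: dec l := rfl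

@[simp] lemma dec_cons_inr (t : T) (l : SForm (NT N T Γ) T (Option Γ)) :
    dec (Sum.inr t :: l) = Sum.inr t :: dec l := rfl

-- ------------- soundness -------------

lemma dec_step {G : WLIG N T Γ A} {w0 : A} {ξ ξ' : SForm (NT N T Γ) T (Option Γ)}
    (h : (construct G w0).Step ξ ξ') : G.Derives (dec ξ) (dec ξ') := by
  cases h with
  | rw pre post σ hp =>
    rcases mem_prods_cases hp with ⟨p, hpG, hc⟩ | ⟨yγ, hq⟩
    · rcases p with ⟨X, β, Ψ, X', β', Ψ'⟩ | ⟨X, β, a⟩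
      · cases β with
        | nil =>
          simp only [compile, List.mem_singleton] at hc
          injection hc with h1 h2 h3 h4 h5 h6
          subst h1; subst h2; subst h3; subst h4; subst h5; subst h6
          refine Relation.ReflTransGen.single ?_
          refine step_rw_eq (dec pre) (dec post) (unflat σ) hpG ?_ ?_ <;> simp
        | cons B βt =>
          simp only [compile, List.mem_cons, List.mem_append, popSomes, popNones,
            List.mem_filterMap, List.mem_map, List.mem_range, List.mem_singleton,
            entryP, Option.map_eq_some_iff] at hc
          rcases hc with hc | (⟨j, hj, B', hB', hc⟩ | ⟨j, hj, hc⟩) | hc | hnil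
          · -- entry: zero steps
            injection hc with h1 h2 h3 h4 h5 h6
            subst h1; subst h2; subst h3; subst h4; subst h5; subst h6
            simp [hd]
            exact Relation.ReflTransGen.refl
          · -- popSome: zero steps
            injection hc with h1 h2 h3 h4 h5 h6
            subst h1; subst h2; subst h3; subst h4; subst h5; subst h6
            rcases List.getElem?_eq_some_iff.mp hB' with ⟨hlt, hBe⟩
            have hdrop : (B :: βt).drop j = B' :: (B :: βt).drop (j+1) := by
              rw [List.drop_eq_getElem_cons hlt, hBe]
            simp [hd, hdrop]
            exact Relation.ReflTransGen.refl
          · -- popNone: zero steps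
            injection hc with h1 h2 h3 h4 h5 h6
            subst h1; subst h2; subst h3; subst h4; subst h5; subst h6
            simp [hd]
            exact Relation.ReflTransGen.refl
          · -- final: one step
            injection hc with h1 h2 h3 h4 h5 h6
            subst h1; subst h2; subst h3; subst h4; subst h5; subst h6
            refine Relation.ReflTransGen.single ?_
            refine step_rw_eq (dec pre) (dec post) (unflat σ) hpG ?_ ?_ <;>
              simp [hd]
          · simp at hnil
      · -- term production of G: compile contains only entry/pops (rw forms) or term forms
        cases β with
        | nil => simp [compile] at hc
        | cons B βt =>
          simp only [compile, List.mem_cons, List.mem_append, popSomes, popNones,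
            List.mem_filterMap, List.mem_map, List.mem_range, List.mem_singleton,
            entryP, Option.map_eq_some_iff] at hc
          rcases hc with hc | (⟨j, hj, B', hB', hc⟩ | ⟨j, hj, hc⟩) | hc | hnil
          · injection hc with h1 h2 h3 h4 h5 h6
            subst h1; subst h2; subst h3; subst h4; subst h5; subst h6
            simp [hd]
            exact Relation.ReflTransGen.refl
          · injection hc with h1 h2 h3 h4 h5 h6
            subst h1; subst h2; subst h3; subst h4; subst h5; subst h6
            rcases List.getElem?_eq_some_iff.mp hB' with ⟨hlt, hBe⟩
            have hdrop : (B :: βt).drop j = B' :: (B :: βt).drop (j+1) := by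
              rw [List.drop_eq_getElem_cons hlt, hBe]
            simp [hd, hdrop]
            exact Relation.ReflTransGen.refl
          · injection hc with h1 h2 h3 h4 h5 h6
            subst h1; subst h2; subst h3; subst h4; subst h5; subst h6
            simp [hd]
            exact Relation.ReflTransGen.refl
          · simp at hc
          · simp at hnil
    · -- unfreeze: zero steps
      simp only [ufProd] at hq
      injection hq with h1 h2 h3 h4 h5 h6
      subst h1; subst h2; subst h3; subst h4; subst h5; subst h6
      simp
      exact Relation.ReflTransGen.refl
  | term pre post hp =>
    rcases mem_prods_cases hp with ⟨p, hpG, hc⟩ | ⟨yγ, hq⟩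
    · rcases p with ⟨X, β, Ψ, X', β', Ψ'⟩ | ⟨X, β, a⟩
      · cases β with
        | nil => simp [compile] at hc
        | cons B βt =>
          simp only [compile, List.mem_cons, List.mem_append, popSomes, popNones,
            List.mem_filterMap, List.mem_map, List.mem_range, List.mem_singleton,
            entryP, Option.map_eq_some_iff] at hc
          rcases hc with hc | (⟨j, hj, B', hB', hc⟩ | ⟨j, hj, hc⟩) | hc | hc <;> simp at hc
      · cases β with
        | nil =>
          simp only [compile, List.mem_singleton] at hc
          injection hc with h1 h2 h3
          subst h1; subst h2; subst h3
          refine Relation.ReflTransGen.single ?_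
          refine step_term_eq (dec pre) (dec post) hpG ?_ ?_ <;> simp
        | cons Bb βt =>
          simp only [compile, List.mem_cons, List.mem_append, popSomes, popNones,
            List.mem_filterMap, List.mem_map, List.mem_range, List.mem_singleton,
            entryP, Option.map_eq_some_iff] at hc
          rcases hc with hc | (⟨j, hj, B', hB', hc⟩ | ⟨j, hj, hc⟩) | hc | hnil
          · simp at hc
          · simp at hc
          · simp at hc
          · injection hc with h1 h2 h3
            subst h1; subst h2; subst h3
            refine Relation.ReflTransGen.single ?_
            refine step_term_eq (dec pre) (dec post) hpG ?_ ?_ <;> simp [hd]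
          · simp at hnil
    · simp [ufProd] at hq

lemma dec_derives {G : WLIG N T Γ A} {w0 : A} {ξ ξ' : SForm (NT N T Γ) T (Option Γ)}
    (h : (construct G w0).Derives ξ ξ') : G.Derives (dec ξ) (dec ξ') := by
  induction h with
  | refl => exact Relation.ReflTransGen.refl
  | tail _ hstep ih => exact ih.trans (dec_step hstep)


-- ------------- completeness -------------

lemma derives_unfreeze {G : WLIG N T Γ A} {w0 : A} (Ψ : SForm N T Γ)
    (hm : ∀ yγ : N × List Γ, Sum.inl yγ ∈ Ψ → ufProd yγ ∈ (construct G w0).prods) :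
    ∀ a b, (construct G w0).Derives (a ++ frzE Ψ ++ b) (a ++ livE Ψ ++ b) := by
  induction Ψ with
  | nil => intro a b; exact Relation.ReflTransGen.refl
  | cons x Ψ ih =>
    intro a b
    cases x with
    | inl yγ =>
        have hstep : (construct G w0).Step (a ++ frzE (Sum.inl yγ :: Ψ) ++ b)
            ((a ++ [Sum.inl (liv yγ.1, encS yγ.2)]) ++ frzE Ψ ++ b) := by
          refine step_rw_eq a (frzE Ψ ++ b) []
            (by simpa [ufProd] using hm yγ (by simp)) ?_ ?_ <;>
            simp [frzE, frz, liv]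
        have ht := ih (fun yγ' h => hm yγ' (by simp [h]))
          (a ++ [Sum.inl (liv yγ.1, encS yγ.2)]) b
        refine Relation.ReflTransGen.head hstep ?_
        simpa [livE, liv, List.append_assoc, Derives] using ht
    | inr t =>
        have ht := ih (fun yγ' h => hm yγ' (by simp [h])) (a ++ [Sum.inr t]) b
        simpa [frzE, livE, List.append_assoc] using ht

lemma flatE_take_succ {β : List Γ} {j : ℕ} (hj : j < β.length) :
    flatE (β.take (j+1)) = flatE (β.take j) ++ [some β[j], none] := by
  rw [List.take_succ, List.getElem?_eq_getElem hj]
  simp only [Option.toList_some, flatE_append]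
  rfl

lemma encS_decomp {σ : List Γ} {τ : List (Option Γ)} (hτ : encS σ = τ ++ [none])
    (β' : List Γ) : encS (σ ++ β') = τ ++ encS β' := by
  rw [encS_append, hτ]
  simp [encS]

lemma chainQ {G : WLIG N T Γ A} {w0 : A} (p : LIGProd N T Γ) (β : List Γ)
    (hps : ∀ q ∈ popSomes p β, q ∈ (construct G w0).prods)
    (hpn : ∀ q ∈ popNones p β, q ∈ (construct G w0).prods) :
    ∀ j, ∀ hj : j < β.length, ∀ τ : List (Option Γ),
      (construct G w0).Derives
        [Sum.inl (ch p (β.drop (j+1)) false, τ ++ flatE (β.take j) ++ [some β[j]])]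
        [Sum.inl (ch p β true, τ)] := by
  intro j
  induction j with
  | zero =>
    intro hj τ
    have hmem : (LIGProd.rw (ch p (β.drop 1) false) [some (β[0]'hj)] []
        (ch p (β.drop 0) true) [] [] : LIGProd (NT N T Γ) T (Option Γ)) ∈ popSomes p β := by
      simp only [popSomes, List.mem_filterMap, List.mem_range]
      exact ⟨0, hj, by rw [List.getElem?_eq_getElem hj]; rfl⟩
    refine Relation.ReflTransGen.single ?_
    refine step_rw_eq [] [] τ (hps _ hmem) ?_ ?_ <;> simp
  | succ j ihj =>
    intro hj τ
    have hjlt : j < β.length := Nat.lt_of_succ_lt hj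
    have hmem1 : (LIGProd.rw (ch p (β.drop (j+2)) false) [some (β[j+1]'hj)] []
        (ch p (β.drop (j+1)) true) [] [] : LIGProd (NT N T Γ) T (Option Γ)) ∈ popSomes p β := by
      simp only [popSomes, List.mem_filterMap, List.mem_range]
      exact ⟨j+1, hj, by rw [List.getElem?_eq_getElem hj]; rfl⟩
    have hmem2 : (LIGProd.rw (ch p (β.drop (j+1)) true) [none] []
        (ch p (β.drop (j+1)) false) [] [] : LIGProd (NT N T Γ) T (Option Γ)) ∈ popNones p β := by
      simp only [popNones, List.mem_map, List.mem_range]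
      exact ⟨j+1, hj, rfl⟩
    have hstep1 : (construct G w0).Step
        [Sum.inl (ch p (β.drop (j+1+1)) false, τ ++ flatE (β.take (j+1)) ++ [some (β[j+1]'hj)])]
        [Sum.inl (ch p (β.drop (j+1)) true, (τ ++ flatE (β.take j) ++ [some (β[j]'hjlt)]) ++ [none])] := by
      refine step_rw_eq [] [] (τ ++ flatE (β.take (j+1))) (hps _ hmem1) ?_ ?_
      · simp
      · simp [flatE_take_succ hjlt]
    have hstep2 : (construct G w0).Step
        [Sum.inl (ch p (β.drop (j+1)) true, (τ ++ flatE (β.take j) ++ [some (β[j]'hjlt)]) ++ [none])]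
        [Sum.inl (ch p (β.drop (j+1)) false, τ ++ flatE (β.take j) ++ [some (β[j]'hjlt)])] := by
      refine step_rw_eq [] [] (τ ++ flatE (β.take j) ++ [some (β[j]'hjlt)])
        (hpn _ hmem2) ?_ ?_ <;> simp
    exact Relation.ReflTransGen.head hstep1
      (Relation.ReflTransGen.head hstep2 (ihj hjlt τ))

lemma main_chain_rw {G : WLIG N T Γ A} {w0 : A} {X : N} {β : List Γ} {Ψ : SForm N T Γ}
    {X' : N} {β' : List Γ} {Ψ' : SForm N T Γ}
    (hp : LIGProd.rw X β Ψ X' β' Ψ' ∈ G.prods) (σ : List Γ) :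
    (construct G w0).Derives [Sum.inl (liv X, encS (σ ++ β))]
      (frzE Ψ ++ [Sum.inl (liv X', encS (σ ++ β'))] ++ frzE Ψ') := by
  obtain ⟨τ, hτ⟩ := encS_concat (Γ := Γ) σ
  cases β with
  | nil =>
    refine Relation.ReflTransGen.single ?_
    refine step_rw_eq [] [] τ
      (mem_compile_sub hp (q := LIGProd.rw (liv X) [none] (frzE Ψ) (liv X') (encS β') (frzE Ψ'))
        (by simp [compile])) ?_ ?_
    · simp [hτ]
    · simp [encS_decomp hτ β']
  | cons B βt =>
    have hj : βt.length < (B :: βt).length := by simp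
    have hps : ∀ q ∈ popSomes (LIGProd.rw X (B :: βt) Ψ X' β' Ψ') (B :: βt),
        q ∈ (construct G w0).prods := by
      intro q hq
      refine mem_compile_sub hp ?_
      simp only [compile, List.mem_cons, List.mem_append]
      tauto
    have hpn : ∀ q ∈ popNones (LIGProd.rw X (B :: βt) Ψ X' β' Ψ') (B :: βt),
        q ∈ (construct G w0).prods := by
      intro q hq
      refine mem_compile_sub hp ?_
      simp only [compile, List.mem_cons, List.mem_append]
      tauto
    have hflat : flatE (B :: βt)
        = flatE ((B :: βt).take βt.length) ++ [some ((B :: βt)[βt.length]'hj), none] := by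
      conv_lhs => rw [show (B :: βt) = (B :: βt).take (βt.length + 1) by simp]
      exact flatE_take_succ hj
    have hdrop : (B :: βt).drop (βt.length + 1) = [] := by simp
    have hentry : (construct G w0).Step [Sum.inl (liv X, encS (σ ++ (B :: βt)))]
        [Sum.inl (ch (LIGProd.rw X (B :: βt) Ψ X' β' Ψ') ((B :: βt).drop (βt.length + 1)) false,
          (τ ++ [none]) ++ flatE ((B :: βt).take βt.length) ++ [some ((B :: βt)[βt.length]'hj)])] := by
      refine step_rw_eq [] []
        ((τ ++ [none]) ++ flatE ((B :: βt).take βt.length) ++ [some ((B :: βt)[βt.length]'hj)])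
        (mem_compile_sub hp (q := entryP (LIGProd.rw X (B :: βt) Ψ X' β' Ψ') X)
          (by simp [compile])) ?_ ?_
      · simp [entryP, encS_append, hτ, hflat]
      · simp [entryP, hdrop]
    have hchain := chainQ (w0 := w0) (LIGProd.rw X (B :: βt) Ψ X' β' Ψ') (B :: βt)
      hps hpn βt.length hj (τ ++ [none])
    have hfinal : (construct G w0).Step
        [Sum.inl (ch (LIGProd.rw X (B :: βt) Ψ X' β' Ψ') (B :: βt) true, τ ++ [none])]
        (frzE Ψ ++ [Sum.inl (liv X', encS (σ ++ β'))] ++ frzE Ψ') := by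
      refine step_rw_eq [] [] τ
        (mem_compile_sub hp (q := LIGProd.rw (ch (LIGProd.rw X (B :: βt) Ψ X' β' Ψ')
            (B :: βt) true) [none] (frzE Ψ) (liv X') (encS β') (frzE Ψ'))
          (by simp [compile])) ?_ ?_
      · simp
      · simp [encS_decomp hτ β']
    exact Relation.ReflTransGen.head hentry
      (hchain.trans (Relation.ReflTransGen.single hfinal))

lemma main_chain_term {G : WLIG N T Γ A} {w0 : A} {X : N} {β : List Γ} {a : Option T}
    (hp : LIGProd.term X β a ∈ G.prods) :
    (construct G w0).Derives [Sum.inl (liv X, encS β)]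
      ((a.toList.map Sum.inr : SForm (NT N T Γ) T (Option Γ))) := by
  cases β with
  | nil =>
    refine Relation.ReflTransGen.single ?_
    refine step_term_eq [] []
      (mem_compile_sub hp (q := LIGProd.term (liv X) [none] a) (by simp [compile])) ?_ ?_
    · simp [encS, flatE]
    · simp
  | cons B βt =>
    have hj : βt.length < (B :: βt).length := by simp
    have hps : ∀ q ∈ popSomes (LIGProd.term X (B :: βt) a) (B :: βt),
        q ∈ (construct G w0).prods := by
      intro q hq
      refine mem_compile_sub hp ?_
      simp only [compile, List.mem_cons, List.mem_append]
      tauto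
    have hpn : ∀ q ∈ popNones (LIGProd.term X (B :: βt) a) (B :: βt),
        q ∈ (construct G w0).prods := by
      intro q hq
      refine mem_compile_sub hp ?_
      simp only [compile, List.mem_cons, List.mem_append]
      tauto
    have hflat : flatE (B :: βt)
        = flatE ((B :: βt).take βt.length) ++ [some ((B :: βt)[βt.length]'hj), none] := by
      conv_lhs => rw [show (B :: βt) = (B :: βt).take (βt.length + 1) by simp]
      exact flatE_take_succ hj
    have hdrop : (B :: βt).drop (βt.length + 1) = [] := by simp
    have hentry : (construct G w0).Step [Sum.inl (liv X, encS (B :: βt))]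
        [Sum.inl (ch (LIGProd.term X (B :: βt) a) ((B :: βt).drop (βt.length + 1)) false,
          ([none] : List (Option Γ)) ++ flatE ((B :: βt).take βt.length)
            ++ [some ((B :: βt)[βt.length]'hj)])] := by
      refine step_rw_eq [] []
        (([none] : List (Option Γ)) ++ flatE ((B :: βt).take βt.length)
          ++ [some ((B :: βt)[βt.length]'hj)])
        (mem_compile_sub hp (q := entryP (LIGProd.term X (B :: βt) a) X)
          (by simp [compile])) ?_ ?_
      · simp [entryP, encS, hflat]
      · simp [entryP, hdrop]
    have hchain := chainQ (w0 := w0) (LIGProd.term X (B :: βt) a) (B :: βt)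
      hps hpn βt.length hj ([none] : List (Option Γ))
    have hfinal : (construct G w0).Step
        [Sum.inl (ch (LIGProd.term X (B :: βt) a) (B :: βt) true, ([none] : List (Option Γ)))]
        ((a.toList.map Sum.inr : SForm (NT N T Γ) T (Option Γ))) := by
      refine step_term_eq [] []
        (mem_compile_sub hp (q := LIGProd.term (ch (LIGProd.term X (B :: βt) a)
            (B :: βt) true) [none] a) (by simp [compile])) ?_ ?_
      · simp
      · simp
    exact Relation.ReflTransGen.head hentry
      (hchain.trans (Relation.ReflTransGen.single hfinal))

lemma derives_congr {G : WLIG N T Γ A} {u v u' v' : SForm N T Γ}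
    (h : G.Derives u v) (hu : u = u') (hv : v = v') : G.Derives u' v' := hu ▸ hv ▸ h

lemma complete_step {G : WLIG N T Γ A} {w0 : A} {ξ ξ' : SForm N T Γ}
    (h : G.Step ξ ξ') : (construct G w0).Derives (livE ξ) (livE ξ') := by
  cases h with
  | rw pre post σ hp =>
    rename_i X β Ψ X' β' Ψ'
    have hufΨ : ∀ yγ : N × List Γ, Sum.inl yγ ∈ Ψ → ufProd yγ ∈ (construct G w0).prods := by
      intro yγ hy
      refine uf_mem hp ?_
      simp only [frozPairs, List.mem_filterMap, List.mem_append]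
      exact ⟨Sum.inl yγ, Or.inl hy, rfl⟩
    have hufΨ' : ∀ yγ : N × List Γ, Sum.inl yγ ∈ Ψ' → ufProd yγ ∈ (construct G w0).prods := by
      intro yγ hy
      refine uf_mem hp ?_
      simp only [frozPairs, List.mem_filterMap, List.mem_append]
      exact ⟨Sum.inl yγ, Or.inr hy, rfl⟩
    have hctx := derives_context (livE pre) (livE post) (main_chain_rw (w0 := w0) hp σ)
    have h1 := derives_unfreeze Ψ hufΨ (livE pre)
      ([Sum.inl (liv X', encS (σ ++ β'))] ++ frzE Ψ' ++ livE post)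
    have h2 := derives_unfreeze Ψ' hufΨ'
      (livE pre ++ livE Ψ ++ [Sum.inl (liv X', encS (σ ++ β'))]) (livE post)
    refine derives_congr
      (((derives_congr hctx rfl ?_).trans h1).trans (derives_congr h2 ?_ rfl)) ?_ ?_ <;>
      simp [livE, liv]
  | term pre post hp =>
    have hctx := derives_context (livE pre) (livE post) (main_chain_term (w0 := w0) hp)
    refine derives_congr hctx ?_ ?_
    · simp [livE, liv]
    · simp [livE, liv]

lemma complete_derives {G : WLIG N T Γ A} {w0 : A} {ξ ξ' : SForm N T Γ}
    (h : G.Derives ξ ξ') : (construct G w0).Derives (livE ξ) (livE ξ') := by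
  induction h with
  | refl => exact Relation.ReflTransGen.refl
  | tail _ hstep ih => exact ih.trans (complete_step hstep)


-- ------------- top-down property and language equality -------------

lemma auxTD_nil : AuxTD (none : Option Γ) ([] : SForm (NT N T Γ) T (Option Γ)) := by
  intro x hx; simp at hx

lemma auxTD_frzE (Ψ : SForm N T Γ) :
    AuxTD (none : Option Γ) (frzE Ψ) := by
  intro x hx Y σ hxe
  simp only [frzE, List.mem_map] at hx
  obtain ⟨y, _, rfl⟩ := hx
  cases y with
  | inl yγ =>
      simp only [Sum.map_inl] at hxe
      injection hxe with h
      exact (congrArg Prod.snd h).symm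
  | inr t => simp at hxe

lemma construct_topDown (G : WLIG N T Γ A) (w0 : A) :
    (construct G w0).IsTopDown := by
  refine ⟨none, rfl, ?_⟩
  intro q hq
  rcases mem_prods_cases hq with ⟨p, hpG, hc⟩ | ⟨yγ, rfl⟩
  · rcases p with ⟨X, β, Ψ, X', β', Ψ'⟩ | ⟨X, β, a⟩
    · cases β with
      | nil =>
        simp only [compile, List.mem_singleton] at hc
        exact Or.inl ⟨_, _, _, _, _, _, hc, auxTD_frzE Ψ, auxTD_frzE Ψ'⟩
      | cons B βt =>
        simp only [compile, List.mem_cons, List.mem_append, popSomes, popNones,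
          List.mem_filterMap, List.mem_map, List.mem_range, List.mem_singleton,
          entryP, Option.map_eq_some_iff] at hc
        rcases hc with hc | (⟨j, hj, B', hB', hc⟩ | ⟨j, hj, hc⟩) | hc | hnil
        · exact Or.inl ⟨_, _, _, _, _, _, hc, auxTD_nil, auxTD_nil⟩
        · exact Or.inl ⟨_, _, _, _, _, _, hc.symm, auxTD_nil, auxTD_nil⟩
        · exact Or.inl ⟨_, _, _, _, _, _, hc.symm, auxTD_nil, auxTD_nil⟩
        · exact Or.inl ⟨_, _, _, _, _, _, hc, auxTD_frzE Ψ, auxTD_frzE Ψ'⟩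
        · simp at hnil
    · cases β with
      | nil =>
        simp only [compile, List.mem_singleton] at hc
        exact Or.inr ⟨_, _, _, hc⟩
      | cons B βt =>
        simp only [compile, List.mem_cons, List.mem_append, popSomes, popNones,
          List.mem_filterMap, List.mem_map, List.mem_range, List.mem_singleton,
          entryP, Option.map_eq_some_iff] at hc
        rcases hc with hc | (⟨j, hj, B', hB', hc⟩ | ⟨j, hj, hc⟩) | hc | hnil
        · exact Or.inl ⟨_, _, _, _, _, _, hc, auxTD_nil, auxTD_nil⟩
        · exact Or.inl ⟨_, _, _, _, _, _, hc.symm, auxTD_nil, auxTD_nil⟩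
        · exact Or.inl ⟨_, _, _, _, _, _, hc.symm, auxTD_nil, auxTD_nil⟩
        · exact Or.inr ⟨_, _, _, hc⟩
        · simp at hnil
  · exact Or.inl ⟨_, _, _, _, _, _, rfl, auxTD_nil, auxTD_nil⟩

lemma construct_language (G : WLIG N T Γ A) (w0 : A) :
    (construct G w0).language = G.language := by
  ext w
  constructor
  · intro hw
    have h := dec_derives (G := G) (w0 := w0) hw
    simpa [language, construct, frz, dNT] using h
  · intro hw
    have h0 : (construct G w0).Step
        [Sum.inl ((construct G w0).start, (construct G w0).initStack)]
        (livE [Sum.inl (G.start, G.initStack)]) := by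
      refine step_rw_eq [] [] []
        (by simpa [ufProd] using uf_start_mem (G := G) (w0 := w0)) ?_ ?_
      · simp [construct, frz]
      · simp [livE, liv]
    have h1 := complete_derives (w0 := w0) hw
    refine Relation.ReflTransGen.head h0 ?_
    simpa [Derives] using h1

end TD

/-- Every weighted linear indexed grammar is weakly equivalent to a
top-down weighted linear indexed grammar. -/
theorem every_wlig_weakly_equivalent_to_topDown
    {N T Γ A : Type} [Semiring A] (G : WLIG N T Γ A) :
    ∃ (N' Γ' : Type) (G' : WLIG N' T Γ' A), G'.IsTopDown ∧ G'.language = G.language :=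
  ⟨TD.NT N T Γ, Option Γ, TD.construct G 1,
    TD.construct_topDown G 1, TD.construct_language G 1⟩

end CtrlForm
end

section
/- Every weighted linear indexed grammar is weakly equivalent to a bottom-up weighted linear indexed grammar, i.e., one in which every production either pushes exactly one stack symbol onto the distinguished child's stack (X[∘β] → Ψ X'[∘A] Ψ') or is terminal (X[β] → a), and all other nonterminals on right-hand sides carry the empty stack [ ]. -/
open scoped BigOperators

namespace CtrlForm

namespace WLIG

/-- Every nonterminal occurring in `Ψ` carries the empty stack. -/
def AuxBU {N T Γ : Type} (Ψ : SForm N T Γ) : Prop :=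
  ∀ x ∈ Ψ, ∀ Y : N, ∀ σ : List Γ, x = Sum.inl (Y, σ) → σ = []

/-- A WLIG is bottom-up if every production either pushes exactly one stack
symbol onto the distinguished child's stack (`X[∘β] → Ψ X'[∘A] Ψ'`) or is
terminal (`X[β] → a`), all auxiliary nonterminals carry the empty stack,
and the initial stack is empty. -/
def IsBottomUp {N T Γ A : Type} (G : WLIG N T Γ A) : Prop :=
  G.initStack = [] ∧
    ∀ p ∈ G.prods,
      (∃ X β Ψ X' A' Ψ', p = LIGProd.rw X β Ψ X' [A'] Ψ' ∧ AuxBU Ψ ∧ AuxBU Ψ') ∨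
      (∃ X β a, p = LIGProd.term X β a)

end WLIG


namespace BUConstr

open WLIG

variable {N T Γ A : Type}

/-- Encode a stack over `Γ` as a stack over `Option Γ` with a bottom marker
`none` on top... actually `none` is pushed last, sitting at the top (right). -/
def enc (σ : List Γ) : List (Option Γ) := σ.map some ++ [none]

def encTl : List Γ → List (Option Γ)
  | [] => []
  | _ :: t => enc t

theorem enc_eq_cons (β : List Γ) : enc β = β.head? :: encTl β := by
  cases β <;> simp [enc, encTl]

theorem enc_ne_nil (σ : List Γ) : enc σ ≠ [] := by simp [enc]

theorem enc_append (σ β : List Γ) : enc (σ ++ β) = σ.map some ++ enc β := by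
  simp [enc]

theorem enc_inj {σ σ' : List Γ} (h : enc σ = enc σ') : σ = σ' := by
  unfold enc at h
  have h2 : σ.map some = σ'.map some := List.append_cancel_right h
  exact List.map_injective_iff.mpr (fun a b => Option.some.inj) h2

theorem enc_decomp {σ₀ : List (Option Γ)} {β σf : List Γ} (h : σ₀ ++ enc β = enc σf) :
    ∃ σ₁, σ₀ = σ₁.map some ∧ σf = σ₁ ++ β := by
  unfold enc at h
  rw [← List.append_assoc] at h
  have h2 : σf.map some = σ₀ ++ β.map some := (List.append_cancel_right h).symm
  rw [List.map_eq_append_iff] at h2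
  obtain ⟨σ₁, σ₂, rfl, h3, h4⟩ := h2
  have : σ₂ = β := List.map_injective_iff.mpr (fun a b => Option.some.inj) h4
  exact ⟨σ₁, h3.symm, by rw [this]⟩

/-- The new nonterminal type. -/
abbrev N2 (N Γ : Type) := N ⊕ (N × List (Option Γ))

def chainState (X : N) : List (Option Γ) → N2 N Γ
  | [] => Sum.inl X
  | c :: L => Sum.inr (X, c :: L)

theorem chainState_ne_nil (X : N) {L : List (Option Γ)} (h : L ≠ []) :
    chainState X L = Sum.inr (X, L) := by
  cases L with
  | nil => exact absurd rfl h
  | cons c L => rfl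

def chainProds (T : Type) (Y : N) : List (Option Γ) → List (LIGProd (N2 N Γ) T (Option Γ))
  | [] => []
  | c :: L => LIGProd.rw (Sum.inr (Y, c :: L)) [] [] (chainState Y L) [c] [] :: chainProds T Y L

def fItem : ((N × List Γ) ⊕ T) → ((N2 N Γ × List (Option Γ)) ⊕ T)
  | Sum.inl (Y, σ) => Sum.inl (Sum.inr (Y, enc σ), [])
  | Sum.inr a => Sum.inr a

def fForm (Ψ : SForm N T Γ) : SForm (N2 N Γ) T (Option Γ) := Ψ.map fItem

def phiItem : ((N × List Γ) ⊕ T) → ((N2 N Γ × List (Option Γ)) ⊕ T)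
  | Sum.inl (Y, σ) => Sum.inl (Sum.inl Y, enc σ)
  | Sum.inr a => Sum.inr a

def phiForm (Ψ : SForm N T Γ) : SForm (N2 N Γ) T (Option Γ) := Ψ.map phiItem

theorem phiForm_append (Ψ Ψ' : SForm N T Γ) :
    phiForm (Ψ ++ Ψ') = phiForm Ψ ++ phiForm Ψ' := List.map_append

theorem phiForm_map_inr (w : List T) :
    phiForm (N := N) (Γ := Γ) (w.map Sum.inr) = w.map Sum.inr := by
  simp only [phiForm, List.map_map]
  rfl

def auxProds : SForm N T Γ → List (LIGProd (N2 N Γ) T (Option Γ))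
  | [] => []
  | Sum.inl (Y, σ) :: Ψ => chainProds T Y (enc σ) ++ auxProds Ψ
  | Sum.inr _ :: Ψ => auxProds Ψ

def mainRule (X : N) (β : List Γ) (Ψ : SForm N T Γ) (X' : N) (β' : List Γ)
    (Ψ' : SForm N T Γ) : LIGProd (N2 N Γ) T (Option Γ) :=
  LIGProd.rw (Sum.inl X) (enc β) (fForm Ψ) (chainState X' (encTl β')) [β'.head?] (fForm Ψ')

def translate : LIGProd N T Γ → List (LIGProd (N2 N Γ) T (Option Γ))
  | LIGProd.rw X β Ψ X' β' Ψ' =>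
      mainRule X β Ψ X' β' Ψ' :: (chainProds T X' (encTl β') ++ auxProds Ψ ++ auxProds Ψ')
  | LIGProd.term X β a => [LIGProd.term (Sum.inl X) (enc β) a]

def buG (G : WLIG N T Γ A) : WLIG (N2 N Γ) T (Option Γ) A where
  prods := G.prods.flatMap translate ++ chainProds T G.start (enc G.initStack)
  start := Sum.inr (G.start, enc G.initStack)
  initStack := []
  wt := fun _ => G.wt (LIGProd.term G.start [] none)

/-! ### Membership lemmas -/

theorem mem_buG_of_translate {G : WLIG N T Γ A} {r : LIGProd N T Γ}
    {p : LIGProd (N2 N Γ) T (Option Γ)} (hr : r ∈ G.prods) (hp : p ∈ translate r) :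
    p ∈ (buG G).prods := by
  simp only [buG, List.mem_append, List.mem_flatMap]
  exact Or.inl ⟨r, hr, hp⟩

theorem chainProds_shape {Y : N} {L0 : List (Option Γ)} {p : LIGProd (N2 N Γ) T (Option Γ)}
    (h : p ∈ chainProds T Y L0) :
    ∃ c L, p = LIGProd.rw (Sum.inr (Y, c :: L)) [] [] (chainState Y L) [c] [] := by
  induction L0 with
  | nil => simp [chainProds] at h
  | cons c L ih =>
    rcases List.mem_cons.mp h with h | h
    · exact ⟨c, L, h⟩
    · exact ih h

theorem auxProds_shape {Ψ : SForm N T Γ} {p : LIGProd (N2 N Γ) T (Option Γ)}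
    (h : p ∈ auxProds Ψ) :
    ∃ Y c L, p = LIGProd.rw (Sum.inr (Y, c :: L)) [] [] (chainState Y L) [c] [] := by
  induction Ψ with
  | nil => simp [auxProds] at h
  | cons x Ψ ih =>
    cases x with
    | inl q =>
      obtain ⟨Y, σ⟩ := q
      rcases List.mem_append.mp h with h | h
      · obtain ⟨c, L, hp⟩ := chainProds_shape h
        exact ⟨Y, c, L, hp⟩
      · exact ih h
    | inr a => exact ih h

theorem buG_prods_shape {G : WLIG N T Γ A} {p : LIGProd (N2 N Γ) T (Option Γ)}
    (h : p ∈ (buG G).prods) :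
    (∃ X β Ψ X' β' Ψ', LIGProd.rw X β Ψ X' β' Ψ' ∈ G.prods ∧ p = mainRule X β Ψ X' β' Ψ') ∨
    (∃ Y c L, p = LIGProd.rw (Sum.inr (Y, c :: L)) [] [] (chainState Y L) [c] []) ∨
    (∃ X β a, LIGProd.term X β a ∈ G.prods ∧ p = LIGProd.term (Sum.inl X) (enc β) a) := by
  simp only [buG, List.mem_append, List.mem_flatMap] at h
  rcases h with ⟨r, hr, hp⟩ | h
  · cases r with
    | rw X β Ψ X' β' Ψ' =>
      rcases List.mem_cons.mp hp with hp | hp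
      · exact Or.inl ⟨X, β, Ψ, X', β', Ψ', hr, hp⟩
      · rcases List.mem_append.mp hp with hp | hp
        · rcases List.mem_append.mp hp with hp | hp
          · obtain ⟨c, L, hpe⟩ := chainProds_shape hp
            exact Or.inr (Or.inl ⟨X', c, L, hpe⟩)
          · exact Or.inr (Or.inl (auxProds_shape hp))
        · exact Or.inr (Or.inl (auxProds_shape hp))
    | term X β a =>
      rcases List.mem_cons.mp hp with hp | hp
      · exact Or.inr (Or.inr ⟨X, β, a, hr, hp⟩)
      · simp at hp
  · obtain ⟨c, L, hpe⟩ := chainProds_shape h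
    exact Or.inr (Or.inl ⟨G.start, c, L, hpe⟩)

/-! ### Context lemmas -/

theorem step_context {G : WLIG N T Γ A} {x y : SForm N T Γ} (h : G.Step x y)
    (pre post : SForm N T Γ) : G.Step (pre ++ x ++ post) (pre ++ y ++ post) := by
  cases h with
  | rw p q σ hp =>
    have := WLIG.Step.rw (G := G) (pre ++ p) (q ++ post) σ hp
    simpa [List.append_assoc] using this
  | term p q hp =>
    have := WLIG.Step.term (G := G) (pre ++ p) (q ++ post) hp
    simpa [List.append_assoc] using this

theorem derives_context {G : WLIG N T Γ A} {x y : SForm N T Γ} (h : G.Derives x y)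
    (pre post : SForm N T Γ) : G.Derives (pre ++ x ++ post) (pre ++ y ++ post) := by
  induction h with
  | refl => exact Relation.ReflTransGen.refl
  | tail _ h2 ih => exact ih.tail (step_context h2 pre post)

theorem derives_append {G : WLIG N T Γ A} {a b c d : SForm N T Γ}
    (h1 : G.Derives a b) (h2 : G.Derives c d) : G.Derives (a ++ c) (b ++ d) := by
  have s1 := derives_context h1 [] c
  have s2 := derives_context h2 b []
  simp only [List.nil_append, List.append_nil] at s1 s2
  exact s1.trans s2

/-! ### Chain derivations -/

theorem chain_derives {G' : WLIG (N2 N Γ) T (Option Γ) A} {Y : N} {L : List (Option Γ)}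
    (h : ∀ p ∈ chainProds T Y L, p ∈ G'.prods) (τ : List (Option Γ)) :
    G'.Derives [Sum.inl (chainState Y L, τ)] [Sum.inl (Sum.inl Y, τ ++ L)] := by
  induction L generalizing τ with
  | nil => simpa [chainState, WLIG.Derives] using Relation.ReflTransGen.refl
  | cons c L ih =>
    have hmem : LIGProd.rw (Sum.inr (Y, c :: L)) [] [] (chainState Y L) [c]
        ([] : SForm (N2 N Γ) T (Option Γ)) ∈ G'.prods :=
      h _ List.mem_cons_self
    have hstep : G'.Step [Sum.inl (Sum.inr (Y, c :: L), τ)]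
        [Sum.inl (chainState Y L, τ ++ [c])] := by
      have := WLIG.Step.rw (G := G') [] [] τ hmem
      simpa using this
    have hrest := ih (fun p hp => h p (List.mem_cons_of_mem _ hp)) (τ ++ [c])
    have heq : (τ ++ [c]) ++ L = τ ++ c :: L := by simp
    rw [heq] at hrest
    exact Relation.ReflTransGen.head hstep hrest

theorem f_derives_phi {G' : WLIG (N2 N Γ) T (Option Γ) A} (Ψ : SForm N T Γ)
    (h : ∀ p ∈ auxProds Ψ, p ∈ G'.prods) :
    G'.Derives (fForm Ψ) (phiForm Ψ) := by
  induction Ψ with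
  | nil => exact Relation.ReflTransGen.refl
  | cons x Ψ ih =>
    cases x with
    | inl q =>
      obtain ⟨Y, σ⟩ := q
      have h1 : ∀ p ∈ chainProds T Y (enc σ), p ∈ G'.prods := by
        intro p hp
        exact h p (by simp only [auxProds, List.mem_append]; exact Or.inl hp)
      have h2 : ∀ p ∈ auxProds Ψ, p ∈ G'.prods := by
        intro p hp
        exact h p (by simp only [auxProds, List.mem_append]; exact Or.inr hp)
      have hchain := chain_derives (A := A) h1 []
      rw [chainState_ne_nil Y (enc_ne_nil σ)] at hchain
      have : G'.Derives ([Sum.inl (Sum.inr (Y, enc σ), [])] ++ fForm Ψ)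
          ([Sum.inl (Sum.inl Y, [] ++ enc σ)] ++ phiForm Ψ) :=
        derives_append hchain (ih h2)
      simpa [fForm, phiForm, fItem, phiItem] using this
    | inr a =>
      have h2 : ∀ p ∈ auxProds Ψ, p ∈ G'.prods := fun p hp => h p hp
      have : G'.Derives ([Sum.inr a] ++ fForm Ψ) ([Sum.inr a] ++ phiForm Ψ) :=
        derives_append Relation.ReflTransGen.refl (ih h2)
      simpa [fForm, phiForm, fItem, phiItem] using this

/-! ### Completeness: simulation of old steps -/

theorem step_sim {G : WLIG N T Γ A} {D D' : SForm N T Γ} (h : G.Step D D') :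
    (buG G).Derives (phiForm D) (phiForm D') := by
  cases h with
  | @rw pre post σ X β Ψ X' β' Ψ' hp =>
    have hmain : mainRule (T := T) X β Ψ X' β' Ψ' ∈ (buG G).prods :=
      mem_buG_of_translate hp (by simp [translate])
    have hchainmem : ∀ p ∈ chainProds T X' (encTl β'), p ∈ (buG G).prods := by
      intro p hq
      exact mem_buG_of_translate hp (by
        simp only [translate, List.mem_cons, List.mem_append]
        exact Or.inr (Or.inl (Or.inl hq)))
    have hauxΨ : ∀ p ∈ auxProds Ψ, p ∈ (buG G).prods := by
      intro p hq
      exact mem_buG_of_translate hp (by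
        simp only [translate, List.mem_cons, List.mem_append]
        exact Or.inr (Or.inl (Or.inr hq)))
    have hauxΨ' : ∀ p ∈ auxProds Ψ', p ∈ (buG G).prods := by
      intro p hq
      exact mem_buG_of_translate hp (by
        simp only [translate, List.mem_cons, List.mem_append]
        exact Or.inr (Or.inr hq))
    -- step 1 : apply the main rule
    have hstep : (buG G).Step
        (phiForm pre ++ [Sum.inl (Sum.inl X, σ.map some ++ enc β)] ++ phiForm post)
        (phiForm pre ++ fForm Ψ ++
          [Sum.inl (chainState X' (encTl β'), σ.map some ++ [β'.head?])] ++
          fForm Ψ' ++ phiForm post) :=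
      WLIG.Step.rw (phiForm pre) (phiForm post) (σ.map some) hmain
    -- step 2 : run the chain
    have hchain := chain_derives (A := A) (G' := buG G) hchainmem (σ.map some ++ [β'.head?])
    have henc : (σ.map some ++ [β'.head?]) ++ encTl β' = enc (σ ++ β') := by
      rw [enc_append, List.append_assoc, enc_eq_cons β']
      rfl
    rw [henc] at hchain
    have hchainctx := derives_context hchain (phiForm pre ++ fForm Ψ)
      (fForm Ψ' ++ phiForm post)
    -- step 3 : expand the auxiliary spawns
    have hΨ := f_derives_phi (A := A) (G' := buG G) Ψ hauxΨ
    have hΨ' := f_derives_phi (A := A) (G' := buG G) Ψ' hauxΨ'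
    have haux : (buG G).Derives
        (phiForm pre ++ fForm Ψ ++ [Sum.inl (Sum.inl X', enc (σ ++ β'))] ++ fForm Ψ'
          ++ phiForm post)
        (phiForm pre ++ phiForm Ψ ++ [Sum.inl (Sum.inl X', enc (σ ++ β'))] ++ phiForm Ψ'
          ++ phiForm post) := by
      have := derives_append (derives_append (derives_append (derives_append
        (Relation.ReflTransGen.refl (a := phiForm pre)) hΨ)
        (Relation.ReflTransGen.refl (a := [Sum.inl (Sum.inl X', enc (σ ++ β'))]))) hΨ')
        (Relation.ReflTransGen.refl (a := phiForm post))
      exact this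
    have e1 : phiForm (pre ++ [Sum.inl (X, σ ++ β)] ++ post) =
        phiForm pre ++ [Sum.inl (Sum.inl X, σ.map some ++ enc β)] ++ phiForm post := by
      simp [phiForm, phiItem, enc_append]
    have e2 : phiForm (pre ++ Ψ ++ [Sum.inl (X', σ ++ β')] ++ Ψ' ++ post) =
        phiForm pre ++ phiForm Ψ ++ [Sum.inl (Sum.inl X', enc (σ ++ β'))] ++ phiForm Ψ'
          ++ phiForm post := by
      simp [phiForm, phiItem]
    rw [e1, e2]
    have hstep' : (buG G).Derives _ _ := Relation.ReflTransGen.single hstep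
    simp only [List.append_assoc] at hstep' hchainctx haux ⊢
    exact (hstep'.trans hchainctx).trans haux
  | @term pre post X β a hp =>
    have hmem : LIGProd.term (Sum.inl X : N2 N Γ) (enc β) a ∈ (buG G).prods :=
      mem_buG_of_translate hp (by simp [translate])
    have hstep := WLIG.Step.term (G := buG G) (phiForm pre) (phiForm post) hmem
    have e1 : phiForm (pre ++ [Sum.inl (X, β)] ++ post) =
        phiForm pre ++ [Sum.inl (Sum.inl X, enc β)] ++ phiForm post := by
      simp [phiForm, phiItem]
    have e2 : phiForm (pre ++ a.toList.map Sum.inr ++ post) =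
        phiForm pre ++ a.toList.map Sum.inr ++ phiForm post := by
      cases a <;> simp [phiForm, phiItem]
    rw [e1, e2]
    exact Relation.ReflTransGen.single hstep

theorem derives_sim {G : WLIG N T Γ A} {D D' : SForm N T Γ} (h : G.Derives D D') :
    (buG G).Derives (phiForm D) (phiForm D') := by
  induction h with
  | refl => exact Relation.ReflTransGen.refl
  | tail _ h2 ih => exact ih.trans (step_sim h2)

/-! ### Soundness: decoding -/

inductive DecItem : ((N2 N Γ × List (Option Γ)) ⊕ T) → ((N × List Γ) ⊕ T) → Prop
  | term (a : T) : DecItem (Sum.inr a) (Sum.inr a)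
  | main (Y : N) (σ : List Γ) : DecItem (Sum.inl (Sum.inl Y, enc σ)) (Sum.inl (Y, σ))
  | chain (Y : N) (L L' : List (Option Γ)) (σ : List Γ) (h : L ++ L' = enc σ) :
      DecItem (Sum.inl (Sum.inr (Y, L'), L)) (Sum.inl (Y, σ))

def Dec : SForm (N2 N Γ) T (Option Γ) → SForm N T Γ → Prop := List.Forall₂ DecItem

theorem decItem_inl {s : N2 N Γ} {L : List (Option Γ)} {y : (N × List Γ) ⊕ T}
    (h : DecItem (Sum.inl (s, L)) y) :
    ∃ Y σ, y = Sum.inl (Y, σ) ∧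
      ((s = Sum.inl Y ∧ L = enc σ) ∨ (∃ L', s = Sum.inr (Y, L') ∧ L ++ L' = enc σ)) := by
  cases h with
  | main Y σ => exact ⟨Y, σ, rfl, Or.inl ⟨rfl, rfl⟩⟩
  | chain Y L L' σ hL => exact ⟨Y, σ, rfl, Or.inr ⟨L', rfl, hL⟩⟩

theorem decItem_inr {a : T} {y : (N × List Γ) ⊕ T} (h : DecItem (Sum.inr a) y) :
    y = Sum.inr a := by
  cases h; rfl

theorem dec_fForm (Ψ : SForm N T Γ) : Dec (fForm Ψ) Ψ := by
  induction Ψ with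
  | nil => exact List.Forall₂.nil
  | cons x Ψ ih =>
    cases x with
    | inl q =>
      obtain ⟨Y, σ⟩ := q
      exact List.Forall₂.cons (DecItem.chain Y [] (enc σ) σ rfl) ih
    | inr a => exact List.Forall₂.cons (DecItem.term a) ih

theorem dec_map_inr (w : List T) :
    Dec (N := N) (Γ := Γ) (w.map Sum.inr) (w.map Sum.inr) := by
  induction w with
  | nil => exact List.Forall₂.nil
  | cons a w ih => exact List.Forall₂.cons (DecItem.term a) ih

theorem dec_of_map_inr {w : List T} {D : SForm N T Γ}
    (h : Dec (w.map Sum.inr) D) : D = w.map Sum.inr := by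
  induction w generalizing D with
  | nil => cases h; rfl
  | cons a w ih =>
    cases h with
    | cons h1 h2 => rw [decItem_inr h1, List.map_cons, ih h2]

theorem forall2_decomp {α β : Type*} {R : α → β → Prop} :
    ∀ {pre : List α} {x : α} {post : List α} {D : List β},
      List.Forall₂ R (pre ++ x :: post) D →
      ∃ preD y postD, D = preD ++ y :: postD ∧ List.Forall₂ R pre preD ∧ R x y ∧
        List.Forall₂ R post postD := by
  intro pre
  induction pre with
  | nil =>
    intro x post D h
    cases h with
    | cons hxy htail => exact ⟨[], _, _, rfl, List.Forall₂.nil, hxy, htail⟩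
  | cons p pre ih =>
    intro x post D h
    cases h with
    | cons hpy htail =>
      obtain ⟨preD, y, postD, rfl, h1, h2, h3⟩ := ih htail
      exact ⟨_ :: preD, y, postD, rfl, List.Forall₂.cons hpy h1, h2, h3⟩

theorem forall2_app {α β : Type*} {R : α → β → Prop} {a c : List α} {b d : List β}
    (h1 : List.Forall₂ R a b) (h2 : List.Forall₂ R c d) :
    List.Forall₂ R (a ++ c) (b ++ d) := List.rel_append h1 h2

theorem step_sound {G : WLIG N T Γ A} {Φ Φ' : SForm (N2 N Γ) T (Option Γ)}
    {D : SForm N T Γ} (hd : Dec Φ D) (hs : (buG G).Step Φ Φ') :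
    ∃ D', Dec Φ' D' ∧ G.Derives D D' := by
  cases hs with
  | @rw pre post σ₀ X2 β2 Ψ2 X'2 β'2 Ψ'2 hp =>
    rw [show pre ++ [Sum.inl (X2, σ₀ ++ β2)] ++ post
        = pre ++ Sum.inl (X2, σ₀ ++ β2) :: post by simp] at hd
    obtain ⟨preD, y, postD, rfl, hpre, hitem, hpost⟩ := forall2_decomp hd
    obtain ⟨Y0, σf, rfl, hcase⟩ := decItem_inl hitem
    rcases buG_prods_shape hp with ⟨X, β, Ψ, X', β', Ψ', hr, heq⟩ | ⟨Yc, c, Lc, heq⟩ |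
        ⟨X, β, a, hr, heq⟩
    · -- main rule
      rw [mainRule] at heq
      obtain ⟨hX2, hβ2, hΨ2, hX'2, hβ'2, hΨ'2⟩ :=
        LIGProd.rw.inj heq
      subst hX2 hβ2 hΨ2 hX'2 hβ'2 hΨ'2
      rcases hcase with ⟨hY, hL⟩ | ⟨L', hY, hL⟩
      swap
      · exact absurd hY (by simp)
      simp only [Sum.inl.injEq] at hY
      subst hY
      obtain ⟨σ₁, rfl, rfl⟩ := enc_decomp hL
      refine ⟨preD ++ Ψ ++ [Sum.inl (X', σ₁ ++ β')] ++ Ψ' ++ postD, ?_, ?_⟩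
      · rw [show pre ++ fForm Ψ ++
            [Sum.inl (chainState X' (encTl β'), σ₁.map some ++ [β'.head?])] ++ fForm Ψ' ++ post
            = pre ++ (fForm Ψ ++
              (Sum.inl (chainState X' (encTl β'), σ₁.map some ++ [β'.head?]) ::
                (fForm Ψ' ++ post))) by simp,
           show preD ++ Ψ ++ [Sum.inl (X', σ₁ ++ β')] ++ Ψ' ++ postD
            = preD ++ (Ψ ++ (Sum.inl (X', σ₁ ++ β') :: (Ψ' ++ postD))) by simp]
        refine forall2_app hpre (forall2_app (dec_fForm Ψ)
          (List.Forall₂.cons ?_ (forall2_app (dec_fForm Ψ') hpost)))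
        -- middle item
        cases β' with
        | nil =>
          have heq2 : σ₁.map some ++ [(List.nil : List Γ).head?] = enc (σ₁ ++ []) := by
            simp [enc]
          rw [show chainState X' (encTl ([] : List Γ)) = Sum.inl X' from rfl, heq2]
          exact DecItem.main X' (σ₁ ++ [])
        | cons b t =>
          rw [show encTl (b :: t) = enc t from rfl,
            chainState_ne_nil X' (enc_ne_nil t)]
          refine DecItem.chain X' _ _ (σ₁ ++ b :: t) ?_
          rw [enc_append, enc_eq_cons (b :: t), List.append_assoc]
          rfl
      · refine Relation.ReflTransGen.single ?_
        have := WLIG.Step.rw (G := G) preD postD σ₁ hr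
        simpa using this
    · -- chain rule
      obtain ⟨hX2, hβ2, hΨ2, hX'2, hβ'2, hΨ'2⟩ := LIGProd.rw.inj heq
      subst hX2 hβ2 hΨ2 hX'2 hβ'2 hΨ'2
      rcases hcase with ⟨hY, hL⟩ | ⟨L', hY, hL⟩
      · exact absurd hY (by simp)
      simp only [Sum.inr.injEq, Prod.mk.injEq] at hY
      obtain ⟨rfl, rfl⟩ := hY
      have hL2 : (σ₀ ++ [c]) ++ Lc = enc σf := by
        simpa [List.append_assoc] using hL
      refine ⟨preD ++ Sum.inl (Yc, σf) :: postD, ?_, Relation.ReflTransGen.refl⟩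
      rw [show pre ++ [] ++ [Sum.inl (chainState Yc Lc, σ₀ ++ [c])] ++ [] ++ post
          = pre ++ Sum.inl (chainState Yc Lc, σ₀ ++ [c]) :: post by simp]
      refine forall2_app hpre (List.Forall₂.cons ?_ hpost)
      cases Lc with
      | nil =>
        have heq2 : σ₀ ++ [c] = enc σf := by simpa using hL2
        rw [show chainState Yc ([] : List (Option Γ)) = Sum.inl Yc from rfl, heq2]
        exact DecItem.main Yc σf
      | cons d Ld =>
        exact DecItem.chain Yc (σ₀ ++ [c]) (d :: Ld) σf hL2
    · -- term rule shape contradicts rw step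
      exact absurd heq (by simp)
  | @term pre post X2 β2 a hp =>
    rw [show pre ++ [Sum.inl (X2, β2)] ++ post = pre ++ Sum.inl (X2, β2) :: post by simp] at hd
    obtain ⟨preD, y, postD, rfl, hpre, hitem, hpost⟩ := forall2_decomp hd
    obtain ⟨Y0, σf, rfl, hcase⟩ := decItem_inl hitem
    rcases buG_prods_shape hp with ⟨X, β, Ψ, X', β', Ψ', hr, heq⟩ | ⟨Yc, c, Lc, heq⟩ |
        ⟨X, β, a', hr, heq⟩
    · exact absurd heq (by simp [mainRule])
    · exact absurd heq (by simp)
    · obtain ⟨hX2, hβ2, ha⟩ := LIGProd.term.inj heq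
      subst hX2 hβ2 ha
      rcases hcase with ⟨hY, hL⟩ | ⟨L', hY, hL⟩
      swap
      · exact absurd hY (by simp)
      simp only [Sum.inl.injEq] at hY
      subst hY
      obtain rfl : σf = β := enc_inj hL.symm
      refine ⟨preD ++ a.toList.map Sum.inr ++ postD, ?_, ?_⟩
      · rw [show pre ++ a.toList.map Sum.inr ++ post
            = pre ++ (a.toList.map Sum.inr ++ post) by simp,
          show preD ++ a.toList.map Sum.inr ++ postD
            = preD ++ (a.toList.map Sum.inr ++ postD) by simp]
        exact forall2_app hpre (forall2_app (dec_map_inr _) hpost)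
      · refine Relation.ReflTransGen.single ?_
        have := WLIG.Step.term (G := G) preD postD hr
        simpa using this

theorem derives_sound {G : WLIG N T Γ A} {Φ Φ' : SForm (N2 N Γ) T (Option Γ)}
    {D : SForm N T Γ} (hd : Dec Φ D) (h : (buG G).Derives Φ Φ') :
    ∃ D', Dec Φ' D' ∧ G.Derives D D' := by
  induction h with
  | refl => exact ⟨D, hd, Relation.ReflTransGen.refl⟩
  | tail _ h2 ih =>
    obtain ⟨D1, hdec, hder⟩ := ih
    obtain ⟨D', hdec', hstep⟩ := step_sound hdec h2
    exact ⟨D', hdec', hder.trans hstep⟩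

theorem auxBU_fForm (Ψ : SForm N T Γ) : AuxBU (fForm (T := T) Ψ) := by
  intro x hx Y σ hxe
  rcases List.mem_map.mp hx with ⟨y, -, rfl⟩
  cases y with
  | inl q =>
    obtain ⟨Z, τ⟩ := q
    simp only [fItem, Sum.inl.injEq, Prod.mk.injEq] at hxe
    exact hxe.2.symm
  | inr a => simp [fItem] at hxe

theorem auxBU_nil : AuxBU ([] : SForm (N2 N Γ) T (Option Γ)) := by
  intro x hx
  simp at hx

end BUConstr

/-- Every weighted linear indexed grammar is weakly equivalent to a
bottom-up weighted linear indexed grammar. -/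
theorem every_wlig_weakly_equivalent_to_bottomUp
    {N T Γ A : Type} [Semiring A] (G : WLIG N T Γ A) :
    ∃ (N' Γ' : Type) (G' : WLIG N' T Γ' A), G'.IsBottomUp ∧ G'.language = G.language := by
  classical
  refine ⟨BUConstr.N2 N Γ, Option Γ, BUConstr.buG G, ⟨rfl, ?_⟩, ?_⟩
  · intro p hp
    rcases BUConstr.buG_prods_shape hp with ⟨X, β, Ψ, X', β', Ψ', hr, rfl⟩ |
        ⟨Y, c, L, rfl⟩ | ⟨X, β, a, hr, rfl⟩
    · exact Or.inl ⟨Sum.inl X, BUConstr.enc β, BUConstr.fForm Ψ,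
        BUConstr.chainState X' (BUConstr.encTl β'), β'.head?, BUConstr.fForm Ψ', rfl,
        BUConstr.auxBU_fForm Ψ, BUConstr.auxBU_fForm Ψ'⟩
    · exact Or.inl ⟨Sum.inr (Y, c :: L), [], [], BUConstr.chainState Y L, c, [], rfl,
        BUConstr.auxBU_nil, BUConstr.auxBU_nil⟩
    · exact Or.inr ⟨Sum.inl X, BUConstr.enc β, a, rfl⟩
  · ext w
    simp only [WLIG.language, Set.mem_setOf_eq]
    constructor
    · intro h
      have hd0 : BUConstr.Dec [Sum.inl ((BUConstr.buG G).start, (BUConstr.buG G).initStack)]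
          [Sum.inl (G.start, G.initStack)] :=
        List.Forall₂.cons
          (BUConstr.DecItem.chain (T := T) G.start [] (BUConstr.enc G.initStack) G.initStack rfl)
          List.Forall₂.nil
      obtain ⟨D', hdec, hder⟩ := BUConstr.derives_sound hd0 h
      rwa [BUConstr.dec_of_map_inr hdec] at hder
    · intro h
      have h1 := BUConstr.derives_sim (A := A) h
      rw [BUConstr.phiForm_map_inr] at h1
      have h0 := BUConstr.chain_derives (A := A) (G' := BUConstr.buG G)
        (Y := G.start) (L := BUConstr.enc G.initStack)
        (fun p hp => by
          simp only [BUConstr.buG, List.mem_append]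
          exact Or.inr hp) []
      rw [BUConstr.chainState_ne_nil G.start (BUConstr.enc_ne_nil G.initStack)] at h0
      simp only [List.nil_append] at h0
      exact h0.trans (by simpa [BUConstr.phiForm, BUConstr.phiItem, WLIG.Derives] using h1)

end CtrlForm
end

section
/- Every top-down weighted linear indexed grammar is weakly equivalent to a binarized one, whose productions all have one of the forms X[∘A] → Y[S] Z[∘β], X[∘A] → Y[∘β] Z[S], X[∘A] → Y[∘β], or X[A] → a, with |β| ≤ 2. -/
open scoped BigOperators

namespace CtrlForm

namespace WLIG

/-- A top-down WLIG is binarized if every production has one of the forms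
`X[∘A] → Y[S] Z[∘β]`, `X[∘A] → Y[∘β] Z[S]`, `X[∘A] → Y[∘β]`, or
`X[A] → a`, with `|β| ≤ 2`. -/
def IsBinarizedTopDown {N T Γ A : Type} (S : Γ) (G : WLIG N T Γ A) : Prop :=
  G.initStack = [S] ∧
    ∀ p ∈ G.prods,
      (∃ X A' Y Z β, β.length ≤ 2 ∧
        p = LIGProd.rw X [A'] [Sum.inl (Y, [S])] Z β []) ∨
      (∃ X A' Y Z β, β.length ≤ 2 ∧
        p = LIGProd.rw X [A'] [] Y β [Sum.inl (Z, [S])]) ∨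
      (∃ X A' Y β, β.length ≤ 2 ∧
        p = LIGProd.rw X [A'] [] Y β []) ∨
      (∃ X A' a, p = LIGProd.term X [A'] a)

end WLIG

section Binarize
open WLIG
variable {N T Γ A : Type}

abbrev El (N T Γ : Type) : Type := (N × List Γ) ⊕ T
abbrev St (N T Γ : Type) : Type := List (El N T Γ) × Γ × List Γ × N × List (El N T Γ)
abbrev NB (N T Γ : Type) : Type := N ⊕ (St N T Γ ⊕ T)

def emitN : El N T Γ → NB N T Γ
  | Sum.inl (Y, _) => Sum.inl Y
  | Sum.inr t => Sum.inr (Sum.inr t)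

def stN (s : St N T Γ) : NB N T Γ := Sum.inr (Sum.inl s)

def san (S : Γ) : El N T Γ → El N T Γ
  | Sum.inl (Y, _) => Sum.inl (Y, [S])
  | Sum.inr t => Sum.inr t

def chainFrom (S : Γ) : St N T Γ → List (LIGProd (NB N T Γ) T Γ)
  | (y :: L1, c, δ, X', L2r) =>
      LIGProd.rw (stN (y :: L1, c, δ, X', L2r)) [c] [Sum.inl (emitN y, [S])]
        (stN (L1, c, δ, X', L2r)) [c] [] :: chainFrom S (L1, c, δ, X', L2r)
  | ([], c, δ, X', z :: L2r) =>
      LIGProd.rw (stN ([], c, δ, X', z :: L2r)) [c] []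
        (stN ([], c, δ, X', L2r)) [c] [Sum.inl (emitN z, [S])] :: chainFrom S ([], c, δ, X', L2r)
  | ([], c, d1 :: d2 :: d3 :: δ, X', []) =>
      LIGProd.rw (stN ([], c, d1 :: d2 :: d3 :: δ, X', [])) [c] []
        (stN ([], d2, d2 :: d3 :: δ, X', [])) [d1, d2] [] ::
        chainFrom S ([], d2, d2 :: d3 :: δ, X', [])
  | ([], c, [], X', []) => [LIGProd.rw (stN ([], c, [], X', [])) [c] [] (Sum.inl X') [] []]
  | ([], c, [d1], X', []) => [LIGProd.rw (stN ([], c, [d1], X', [])) [c] [] (Sum.inl X') [d1] []]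
  | ([], c, [d1, d2], X', []) =>
      [LIGProd.rw (stN ([], c, [d1, d2], X', [])) [c] [] (Sum.inl X') [d1, d2] []]
termination_by s => s.1.length + s.2.2.1.length + s.2.2.2.2.length

def initSt (Ψ : SForm N T Γ) (A' : Γ) (β : List Γ) (X' : N) (Ψ' : SForm N T Γ) : St N T Γ :=
  (Ψ, A', β, X', Ψ'.reverse)

def prodsOf (S : Γ) : LIGProd N T Γ → List (LIGProd (NB N T Γ) T Γ)
  | LIGProd.rw X (A' :: []) Ψ X' β' Ψ' =>
      LIGProd.rw (Sum.inl X) [A'] [] (stN (initSt Ψ A' β' X' Ψ')) [A'] [] ::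
      (chainFrom S (initSt Ψ A' β' X' Ψ') ++
        (Ψ ++ Ψ').filterMap (fun y => match y with
          | Sum.inr t => some (LIGProd.term (Sum.inr (Sum.inr t) : NB N T Γ) [S] (some t))
          | Sum.inl _ => none))
  | LIGProd.term X (A' :: []) a => [LIGProd.term (Sum.inl X) [A'] a]
  | _ => []

def binG (G : WLIG N T Γ A) (S : Γ) (w0 : A) : WLIG (NB N T Γ) T Γ A :=
  ⟨G.prods.flatMap (prodsOf S), Sum.inl G.start, [S], fun _ => w0⟩

def hItem (S : Γ) : (NB N T Γ × List Γ) ⊕ T → SForm N T Γ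
  | Sum.inr t => [Sum.inr t]
  | Sum.inl (Sum.inl Y, τ) => [Sum.inl (Y, τ)]
  | Sum.inl (Sum.inr (Sum.inr t), _) => [Sum.inr t]
  | Sum.inl (Sum.inr (Sum.inl (L1, _, δ, X', L2r)), τ) =>
      L1.map (san S) ++ [Sum.inl (X', τ.dropLast ++ δ)] ++ (L2r.map (san S)).reverse

def hF (S : Γ) (Φ : SForm (NB N T Γ) T Γ) : SForm N T Γ := Φ.flatMap (hItem S)

def embItem : (N × List Γ) ⊕ T → (NB N T Γ × List Γ) ⊕ T
  | Sum.inl (Y, τ) => Sum.inl (Sum.inl Y, τ)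
  | Sum.inr t => Sum.inr t

def eF (Φ : SForm N T Γ) : SForm (NB N T Γ) T Γ := Φ.map embItem

def eEl (S : Γ) : El N T Γ → (NB N T Γ × List Γ) ⊕ T
  | Sum.inl (Y, _) => Sum.inl (Sum.inl Y, [S])
  | Sum.inr t => Sum.inr t

@[simp] theorem hF_append (S : Γ) (P Q : SForm (NB N T Γ) T Γ) :
    hF S (P ++ Q) = hF S P ++ hF S Q := List.flatMap_append ..

@[simp] theorem hF_cons (S : Γ) (x) (Q : SForm (NB N T Γ) T Γ) :
    hF S (x :: Q) = hItem S x ++ hF S Q := rfl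

@[simp] theorem hF_nil (S : Γ) : hF S ([] : SForm (NB N T Γ) T Γ) = [] := rfl

@[simp] theorem hItem_emit (S : Γ) (y : El N T Γ) :
    hItem S (Sum.inl (emitN y, [S])) = [san S y] := by
  cases y with
  | inl p => cases p; simp [emitN, hItem, san]
  | inr t => simp [emitN, hItem, san]

theorem map_san_eq (S : Γ) {Ψ : SForm N T Γ} (h : AuxTD S Ψ) : Ψ.map (san S) = Ψ := by
  conv_rhs => rw [← List.map_id Ψ]
  apply List.map_congr_left
  intro x hx
  cases x with
  | inl p =>
    obtain ⟨Y, ρ⟩ := p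
    have := h _ hx Y ρ rfl
    simp [san, this]
  | inr t => rfl

theorem chain_inv (S : Γ) (s : St N T Γ) :
    ∀ q ∈ chainFrom S s, ∃ Xq βq Ψq Xq' βq' Ψq',
      q = LIGProd.rw Xq βq Ψq Xq' βq' Ψq' ∧
      ∀ σ : List Γ, hItem S (Sum.inl (Xq, σ ++ βq)) =
        Ψq.flatMap (hItem S) ++ hItem S (Sum.inl (Xq', σ ++ βq')) ++ Ψq'.flatMap (hItem S) := by
  induction s using chainFrom.induct with
  | case1 y L1 c δ X' L2r ih =>
    intro q hq
    rw [chainFrom] at hq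
    rcases List.mem_cons.mp hq with rfl | hq
    · refine ⟨_, _, _, _, _, _, rfl, fun σ => ?_⟩
      rcases y with ⟨Y, ρ⟩ | t <;>
        simp [hItem, stN, emitN, san, List.dropLast_concat]
    · exact ih q hq
  | case2 c δ X' z L2r ih =>
    intro q hq
    rw [chainFrom] at hq
    rcases List.mem_cons.mp hq with rfl | hq
    · refine ⟨_, _, _, _, _, _, rfl, fun σ => ?_⟩
      rcases z with ⟨Y, ρ⟩ | t <;>
        simp [hItem, stN, emitN, san, List.dropLast_concat]
    · exact ih q hq
  | case3 c d1 d2 d3 δ X' ih =>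
    intro q hq
    rw [chainFrom] at hq
    rcases List.mem_cons.mp hq with rfl | hq
    · refine ⟨_, _, _, _, _, _, rfl, fun σ => ?_⟩
      have h2 : (σ ++ [d1, d2]).dropLast = σ ++ [d1] := by
        rw [show σ ++ [d1, d2] = (σ ++ [d1]) ++ [d2] by simp, List.dropLast_concat]
      simp [hItem, stN, List.dropLast_concat, h2]
    · exact ih q hq
  | case4 c X' =>
    intro q hq
    rw [chainFrom] at hq
    rcases List.mem_singleton.mp hq with rfl
    refine ⟨_, _, _, _, _, _, rfl, fun σ => ?_⟩
    simp [hItem, stN, List.dropLast_concat]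
  | case5 c d1 X' =>
    intro q hq
    rw [chainFrom] at hq
    rcases List.mem_singleton.mp hq with rfl
    refine ⟨_, _, _, _, _, _, rfl, fun σ => ?_⟩
    simp [hItem, stN, List.dropLast_concat]
  | case6 c d1 d2 X' =>
    intro q hq
    rw [chainFrom] at hq
    rcases List.mem_singleton.mp hq with rfl
    refine ⟨_, _, _, _, _, _, rfl, fun σ => ?_⟩
    simp [hItem, stN, List.dropLast_concat]

theorem chain_binar (S : Γ) (s : St N T Γ) :
    ∀ q ∈ chainFrom S s,
      (∃ X A' Y Z β, β.length ≤ 2 ∧ q = LIGProd.rw X [A'] [Sum.inl (Y, [S])] Z β []) ∨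
      (∃ X A' Y Z β, β.length ≤ 2 ∧ q = LIGProd.rw X [A'] [] Y β [Sum.inl (Z, [S])]) ∨
      (∃ X A' Y β, β.length ≤ 2 ∧ q = LIGProd.rw X [A'] [] Y β []) ∨
      (∃ X A' a, q = LIGProd.term X [A'] a) := by
  induction s using chainFrom.induct with
  | case1 y L1 c δ X' L2r ih =>
    intro q hq; rw [chainFrom] at hq
    rcases List.mem_cons.mp hq with rfl | hq
    · exact Or.inl ⟨_, _, _, _, [c], by simp, rfl⟩
    · exact ih q hq
  | case2 c δ X' z L2r ih =>
    intro q hq; rw [chainFrom] at hq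
    rcases List.mem_cons.mp hq with rfl | hq
    · exact Or.inr (Or.inl ⟨_, _, _, _, [c], by simp, rfl⟩)
    · exact ih q hq
  | case3 c d1 d2 d3 δ X' ih =>
    intro q hq; rw [chainFrom] at hq
    rcases List.mem_cons.mp hq with rfl | hq
    · exact Or.inr (Or.inr (Or.inl ⟨_, _, _, [d1, d2], by simp, rfl⟩))
    · exact ih q hq
  | case4 c X' =>
    intro q hq; rw [chainFrom] at hq
    rcases List.mem_singleton.mp hq with rfl
    exact Or.inr (Or.inr (Or.inl ⟨_, _, _, [], by simp, rfl⟩))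
  | case5 c d1 X' =>
    intro q hq; rw [chainFrom] at hq
    rcases List.mem_singleton.mp hq with rfl
    exact Or.inr (Or.inr (Or.inl ⟨_, _, _, [d1], by simp, rfl⟩))
  | case6 c d1 d2 X' =>
    intro q hq; rw [chainFrom] at hq
    rcases List.mem_singleton.mp hq with rfl
    exact Or.inr (Or.inr (Or.inl ⟨_, _, _, [d1, d2], by simp, rfl⟩))

@[simp] theorem binG_prods (G : WLIG N T Γ A) (S : Γ) (w0 : A) :
    (binG G S w0).prods = G.prods.flatMap (prodsOf S) := rfl

theorem derives_of_eq (G : WLIG N T Γ A) {Φ1 Φ2 : SForm N T Γ} (h : Φ1 = Φ2) :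
    G.Derives Φ1 Φ2 := h ▸ Relation.ReflTransGen.refl

theorem derives_cast {G : WLIG N T Γ A} {a b a' b' : SForm N T Γ}
    (h : G.Derives a b) (h1 : a = a') (h2 : b = b') : G.Derives a' b' := h1 ▸ h2 ▸ h

theorem derives_head_rw (G : WLIG N T Γ A) {X : N} {β : List Γ} {Ψ : SForm N T Γ}
    {X' : N} {β' : List Γ} {Ψ' : SForm N T Γ}
    (hp : LIGProd.rw X β Ψ X' β' Ψ' ∈ G.prods) (pre post : SForm N T Γ) (σ : List Γ)
    {Φ1 Φ3 : SForm N T Γ}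
    (h1 : Φ1 = pre ++ [Sum.inl (X, σ ++ β)] ++ post)
    (h : G.Derives (pre ++ Ψ ++ [Sum.inl (X', σ ++ β')] ++ Ψ' ++ post) Φ3) :
    G.Derives Φ1 Φ3 := h1 ▸ Relation.ReflTransGen.head (WLIG.Step.rw pre post σ hp) h

theorem derives_head_term (G : WLIG N T Γ A) {X : N} {β : List Γ} {a : Option T}
    (hp : LIGProd.term X β a ∈ G.prods) (pre post : SForm N T Γ)
    {Φ1 Φ3 : SForm N T Γ}
    (h1 : Φ1 = pre ++ [Sum.inl (X, β)] ++ post)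
    (h : G.Derives (pre ++ a.toList.map Sum.inr ++ post) Φ3) :
    G.Derives Φ1 Φ3 := h1 ▸ Relation.ReflTransGen.head (WLIG.Step.term pre post hp) h

theorem step_rw' (G : WLIG N T Γ A) {X : N} {β : List Γ} {Ψ : SForm N T Γ}
    {X' : N} {β' : List Γ} {Ψ' : SForm N T Γ}
    (hp : LIGProd.rw X β Ψ X' β' Ψ' ∈ G.prods) (pre post : SForm N T Γ) (σ : List Γ)
    {Φ1 Φ2 : SForm N T Γ}
    (h1 : Φ1 = pre ++ [Sum.inl (X, σ ++ β)] ++ post)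
    (h2 : Φ2 = pre ++ Ψ ++ [Sum.inl (X', σ ++ β')] ++ Ψ' ++ post) :
    G.Step Φ1 Φ2 := h1 ▸ h2 ▸ WLIG.Step.rw pre post σ hp

theorem step_term' (G : WLIG N T Γ A) {X : N} {β : List Γ} {a : Option T}
    (hp : LIGProd.term X β a ∈ G.prods) (pre post : SForm N T Γ)
    {Φ1 Φ2 : SForm N T Γ}
    (h1 : Φ1 = pre ++ [Sum.inl (X, β)] ++ post)
    (h2 : Φ2 = pre ++ a.toList.map Sum.inr ++ post) :
    G.Step Φ1 Φ2 := h1 ▸ h2 ▸ WLIG.Step.term pre post hp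

theorem chain_complete (G' : WLIG (NB N T Γ) T Γ A) (S : Γ) (s : St N T Γ) :
    (∀ q ∈ chainFrom S s, q ∈ G'.prods) →
    (∀ t : T, (Sum.inr t ∈ s.1 ∨ Sum.inr t ∈ s.2.2.2.2) →
      LIGProd.term (Sum.inr (Sum.inr t) : NB N T Γ) [S] (some t) ∈ G'.prods) →
    ∀ (σ : List Γ) (P Q : SForm (NB N T Γ) T Γ),
      G'.Derives (P ++ [Sum.inl (stN s, σ ++ [s.2.1])] ++ Q)
        (P ++ s.1.map (eEl S) ++ [Sum.inl (Sum.inl s.2.2.2.1, σ ++ s.2.2.1)] ++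
          (s.2.2.2.2.map (eEl S)).reverse ++ Q) := by
  induction s using chainFrom.induct with
  | case1 y L1 c δ X' L2r ih =>
    intro hsub hprox σ P Q
    have hp := hsub _ (by rw [chainFrom]; exact List.mem_cons_self)
    refine derives_head_rw _ hp P Q σ rfl ?_
    have ih' := ih (fun q hq => hsub q (by rw [chainFrom]; exact List.mem_cons_of_mem _ hq))
      (fun t ht => hprox t (by
        rcases ht with h | h
        · exact Or.inl (List.mem_cons_of_mem _ h)
        · exact Or.inr h))
      σ (P ++ [eEl S y]) Q
    cases y with
    | inl p =>
      obtain ⟨Y, ρ⟩ := p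
      exact derives_cast ih' (by simp [eEl, emitN]) (by simp [eEl])
    | inr t =>
      refine derives_head_term _ (hprox t (Or.inl (List.mem_cons_self))) P
        ([Sum.inl (stN (L1, c, δ, X', L2r), σ ++ [c])] ++ ([] ++ Q)) (by simp [emitN]) ?_
      exact derives_cast ih' (by simp [eEl, Option.toList]) (by simp [eEl])
  | case2 c δ X' z L2r ih =>
    intro hsub hprox σ P Q
    have hp := hsub _ (by rw [chainFrom]; exact List.mem_cons_self)
    refine derives_head_rw _ hp P Q σ rfl ?_
    have ih' := ih (fun q hq => hsub q (by rw [chainFrom]; exact List.mem_cons_of_mem _ hq))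
      (fun t ht => hprox t (by
        rcases ht with h | h
        · exact Or.inl h
        · exact Or.inr (List.mem_cons_of_mem _ h)))
      σ P ([eEl S z] ++ Q)
    cases z with
    | inl p =>
      obtain ⟨Y, ρ⟩ := p
      exact derives_cast ih' (by simp [eEl, emitN]) (by simp [eEl])
    | inr t =>
      refine derives_head_term _ (hprox t (Or.inr (List.mem_cons_self)))
        (P ++ [Sum.inl (stN ([], c, δ, X', L2r), σ ++ [c])]) Q (by simp [emitN]) ?_
      exact derives_cast ih' (by simp [eEl, Option.toList]) (by simp [eEl])
  | case3 c d1 d2 d3 δ X' ih =>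
    intro hsub hprox σ P Q
    have hp := hsub _ (by rw [chainFrom]; exact List.mem_cons_self)
    refine derives_head_rw _ hp P Q σ rfl ?_
    have ih' := ih (fun q hq => hsub q (by rw [chainFrom]; exact List.mem_cons_of_mem _ hq))
      (fun t ht => hprox t (by rcases ht with h | h <;> simp at h))
      (σ ++ [d1]) P Q
    exact derives_cast ih' (by simp) (by simp)
  | case4 c X' =>
    intro hsub hprox σ P Q
    have hp := hsub _ (by rw [chainFrom]; exact List.mem_singleton.mpr rfl)
    refine derives_head_rw _ hp P Q σ rfl ?_
    exact derives_of_eq _ (by simp)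
  | case5 c d1 X' =>
    intro hsub hprox σ P Q
    have hp := hsub _ (by rw [chainFrom]; exact List.mem_singleton.mpr rfl)
    refine derives_head_rw _ hp P Q σ rfl ?_
    exact derives_of_eq _ (by simp)
  | case6 c d1 d2 X' =>
    intro hsub hprox σ P Q
    have hp := hsub _ (by rw [chainFrom]; exact List.mem_singleton.mpr rfl)
    refine derives_head_rw _ hp P Q σ rfl ?_
    exact derives_of_eq _ (by simp)

theorem map_eEl_eq (S : Γ) {Ψ : SForm N T Γ} (h : AuxTD S Ψ) :
    Ψ.map (eEl S) = Ψ.map embItem := by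
  apply List.map_congr_left
  intro x hx
  cases x with
  | inl p =>
    obtain ⟨Y, ρ⟩ := p
    have := h _ hx Y ρ rfl
    simp [eEl, embItem, this]
  | inr t => rfl
theorem step_e (G : WLIG N T Γ A) (S : Γ) (w0 : A)
    (hprods : ∀ p ∈ G.prods,
      (∃ X A' Ψ X' β Ψ', p = LIGProd.rw X [A'] Ψ X' β Ψ' ∧ AuxTD S Ψ ∧ AuxTD S Ψ') ∨
      (∃ X A' a, p = LIGProd.term X [A'] a))
    {Φ1 Φ2 : SForm N T Γ} (h : G.Step Φ1 Φ2) :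
    (binG G S w0).Derives (eF Φ1) (eF Φ2) := by
  cases h with
  | rw pre post σ hp =>
    rename_i X β Ψ X' β' Ψ'
    rcases hprods _ hp with ⟨X₀, A₀, Ψ₀, X₀', β₀, Ψ₀', heq, hA1, hA2⟩ | ⟨X₀, A₀, a₀, heq⟩
    · simp only [LIGProd.rw.injEq] at heq
      obtain ⟨rfl, rfl, rfl, rfl, rfl, rfl⟩ := heq
      have hpmem : LIGProd.rw (Sum.inl X) [A₀] []
          (stN (initSt Ψ A₀ β' X' Ψ')) [A₀] [] ∈ (binG G S w0).prods :=
        List.mem_flatMap.mpr ⟨_, hp, by simp only [prodsOf]; exact List.mem_cons_self⟩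
      refine derives_head_rw _ hpmem (eF pre) (eF post) σ (by simp [eF, embItem]) ?_
      have hsub : ∀ q ∈ chainFrom S (initSt Ψ A₀ β' X' Ψ'), q ∈ (binG G S w0).prods :=
        fun q hq => List.mem_flatMap.mpr ⟨_, hp, by
          simp only [prodsOf]
          exact List.mem_cons_of_mem _ (List.mem_append_left _ hq)⟩
      have hprox : ∀ t : T, (Sum.inr t ∈ (initSt Ψ A₀ β' X' Ψ').1 ∨
          Sum.inr t ∈ (initSt Ψ A₀ β' X' Ψ').2.2.2.2) →
          LIGProd.term (Sum.inr (Sum.inr t) : NB N T Γ) [S] (some t) ∈ (binG G S w0).prods := by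
        intro t ht
        refine List.mem_flatMap.mpr ⟨_, hp, ?_⟩
        simp only [prodsOf]
        refine List.mem_cons_of_mem _ (List.mem_append_right _ ?_)
        refine List.mem_filterMap.mpr ⟨Sum.inr t, ?_, rfl⟩
        rcases ht with h | h
        · exact List.mem_append_left _ h
        · exact List.mem_append_right _ (List.mem_reverse.mp h)
      have hcc := chain_complete (binG G S w0) S (initSt Ψ A₀ β' X' Ψ') hsub hprox σ
        (eF pre) (eF post)
      refine derives_cast hcc (by simp [initSt]) ?_
      simp [initSt, eF, map_eEl_eq S hA1, map_eEl_eq S hA2, List.map_reverse,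
        List.reverse_reverse, embItem]
    · simp at heq
  | term pre post hp =>
    rename_i X β a
    rcases hprods _ hp with ⟨X₀, A₀, Ψ₀, X₀', β₀, Ψ₀', heq, hA1, hA2⟩ | ⟨X₀, A₀, a₀, heq⟩
    · simp at heq
    · simp only [LIGProd.term.injEq] at heq
      obtain ⟨rfl, rfl, rfl⟩ := heq
      have hpmem : LIGProd.term (Sum.inl X : NB N T Γ) [A₀] a ∈ (binG G S w0).prods :=
        List.mem_flatMap.mpr ⟨_, hp, by
          simp only [prodsOf]; exact List.mem_singleton.mpr rfl⟩
      refine derives_head_term _ hpmem (eF pre) (eF post) (by simp [eF, embItem]) ?_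
      refine derives_of_eq _ ?_
      cases a <;> simp [eF, embItem, Option.toList, Function.comp]

theorem step_h (G : WLIG N T Γ A) (S : Γ) (w0 : A)
    (hprods : ∀ p ∈ G.prods,
      (∃ X A' Ψ X' β Ψ', p = LIGProd.rw X [A'] Ψ X' β Ψ' ∧ AuxTD S Ψ ∧ AuxTD S Ψ') ∨
      (∃ X A' a, p = LIGProd.term X [A'] a))
    {Φ1 Φ2 : SForm (NB N T Γ) T Γ} (h : (binG G S w0).Step Φ1 Φ2) :
    hF S Φ1 = hF S Φ2 ∨ G.Step (hF S Φ1) (hF S Φ2) := by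
  cases h with
  | rw pre post σ hp =>
    rename_i Xs βs Ψs Xs' βs' Ψs'
    rw [binG_prods] at hp
    obtain ⟨p, hpG, hq⟩ := List.mem_flatMap.mp hp
    rcases hprods _ hpG with ⟨X₀, A₀, Ψ₀, X₀', β₀, Ψ₀', rfl, hA1, hA2⟩ | ⟨X₀, A₀, a₀, rfl⟩
    · simp only [prodsOf] at hq
      rcases List.mem_cons.mp hq with heq | hq
      · simp only [LIGProd.rw.injEq] at heq
        obtain ⟨rfl, rfl, rfl, rfl, rfl, rfl⟩ := heq
        right
        refine step_rw' G hpG (hF S pre) (hF S post) σ (by simp [hItem]) ?_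
        simp [hItem, stN, initSt, List.dropLast_concat, map_san_eq S hA1, map_san_eq S hA2,
          List.map_reverse, List.reverse_reverse]
      · rcases List.mem_append.mp hq with hq | hq
        · obtain ⟨Xq, βq, Ψq, Xq', βq', Ψq', heq, hinv⟩ := chain_inv S _ _ hq
          simp only [LIGProd.rw.injEq] at heq
          obtain ⟨rfl, rfl, rfl, rfl, rfl, rfl⟩ := heq
          left
          simp [hF, hinv σ]
        · obtain ⟨y, hy, heq⟩ := List.mem_filterMap.mp hq
          rcases y with ⟨Y, ρ⟩ | t <;> simp at heq
    · simp only [prodsOf] at hq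
      simp at hq
  | term pre post hp =>
    rename_i Xs βs as
    rw [binG_prods] at hp
    obtain ⟨p, hpG, hq⟩ := List.mem_flatMap.mp hp
    rcases hprods _ hpG with ⟨X₀, A₀, Ψ₀, X₀', β₀, Ψ₀', rfl, hA1, hA2⟩ | ⟨X₀, A₀, a₀, rfl⟩
    · simp only [prodsOf] at hq
      rcases List.mem_cons.mp hq with heq | hq
      · simp at heq
      · rcases List.mem_append.mp hq with hq | hq
        · obtain ⟨Xq, βq, Ψq, Xq', βq', Ψq', heq, _⟩ := chain_inv S _ _ hq
          simp at heq
        · obtain ⟨y, hy, heq⟩ := List.mem_filterMap.mp hq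
          rcases y with ⟨Y, ρ⟩ | t
          · simp at heq
          · simp only [Option.some.injEq, LIGProd.term.injEq] at heq
            obtain ⟨rfl, rfl, rfl⟩ := heq
            left
            simp [hItem, Option.toList]
    · simp only [prodsOf] at hq
      rcases List.mem_singleton.mp hq with heq
      simp only [LIGProd.term.injEq] at heq
      obtain ⟨rfl, rfl, rfl⟩ := heq
      right
      refine step_term' G hpG (hF S pre) (hF S post) (by simp [hItem]) ?_
      cases as <;> simp [hItem, Option.toList]

theorem derives_h (G : WLIG N T Γ A) (S : Γ) (w0 : A)
    (hprods : ∀ p ∈ G.prods,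
      (∃ X A' Ψ X' β Ψ', p = LIGProd.rw X [A'] Ψ X' β Ψ' ∧ AuxTD S Ψ ∧ AuxTD S Ψ') ∨
      (∃ X A' a, p = LIGProd.term X [A'] a))
    {Φ1 Φ2 : SForm (NB N T Γ) T Γ}
    (D : Relation.ReflTransGen (binG G S w0).Step Φ1 Φ2) :
    G.Derives (hF S Φ1) (hF S Φ2) := by
  induction D with
  | refl => exact Relation.ReflTransGen.refl
  | tail _ hstep ih =>
    rcases step_h G S w0 hprods hstep with heq | hs
    · exact heq ▸ ih
    · exact Relation.ReflTransGen.tail ih hs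

theorem derives_e (G : WLIG N T Γ A) (S : Γ) (w0 : A)
    (hprods : ∀ p ∈ G.prods,
      (∃ X A' Ψ X' β Ψ', p = LIGProd.rw X [A'] Ψ X' β Ψ' ∧ AuxTD S Ψ ∧ AuxTD S Ψ') ∨
      (∃ X A' a, p = LIGProd.term X [A'] a))
    {Φ1 Φ2 : SForm N T Γ}
    (D : Relation.ReflTransGen G.Step Φ1 Φ2) :
    (binG G S w0).Derives (eF Φ1) (eF Φ2) := by
  induction D with
  | refl => exact Relation.ReflTransGen.refl
  | tail _ hstep ih => exact Relation.ReflTransGen.trans ih (step_e G S w0 hprods hstep)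

@[simp] theorem hF_terminals (S : Γ) (w : List T) :
    hF S (List.map Sum.inr w : SForm (NB N T Γ) T Γ) = List.map Sum.inr w := by
  induction w with
  | nil => rfl
  | cons t w ih => simp [hItem, ih]
@[simp] theorem eF_terminals (w : List T) :
    eF (List.map Sum.inr w : SForm N T Γ) = List.map Sum.inr w := by
  induction w with
  | nil => rfl
  | cons t w ih => simp [eF, embItem, ih]

end Binarize

/-- Every top-down WLIG is weakly equivalent to a binarized top-down WLIG. -/
theorem every_topDown_wlig_weakly_equivalent_to_binarized
    {N T Γ A : Type} [Semiring A] (G : WLIG N T Γ A) (hG : G.IsTopDown) :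
    ∃ (N' Γ' : Type) (G' : WLIG N' T Γ' A) (S : Γ'),
      G'.IsBinarizedTopDown S ∧ G'.language = G.language := by
  obtain ⟨S, hS, hprods⟩ := hG
  refine ⟨NB N T Γ, Γ, binG G S 1, S, ⟨rfl, ?_⟩, ?_⟩
  · intro q hq
    rw [binG_prods] at hq
    obtain ⟨p, hpG, hq⟩ := List.mem_flatMap.mp hq
    rcases hprods _ hpG with ⟨X₀, A₀, Ψ₀, X₀', β₀, Ψ₀', rfl, hA1, hA2⟩ | ⟨X₀, A₀, a₀, rfl⟩
    · simp only [prodsOf] at hq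
      rcases List.mem_cons.mp hq with rfl | hq
      · exact Or.inr (Or.inr (Or.inl ⟨_, _, _, [A₀], by simp, rfl⟩))
      · rcases List.mem_append.mp hq with hq | hq
        · exact chain_binar S _ _ hq
        · obtain ⟨y, hy, heq⟩ := List.mem_filterMap.mp hq
          rcases y with ⟨Y, ρ⟩ | t
          · simp at heq
          · simp only [Option.some.injEq] at heq
            exact Or.inr (Or.inr (Or.inr ⟨_, _, _, heq.symm⟩))
    · simp only [prodsOf] at hq
      rcases List.mem_singleton.mp hq with rfl
      exact Or.inr (Or.inr (Or.inr ⟨_, _, _, rfl⟩))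
  · ext w
    simp only [WLIG.language, Set.mem_setOf_eq]
    constructor
    · intro hD
      have hD' := derives_h G S 1 hprods hD
      rw [hS]
      exact derives_cast hD' (by simp [binG, hF, hItem]) (hF_terminals S w)
    · intro hD
      have hD0 : Relation.ReflTransGen G.Step [Sum.inl (G.start, [S])] (List.map Sum.inr w) := by
        rw [← hS]; exact hD
      have hD' := derives_e G S 1 hprods hD0
      exact derives_cast hD' (by simp [binG, eF, embItem]) (eF_terminals w)

end CtrlForm
end

section
/- Every weighted embedded pushdown automaton is weakly equivalent to a top-down WEPDA, i.e., one whose transitions are of the forms p, X[∘A] →^{a/w} q, Ψ, Y[∘β], Ψ' (popping one symbol from the top inner stack) or p, X[A] →^{a/w} q, ε, ε, ε (popping the top inner stack entirely), with all inner stacks in Ψ, Ψ' containing only the symbol S, initial configuration (q_init, S[S]), and final configuration (q_f, ε). -/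
open scoped BigOperators

namespace CtrlForm

/-- Transitions of a weighted embedded pushdown automaton:
`repl p X β a q Ψ Y β' Ψ'` is the transition
`p, X[∘β] →^a q, Ψ, Y[∘β'], Ψ'` (replace the top `β` of the top inner
stack by `β'`, relabel `X` to `Y`, insert the inner stacks `Ψ` below and
`Ψ'` above the top inner stack), and `popT p X β a q` is the transition
`p, X[β] →^a q, ε, ε, ε` popping the entire top inner stack. -/
inductive ETrans (Q N T Γ : Type) where
  | repl (p : Q) (X : N) (β : List Γ) (a : Option T) (q : Q)
      (Ψ : List (N × List Γ)) (Y : N) (β' : List Γ) (Ψ' : List (N × List Γ))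
  | popT (p : Q) (X : N) (β : List Γ) (a : Option T) (q : Q)

/-- A weighted embedded pushdown automaton over a weight type `A`.
Configurations consist of a state and an outer stack of labeled inner
stacks (tops at the right of the lists). -/
structure WEPDA (Q N T Γ A : Type) where
  trans : List (ETrans Q N T Γ)
  wt : ETrans Q N T Γ → A
  qInit : Q
  stackInit : List (N × List Γ)
  qFin : Q
  stackFin : List (N × List Γ)

namespace WEPDA

variable {Q N T Γ A : Type}

/-- Runs of a WEPDA from a configuration to a configuration, scanning a
string; represented as data so that they carry weights. -/
inductive Run (M : WEPDA Q N T Γ A) :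
    Q × List (N × List Γ) → Q × List (N × List Γ) → List T → Type where
  | refl (c : Q × List (N × List Γ)) : Run M c c []
  | repl (Φ : List (N × List Γ)) (σ : List Γ) (p : Q) (X : N) (β : List Γ)
      (a : Option T) (q : Q) (Ψ : List (N × List Γ)) (Y : N) (β' : List Γ)
      (Ψ' : List (N × List Γ)) {c : Q × List (N × List Γ)} {w : List T}
      (ht : ETrans.repl p X β a q Ψ Y β' Ψ' ∈ M.trans)
      (r : Run M (q, Φ ++ Ψ ++ [(Y, σ ++ β')] ++ Ψ') c w) :
      Run M (p, Φ ++ [(X, σ ++ β)]) c (a.toList ++ w)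
  | popT (Φ : List (N × List Γ)) (p : Q) (X : N) (β : List Γ) (a : Option T) (q : Q)
      {c : Q × List (N × List Γ)} {w : List T}
      (ht : ETrans.popT p X β a q ∈ M.trans)
      (r : Run M (q, Φ) c w) :
      Run M (p, Φ ++ [(X, β)]) c (a.toList ++ w)

/-- The string language of a WEPDA: all strings scanned by accepting runs. -/
def language (M : WEPDA Q N T Γ A) : Set (List T) :=
  { w | Nonempty (Run M (M.qInit, M.stackInit) (M.qFin, M.stackFin) w) }

/-- A WEPDA is top-down (with distinguished stack symbol `S` and initial
inner-stack label `S₀`) if every transition pops exactly one symbol from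
the top inner stack or pops a singleton top inner stack entirely, all
auxiliary inner stacks contain only the symbol `S`, the initial
configuration is `(q_init, S₀[S])`, and the final configuration is
`(q_f, ε)`. -/
def IsTopDown (M : WEPDA Q N T Γ A) : Prop :=
  ∃ (S : Γ) (S₀ : N),
    M.stackInit = [(S₀, [S])] ∧ M.stackFin = [] ∧
    ∀ t ∈ M.trans,
      (∃ p X A' a q Ψ Y β Ψ',
        t = ETrans.repl p X [A'] a q Ψ Y β Ψ' ∧
        (∀ x ∈ Ψ, (x : N × List Γ).2 = [S]) ∧ (∀ x ∈ Ψ', (x : N × List Γ).2 = [S])) ∨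
      (∃ p X A' a q, t = ETrans.popT p X [A'] a q)

end WEPDA

----------------------------------------------------------------
-- Construction
----------------------------------------------------------------

section TopDown

variable {Q N T Γ A : Type}

/-- States of the top-down simulator. -/
inductive TDSt (Q N T Γ : Type) where
  | start
  | orig (p : Q)
  | mid (t : ETrans Q N T Γ) (l : List (Option Γ))
  | bst (i : ℕ)
  | cst (i : ℕ) (l : List (Option Γ))
  | fin

/-- Inner-stack labels of the simulator. -/
inductive TDLab (N Γ : Type) where
  | s0
  | bot
  | act (X : N)
  | laz (X : N) (γ : List Γ)

abbrev TD (Q N T Γ : Type) := ETrans (TDSt Q N T Γ) (TDLab N Γ) T (Option Γ)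

def enc (γ : List Γ) : List (Option Γ) := γ.map some

def lazyE (s : N × List Γ) : TDLab N Γ × List (Option Γ) := (.laz s.1 s.2, [none])

def actE (s : N × List Γ) : TDLab N Γ × List (Option Γ) :=
  (.act s.1, none :: (enc s.2 ++ [none]))

def lazyL (Ψ : List (N × List Γ)) : List (TDLab N Γ × List (Option Γ)) := Ψ.map lazyE

/-- Chain of transitions popping the symbols of `l` one at a time and
finally popping the whole (singleton `[none]`) inner stack, scanning `a`
and going to `dst`. -/
def popSeq (lab : TDLab N Γ) (nm : List (Option Γ) → TDSt Q N T Γ)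
    (dst : TDSt Q N T Γ) (a : Option T) : List (Option Γ) → List (TD Q N T Γ)
  | [] => [.popT (nm []) lab [none] a dst]
  | x :: l => .repl (nm (x :: l)) lab [x] none (nm l) [] lab [] [] :: popSeq lab nm dst a l

/-- Chain of transitions popping the symbols of `l` one at a time, with
the last pop performing the pushes/insertions of a `repl` transition. -/
def replSeq (lab : TDLab N Γ) (nm : List (Option Γ) → TDSt Q N T Γ)
    (a : Option T) (q : Q) (Ψ : List (N × List Γ)) (Y : N) (β' : List Γ)
    (Ψ' : List (N × List Γ)) : List (Option Γ) → List (TD Q N T Γ)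
  | [] => []
  | [x] => [.repl (nm [x]) lab [x] a (.orig q) (lazyL Ψ) (.act Y) (enc β' ++ [none]) (lazyL Ψ')]
  | x :: y :: l => .repl (nm (x :: y :: l)) lab [x] none (nm (y :: l)) [] lab [] [] ::
      replSeq lab nm a q Ψ Y β' Ψ' (y :: l)

/-- Naming scheme for intermediate states of the macro of `t`. -/
def nmMac (t : ETrans Q N T Γ) (p : Q) (k : ℕ) : List (Option Γ) → TDSt Q N T Γ :=
  fun l => if l.length = k then .orig p else .mid t l

/-- Naming scheme for the cleanup states verifying stack `i`. -/
def nmCl (i : ℕ) (k : ℕ) : List (Option Γ) → TDSt Q N T Γ :=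
  fun l => if l.length = k then .bst i else .cst i l

def macroOf : ETrans Q N T Γ → List (TD Q N T Γ)
  | .repl p X β a q Ψ Y β' Ψ' =>
      replSeq (.act X) (nmMac (.repl p X β a q Ψ Y β' Ψ') p (β.length + 1)) a q Ψ Y β' Ψ'
        (none :: enc β.reverse)
  | .popT p X β a q =>
      popSeq (.act X) (nmMac (.popT p X β a q) p (β.length + 1)) (.orig q) a
        (none :: enc β.reverse)

def statesOf : ETrans Q N T Γ → List Q
  | .repl p _ _ _ q _ _ _ _ => [p, q]
  | .popT p _ _ _ q => [p, q]

variable (M : WEPDA Q N T Γ A)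

def lazySet : List (N × List Γ) :=
  M.stackInit ++ M.trans.flatMap (fun t => match t with
    | .repl _ _ _ _ _ Ψ _ _ Ψ' => Ψ ++ Ψ'
    | .popT _ _ _ _ _ => [])

def stSet : List Q := M.qInit :: M.qFin :: M.trans.flatMap statesOf

def transOf : List (TD Q N T Γ) :=
  [.repl .start .s0 [none] none (.orig M.qInit) [] .bot [none] (lazyL M.stackInit)]
  ++ M.trans.flatMap macroOf
  ++ (stSet M).flatMap (fun p => (lazySet M).map (fun s =>
       .repl (.orig p) (.laz s.1 s.2) [none] none (.orig p) [] (.act s.1)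
         (none :: (enc s.2 ++ [none])) []))
  ++ (.repl (.orig M.qFin) .bot [none] none (.bst M.stackFin.length) [] .bot [none] []
      :: M.stackFin.flatMap (fun s =>
        [.repl (.orig M.qFin) (.laz s.1 s.2) [none] none (.bst M.stackFin.length) []
           (.laz s.1 s.2) [none] [],
         .repl (.orig M.qFin) (.act s.1) [none] none (.bst M.stackFin.length) []
           (.act s.1) [none] []]))
  ++ (List.range M.stackFin.length).flatMap (fun k => match M.stackFin[k]? with
      | some s => .popT (.bst (k + 1)) (.laz s.1 s.2) [none] none (.bst k)
                  :: popSeq (.act s.1) (nmCl (k + 1) (s.2.length + 1)) (.bst k) none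
                      (none :: enc s.2.reverse)
      | none => [])
  ++ [.popT (.bst 0) .bot [none] none .fin]

def tdM [Semiring A] : WEPDA (TDSt Q N T Γ) (TDLab N Γ) T (Option Γ) A :=
  ⟨transOf M, fun _ => 1, .start, [(.s0, [none])], .fin, []⟩

----------------------------------------------------------------
-- Top-down property
----------------------------------------------------------------

/-- The shape predicate of top-down transitions (with `S := none`). -/
def TDShape (t : TD Q N T Γ) : Prop :=
  (∃ p X A' a q Ψ Y β Ψ',
    t = ETrans.repl p X [A'] a q Ψ Y β Ψ' ∧
    (∀ x ∈ Ψ, (x : TDLab N Γ × List (Option Γ)).2 = [(none : Option Γ)]) ∧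
    (∀ x ∈ Ψ', (x : TDLab N Γ × List (Option Γ)).2 = [(none : Option Γ)])) ∨
  (∃ p X A' a q, t = ETrans.popT p X [A'] a q)

lemma lazyL_snd {Ψ : List (N × List Γ)} {x} (hx : x ∈ lazyL Ψ) :
    x.2 = [(none : Option Γ)] := by
  rcases List.mem_map.1 hx with ⟨s, _, rfl⟩
  rfl

lemma popSeq_shape {lab : TDLab N Γ} {nm : List (Option Γ) → TDSt Q N T Γ}
    {dst a} : ∀ l, ∀ t ∈ popSeq lab nm dst a l, TDShape t := by
  intro l
  induction l with
  | nil =>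
    intro t ht
    rcases List.mem_singleton.1 ht with rfl
    exact Or.inr ⟨_, _, _, _, _, rfl⟩
  | cons x l ih =>
    intro t ht
    rcases List.mem_cons.1 ht with rfl | h
    · exact Or.inl ⟨_, _, _, _, _, _, _, _, _, rfl, by simp, by simp⟩
    · exact ih t h

lemma replSeq_shape {lab : TDLab N Γ} {nm : List (Option Γ) → TDSt Q N T Γ}
    {a : Option T} {q : Q} {Ψ : List (N × List Γ)} {Y β'} {Ψ' : List (N × List Γ)} :
    ∀ l, ∀ t ∈ replSeq lab nm a q Ψ Y β' Ψ' l, TDShape t := by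
  intro l
  induction l with
  | nil => intro t ht; simp [replSeq] at ht
  | cons x l ih =>
    cases l with
    | nil =>
      intro t ht
      rcases List.mem_singleton.1 ht with rfl
      exact Or.inl ⟨_, _, _, _, _, _, _, _, _, rfl,
        fun z hz => lazyL_snd hz, fun z hz => lazyL_snd hz⟩
    | cons y l' =>
      intro t ht
      rcases List.mem_cons.1 ht with rfl | h
      · exact Or.inl ⟨_, _, _, _, _, _, _, _, _, rfl, by simp, by simp⟩
      · exact ih t h

lemma tdM_isTopDown [Semiring A] : (tdM M).IsTopDown := by
  refine ⟨none, .s0, rfl, rfl, ?_⟩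
  intro t ht
  show TDShape t
  simp only [tdM, transOf, List.mem_append, List.mem_flatMap, List.mem_cons,
    List.mem_map, List.mem_singleton] at ht
  rcases ht with ((((h | h) | h) | h) | h) | h
  · rcases h with rfl | h
    · exact Or.inl ⟨_, _, _, _, _, _, _, _, _, rfl, by simp,
        fun z hz => lazyL_snd hz⟩
    · simp at h
  · rcases h with ⟨t0, _, hm⟩
    cases t0 with
    | repl p X β a q Ψ Y β' Ψ' => exact replSeq_shape _ _ hm
    | popT p X β a q => exact popSeq_shape _ _ hm
  · rcases h with ⟨p, _, s, _, rfl⟩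
    exact Or.inl ⟨_, _, _, _, _, _, _, _, _, rfl, by simp, by simp⟩
  · rcases h with rfl | ⟨s, _, (rfl | h)⟩
    · exact Or.inl ⟨_, _, _, _, _, _, _, _, _, rfl, by simp, by simp⟩
    · exact Or.inl ⟨_, _, _, _, _, _, _, _, _, rfl, by simp, by simp⟩
    · rcases h with rfl | h
      · exact Or.inl ⟨_, _, _, _, _, _, _, _, _, rfl, by simp, by simp⟩
      · simp at h
  · rcases h with ⟨k, _, hm⟩
    cases hk : M.stackFin[k]? with
    | none => rw [hk] at hm; simp at hm
    | some s =>
      rw [hk] at hm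
      rcases List.mem_cons.1 hm with rfl | hm
      · exact Or.inr ⟨_, _, _, _, _, rfl⟩
      · exact popSeq_shape _ _ hm
  · rcases h with rfl | h
    · exact Or.inr ⟨_, _, _, _, _, rfl⟩
    · simp at h

----------------------------------------------------------------
-- Generic run lemmas
----------------------------------------------------------------

open WEPDA

section RunLemmas

variable {Q' N' Γ' : Type} {M' : WEPDA Q' N' T Γ' A}

lemma run_trans : ∀ {c d w}, Run M' c d w → ∀ {e w'},
    Nonempty (Run M' d e w') → Nonempty (Run M' c e (w ++ w')) := by
  intro c d w r
  induction r with
  | refl c =>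
    intro e w' s
    simpa using s
  | repl Φ σ p X β a q Ψ Y β' Ψ' ht r ih =>
    intro e w' s
    obtain ⟨u⟩ := ih s
    rw [List.append_assoc]
    exact ⟨.repl _ _ _ _ _ _ _ _ _ _ _ ht u⟩
  | popT Φ p X β a q ht r ih =>
    intro e w' s
    obtain ⟨u⟩ := ih s
    rw [List.append_assoc]
    exact ⟨.popT _ _ _ _ _ _ ht u⟩

lemma nrun_repl {p X β a q Ψ Y β' Ψ'}
    (ht : ETrans.repl p X β a q Ψ Y β' Ψ' ∈ M'.trans)
    {c w} (Φ : List (N' × List Γ')) (σ : List Γ')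
    (r : Nonempty (Run M' (q, Φ ++ Ψ ++ [(Y, σ ++ β')] ++ Ψ') c w)) :
    Nonempty (Run M' (p, Φ ++ [(X, σ ++ β)]) c (a.toList ++ w)) := by
  obtain ⟨u⟩ := r
  exact ⟨.repl _ _ _ _ _ _ _ _ _ _ _ ht u⟩

lemma nrun_popT {p X β a q} (ht : ETrans.popT p X β a q ∈ M'.trans)
    {c w} (Φ : List (N' × List Γ'))
    (r : Nonempty (Run M' (q, Φ) c w)) :
    Nonempty (Run M' (p, Φ ++ [(X, β)]) c (a.toList ++ w)) := by
  obtain ⟨u⟩ := r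
  exact ⟨.popT _ _ _ _ _ _ ht u⟩

end RunLemmas

----------------------------------------------------------------
-- Encoding of configurations
----------------------------------------------------------------

def EncI (L : List (N × List Γ)) (s : N × List Γ)
    (y : TDLab N Γ × List (Option Γ)) : Prop :=
  y = actE s ∨ (s ∈ L ∧ y = lazyE s)

def Enc (L : List (N × List Γ)) (Φ : List (N × List Γ))
    (Φ' : List (TDLab N Γ × List (Option Γ))) : Prop :=
  List.Forall₂ (EncI L) Φ Φ'

lemma Enc.nil {L : List (N × List Γ)} : Enc L [] [] := List.Forall₂.nil

lemma enc_lazyL {L Ψ : List (N × List Γ)} (hΨ : ∀ s ∈ Ψ, s ∈ L) :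
    Enc L Ψ (lazyL Ψ) := by
  induction Ψ with
  | nil => exact Enc.nil
  | cons s Ψ ih =>
    exact List.Forall₂.cons (Or.inr ⟨hΨ s (by simp), rfl⟩)
      (ih fun z hz => hΨ z (by simp [hz]))

lemma Enc.append {L} {Φ₁ Φ₂ : List (N × List Γ)} {Φ₁' Φ₂'}
    (h₁ : Enc L Φ₁ Φ₁') (h₂ : Enc L Φ₂ Φ₂') : Enc L (Φ₁ ++ Φ₂) (Φ₁' ++ Φ₂') :=
  List.rel_append h₁ h₂

lemma enc_concat_left {L} {Φ₀ : List (N × List Γ)} {s Φ'}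
    (h : Enc L (Φ₀ ++ [s]) Φ') :
    ∃ Φ₀' y, Φ' = Φ₀' ++ [y] ∧ Enc L Φ₀ Φ₀' ∧ EncI L s y := by
  induction Φ₀ generalizing Φ' with
  | nil =>
    rcases h with _ | ⟨hy, h2⟩
    rcases h2 with _ | _
    exact ⟨[], _, rfl, Enc.nil, hy⟩
  | cons s₀ Φ₀ ih =>
    rcases h with _ | ⟨hy, h2⟩
    obtain ⟨Φ₀', y, rfl, hE, hI⟩ := ih h2
    exact ⟨_ :: Φ₀', y, rfl, List.Forall₂.cons hy hE, hI⟩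

lemma enc_concat_right {L} {Φ : List (N × List Γ)} {Φ₀' y}
    (h : Enc L Φ (Φ₀' ++ [y])) :
    ∃ Φ₀ s, Φ = Φ₀ ++ [s] ∧ Enc L Φ₀ Φ₀' ∧ EncI L s y := by
  induction Φ₀' generalizing Φ with
  | nil =>
    rcases h with _ | ⟨hy, h2⟩
    rcases h2 with _ | _
    exact ⟨[], _, rfl, Enc.nil, hy⟩
  | cons y₀ Φ₀' ih =>
    rcases h with _ | ⟨hy, h2⟩
    obtain ⟨Φ₀, s, rfl, hE, hI⟩ := ih h2
    exact ⟨_ :: Φ₀, s, rfl, List.Forall₂.cons hy hE, hI⟩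

lemma enc_nil_right {L} {Φ : List (N × List Γ)} (h : Enc L Φ []) : Φ = [] := by
  cases h; rfl

lemma enc_nil_left {L} {Φ'} (h : Enc L ([] : List (N × List Γ)) Φ') : Φ' = [] := by
  cases h; rfl

----------------------------------------------------------------
-- Membership helpers for `transOf`
----------------------------------------------------------------

variable [Semiring A]

lemma mem_lazySet_init {s : N × List Γ} (hs : s ∈ M.stackInit) : s ∈ lazySet M :=
  List.mem_append_left _ hs

lemma mem_lazySet_repl {p X β a q Ψ Y β' Ψ'}
    (ht : ETrans.repl p X β a q Ψ Y β' Ψ' ∈ M.trans) {s : N × List Γ}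
    (hs : s ∈ Ψ ++ Ψ') : s ∈ lazySet M := by
  refine List.mem_append_right _ (List.mem_flatMap.2 ⟨_, ht, ?_⟩)
  exact hs

lemma mem_stSet_of_statesOf {t : ETrans Q N T Γ} (ht : t ∈ M.trans) {p : Q}
    (hp : p ∈ statesOf t) : p ∈ stSet M := by
  simp only [stSet, List.mem_cons]
  exact Or.inr (Or.inr (List.mem_flatMap.2 ⟨t, ht, hp⟩))

lemma mem_transOf_init :
    (ETrans.repl .start .s0 [none] none (.orig M.qInit) [] .bot [none]
      (lazyL M.stackInit) : TD Q N T Γ) ∈ (tdM M).trans :=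
  List.mem_append_left _ (List.mem_append_left _ (List.mem_append_left _
    (List.mem_append_left _ (List.mem_append_left _ (by simp)))))

lemma mem_transOf_macro {t : ETrans Q N T Γ} (ht : t ∈ M.trans) {tr}
    (h : tr ∈ macroOf t) : tr ∈ (tdM M).trans :=
  List.mem_append_left _ (List.mem_append_left _ (List.mem_append_left _
    (List.mem_append_left _ (List.mem_append_right _
      (List.mem_flatMap.2 ⟨t, ht, h⟩)))))

lemma mem_transOf_unpack {p : Q} (hp : p ∈ stSet M) {s : N × List Γ}
    (hs : s ∈ lazySet M) :
    (ETrans.repl (.orig p) (.laz s.1 s.2) [none] none (.orig p) [] (.act s.1)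
      (none :: (enc s.2 ++ [none])) [] : TD Q N T Γ) ∈ (tdM M).trans :=
  List.mem_append_left _ (List.mem_append_left _ (List.mem_append_left _
    (List.mem_append_right _
      (List.mem_flatMap.2 ⟨p, hp, List.mem_map.2 ⟨s, hs, rfl⟩⟩))))

lemma mem_transOf_entry_bot :
    (ETrans.repl (.orig M.qFin) .bot [none] none (.bst M.stackFin.length) [] .bot
      [none] [] : TD Q N T Γ) ∈ (tdM M).trans :=
  List.mem_append_left _ (List.mem_append_left _ (List.mem_append_right _
    (List.mem_cons_self)))

lemma mem_transOf_entry_laz {s : N × List Γ} (hs : s ∈ M.stackFin) :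
    (ETrans.repl (.orig M.qFin) (.laz s.1 s.2) [none] none (.bst M.stackFin.length)
      [] (.laz s.1 s.2) [none] [] : TD Q N T Γ) ∈ (tdM M).trans :=
  List.mem_append_left _ (List.mem_append_left _ (List.mem_append_right _
    (List.mem_cons_of_mem _ (List.mem_flatMap.2 ⟨s, hs, by simp⟩))))

lemma mem_transOf_entry_act {s : N × List Γ} (hs : s ∈ M.stackFin) :
    (ETrans.repl (.orig M.qFin) (.act s.1) [none] none (.bst M.stackFin.length)
      [] (.act s.1) [none] [] : TD Q N T Γ) ∈ (tdM M).trans :=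
  List.mem_append_left _ (List.mem_append_left _ (List.mem_append_right _
    (List.mem_cons_of_mem _ (List.mem_flatMap.2 ⟨s, hs, by simp⟩))))

lemma mem_transOf_clean_laz {k : ℕ} {s : N × List Γ}
    (hk : M.stackFin[k]? = some s) :
    (ETrans.popT (.bst (k + 1)) (.laz s.1 s.2) [none] none (.bst k) : TD Q N T Γ) ∈
      (tdM M).trans := by
  refine List.mem_append_left _ (List.mem_append_right _ ?_)
  refine List.mem_flatMap.2 ⟨k, List.mem_range.2 (List.getElem?_eq_some_iff.1 hk).1, ?_⟩
  rw [hk]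
  exact List.mem_cons_self

lemma mem_transOf_clean_pop {k : ℕ} {s : N × List Γ}
    (hk : M.stackFin[k]? = some s) {tr}
    (h : tr ∈ popSeq (.act s.1) (nmCl (k + 1) (s.2.length + 1)) (.bst k) none
      (none :: enc s.2.reverse)) : tr ∈ (tdM M).trans := by
  refine List.mem_append_left _ (List.mem_append_right _ ?_)
  refine List.mem_flatMap.2 ⟨k, List.mem_range.2 (List.getElem?_eq_some_iff.1 hk).1, ?_⟩
  rw [hk]
  exact List.mem_cons_of_mem _ h

lemma mem_transOf_bst0 :
    (ETrans.popT (.bst 0) .bot [none] none .fin : TD Q N T Γ) ∈ (tdM M).trans :=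
  List.mem_append_right _ (by simp)

----------------------------------------------------------------
-- Forward simulation
----------------------------------------------------------------

lemma popSeq_run {M' : WEPDA (TDSt Q N T Γ) (TDLab N Γ) T (Option Γ) A}
    {lab : TDLab N Γ} {nm dst} {a : Option T} :
    ∀ l, (∀ tr ∈ popSeq lab nm dst a l, tr ∈ M'.trans) → ∀ Φb,
      Nonempty (Run M' (nm l, Φb ++ [(lab, none :: l.reverse)]) (dst, Φb)
        a.toList) := by
  intro l
  induction l with
  | nil =>
    intro hsub Φb
    have hm : (ETrans.popT (nm []) lab [none] a dst : TD Q N T Γ) ∈ M'.trans :=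
      hsub _ (by simp [popSeq])
    have step := nrun_popT hm Φb ⟨.refl _⟩
    simpa using step
  | cons x l ih =>
    intro hsub Φb
    have hm : (ETrans.repl (nm (x :: l)) lab [x] none (nm l) [] lab [] [] :
        TD Q N T Γ) ∈ M'.trans := hsub _ (by simp [popSeq])
    have step := nrun_repl hm Φb (none :: l.reverse)
      (by simpa using ih (fun tr h => hsub tr (List.mem_cons_of_mem _ h)) Φb)
    simpa using step

lemma replSeq_run {M' : WEPDA (TDSt Q N T Γ) (TDLab N Γ) T (Option Γ) A}
    {lab : TDLab N Γ} {nm} {a : Option T} {q : Q} {Ψ : List (N × List Γ)}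
    {Y : N} {β' : List Γ} {Ψ' : List (N × List Γ)} :
    ∀ l, l ≠ [] → (∀ tr ∈ replSeq lab nm a q Ψ Y β' Ψ' l, tr ∈ M'.trans) →
      ∀ Φb (ρ : List (Option Γ)),
      Nonempty (Run M' (nm l, Φb ++ [(lab, ρ ++ l.reverse)])
        (.orig q, Φb ++ lazyL Ψ ++ [(.act Y, ρ ++ (enc β' ++ [none]))] ++ lazyL Ψ')
        a.toList) := by
  intro l
  induction l with
  | nil => intro h; exact absurd rfl h
  | cons x l ih =>
    cases l with
    | nil =>
      intro _ hsub Φb ρ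
      have hm : (ETrans.repl (nm [x]) lab [x] a (.orig q) (lazyL Ψ) (.act Y)
          (enc β' ++ [none]) (lazyL Ψ') : TD Q N T Γ) ∈ M'.trans :=
        hsub _ (by simp [replSeq])
      have step := nrun_repl hm Φb ρ ⟨.refl _⟩
      simpa using step
    | cons y l' =>
      intro _ hsub Φb ρ
      have hm : (ETrans.repl (nm (x :: y :: l')) lab [x] none (nm (y :: l')) []
          lab [] [] : TD Q N T Γ) ∈ M'.trans := hsub _ (by simp [replSeq])
      have hne : (y :: l') ≠ [] := by simp
      have hsub' : ∀ tr ∈ replSeq lab nm a q Ψ Y β' Ψ' (y :: l'), tr ∈ M'.trans :=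
        fun tr h => hsub tr (List.mem_cons_of_mem _ h)
      have step := nrun_repl hm Φb (ρ ++ (y :: l').reverse)
        (by simpa using ih hne hsub' Φb ρ)
      simpa using step

lemma nmMac_full {t : ETrans Q N T Γ} {p : Q} {β : List Γ} :
    nmMac t p (β.length + 1) (none :: enc β.reverse) = .orig p := by
  simp [nmMac, enc]

lemma macro_repl_run {p X β a q Ψ Y β' Ψ'}
    (ht : ETrans.repl p X β a q Ψ Y β' Ψ' ∈ M.trans) (Φb : _) (σ : List Γ) :
    Nonempty (Run (tdM M) (.orig p, Φb ++ [(.act X, none :: (enc (σ ++ β) ++ [none]))])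
      (.orig q, Φb ++ lazyL Ψ ++ [(.act Y, none :: (enc (σ ++ β') ++ [none]))] ++ lazyL Ψ')
      a.toList) := by
  have h := replSeq_run (M' := tdM M) (lab := .act X)
    (nm := nmMac (.repl p X β a q Ψ Y β' Ψ') p (β.length + 1)) (a := a) (q := q)
    (Ψ := Ψ) (Y := Y) (β' := β') (Ψ' := Ψ')
    (none :: enc β.reverse) (by simp)
    (fun tr h => mem_transOf_macro M ht (by simpa [macroOf] using h))
    Φb (none :: enc σ)
  rw [nmMac_full] at h
  have e1 : (none :: enc σ : List (Option Γ)) ++ (none :: enc β.reverse).reverse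
      = none :: (enc (σ ++ β) ++ [none]) := by
    simp [enc]
  have e2 : (none :: enc σ : List (Option Γ)) ++ (enc β' ++ [none])
      = none :: (enc (σ ++ β') ++ [none]) := by
    simp [enc]
  rw [e1, e2] at h
  exact h

lemma macro_popT_run {p X β a q}
    (ht : ETrans.popT p X β a q ∈ M.trans) (Φb : _) :
    Nonempty (Run (tdM M) (.orig p, Φb ++ [(.act X, none :: (enc β ++ [none]))])
      (.orig q, Φb) a.toList) := by
  have h := popSeq_run (M' := tdM M) (lab := .act X)
    (nm := nmMac (.popT p X β a q) p (β.length + 1)) (dst := .orig q) (a := a)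
    (none :: enc β.reverse)
    (fun tr h => mem_transOf_macro M ht (by simpa [macroOf] using h))
    Φb
  rw [nmMac_full] at h
  have e1 : (none : Option Γ) :: (none :: enc β.reverse).reverse
      = none :: (enc β ++ [none]) := by
    simp [enc]
  rw [e1] at h
  exact h

lemma nmCl_full {i : ℕ} {γ : List Γ} :
    nmCl (i) (γ.length + 1) (none :: enc γ.reverse) = (.bst i : TDSt Q N T Γ) := by
  simp [nmCl, enc]

lemma cst_run {k : ℕ} {s : N × List Γ} (hk : M.stackFin[k]? = some s) (Φb : _) :
    Nonempty (Run (tdM M) (.bst (k + 1), Φb ++ [(.act s.1, none :: (enc s.2 ++ [none]))])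
      (.bst k, Φb) ([] : List T)) := by
  have h := popSeq_run (M' := tdM M) (lab := .act s.1)
    (nm := nmCl (k + 1) (s.2.length + 1)) (dst := .bst k) (a := none)
    (none :: enc s.2.reverse)
    (fun tr h => mem_transOf_clean_pop M hk h) Φb
  rw [nmCl_full] at h
  have e1 : (none : Option Γ) :: (none :: enc s.2.reverse).reverse
      = none :: (enc s.2 ++ [none]) := by
    simp [enc]
  rw [e1] at h
  exact h

lemma bst_run : ∀ i, i ≤ M.stackFin.length → ∀ Φ Φ', Φ = M.stackFin.take i →
    Enc (lazySet M) Φ Φ' →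
    Nonempty (Run (tdM M) (.bst i, (.bot, [(none : Option Γ)]) :: Φ') (.fin, [])
      ([] : List T)) := by
  intro i
  induction i with
  | zero =>
    intro _ Φ Φ' hΦ hE
    subst hΦ
    have : Φ' = [] := enc_nil_left (by simpa using hE)
    subst this
    have step := nrun_popT (mem_transOf_bst0 M) [] ⟨.refl _⟩
    simpa using step
  | succ i ih =>
    intro hle Φ Φ' hΦ hE
    subst hΦ
    have hk' : M.stackFin[i]? = some (M.stackFin[i]'(by omega)) :=
      List.getElem?_eq_getElem (by omega)
    have hk : M.stackFin[i]? = some (M.stackFin[i]'(by omega)) := by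
      exact hk'
    rw [List.take_succ, hk'] at hE
    rw [Option.toList_some] at hE
    obtain ⟨Φ₀', y, rfl, hE₀, hI⟩ := enc_concat_left hE
    rcases hI with rfl | ⟨_, rfl⟩
    · have h1 := cst_run M hk ((.bot, [(none : Option Γ)]) :: Φ₀')
      have h2 := ih (by omega) _ Φ₀' rfl hE₀
      have := run_trans h1.some h2
      simpa [actE] using this
    · have step := nrun_popT (mem_transOf_clean_laz M hk)
        ((.bot, [(none : Option Γ)]) :: Φ₀') (ih (by omega) _ Φ₀' rfl hE₀)
      simpa [lazyE] using step

lemma cleanup_run : ∀ Φ', Enc (lazySet M) M.stackFin Φ' →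
    Nonempty (Run (tdM M) (.orig M.qFin, (.bot, [(none : Option Γ)]) :: Φ')
      (.fin, []) ([] : List T)) := by
  intro Φ' hE
  rcases List.eq_nil_or_concat M.stackFin with h0 | ⟨Φ₀, s, hcat⟩
  · rw [h0] at hE
    have : Φ' = [] := enc_nil_left hE
    subst this
    have hb := bst_run M 0 (by simp) [] [] (by simp [h0]) Enc.nil
    have step := nrun_repl (mem_transOf_entry_bot M) (c := (.fin, [])) [] []
      (by simpa [h0] using hb)
    simpa using step
  · rw [List.concat_eq_append] at hcat
    have hmem : s ∈ M.stackFin := by rw [hcat]; simp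
    rw [hcat] at hE
    obtain ⟨Φ₀', y, rfl, hE₀, hI⟩ := enc_concat_left hE
    have hbst : Nonempty (Run (tdM M)
        (.bst M.stackFin.length, (.bot, [(none : Option Γ)]) :: (Φ₀' ++ [y]))
        (.fin, []) ([] : List T)) := by
      refine bst_run M _ le_rfl _ _ List.take_length.symm ?_
      rw [hcat]
      exact Enc.append hE₀ (List.Forall₂.cons hI List.Forall₂.nil)
    rcases hI with rfl | ⟨_, rfl⟩
    · have step := nrun_repl (mem_transOf_entry_act M hmem)
        ((.bot, [(none : Option Γ)]) :: Φ₀') (none :: enc s.2)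
        (by simpa [actE] using hbst)
      simpa [actE] using step
    · have step := nrun_repl (mem_transOf_entry_laz M hmem)
        ((.bot, [(none : Option Γ)]) :: Φ₀') []
        (by simpa [lazyE] using hbst)
      simpa [lazyE] using step

lemma fwd : ∀ {c d w}, Run M c d w → d = (M.qFin, M.stackFin) → ∀ Φ',
    Enc (lazySet M) c.2 Φ' →
    Nonempty (Run (tdM M) (.orig c.1, (.bot, [(none : Option Γ)]) :: Φ')
      (.fin, []) w) := by
  intro c d w r
  induction r with
  | refl c =>
    intro hd Φ' hE
    subst hd
    exact cleanup_run M Φ' hE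
  | repl Φ σ p X β a q Ψ Y β' Ψ' ht r ih =>
    rename_i c' w'
    intro hd Φ' hE
    obtain ⟨Φ₀', y, rfl, hE₀, hI⟩ := enc_concat_left (Φ₀ := Φ) hE
    have key : Nonempty (Run (tdM M)
        (.orig p, (.bot, [(none : Option Γ)]) :: (Φ₀' ++ [actE (X, σ ++ β)]))
        (.fin, []) (a.toList ++ w')) := by
      have h1 := macro_repl_run M ht ((.bot, [(none : Option Γ)]) :: Φ₀') σ
      have hpost : Enc (lazySet M) (Φ ++ Ψ ++ [(Y, σ ++ β')] ++ Ψ')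
          (Φ₀' ++ lazyL Ψ ++ [actE (Y, σ ++ β')] ++ lazyL Ψ') := by
        refine Enc.append (Enc.append (Enc.append hE₀ ?_) ?_) ?_
        · exact enc_lazyL fun z hz => mem_lazySet_repl M ht (by simp [hz])
        · exact List.Forall₂.cons (Or.inl rfl) List.Forall₂.nil
        · exact enc_lazyL fun z hz => mem_lazySet_repl M ht (by simp [hz])
      have h2 := ih hd _ hpost
      have := run_trans h1.some h2
      simpa [actE] using this
    rcases hI with rfl | ⟨hmem, rfl⟩
    · exact key
    · have step := nrun_repl
        (mem_transOf_unpack M (p := p)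
          (mem_stSet_of_statesOf M ht (by simp [statesOf])) hmem)
        ((.bot, [(none : Option Γ)]) :: Φ₀') []
        (by simpa [actE] using key)
      simpa [lazyE] using step
  | popT Φ p X β a q ht r ih =>
    rename_i c' w'
    intro hd Φ' hE
    obtain ⟨Φ₀', y, rfl, hE₀, hI⟩ := enc_concat_left (Φ₀ := Φ) hE
    have key : Nonempty (Run (tdM M)
        (.orig p, (.bot, [(none : Option Γ)]) :: (Φ₀' ++ [actE (X, β)]))
        (.fin, []) (a.toList ++ w')) := by
      have h1 := macro_popT_run M ht ((.bot, [(none : Option Γ)]) :: Φ₀')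
      have h2 := ih hd _ hE₀
      have := run_trans h1.some h2
      simpa [actE] using this
    rcases hI with rfl | ⟨hmem, rfl⟩
    · exact key
    · have step := nrun_repl
        (mem_transOf_unpack M (p := p)
          (mem_stSet_of_statesOf M ht (by simp [statesOf])) hmem)
        ((.bot, [(none : Option Γ)]) :: Φ₀') []
        (by simpa [actE] using key)
      simpa [lazyE] using step

lemma fwd_main {w} (r : Nonempty (Run M (M.qInit, M.stackInit) (M.qFin, M.stackFin) w)) :
    Nonempty (Run (tdM M) ((tdM M).qInit, (tdM M).stackInit)
      ((tdM M).qFin, (tdM M).stackFin) w) := by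
  have hr := fwd M r.some rfl (lazyL M.stackInit)
    (enc_lazyL fun z hz => mem_lazySet_init M hz)
  have step := nrun_repl (mem_transOf_init M) (c := (.fin, [])) [] []
    (by simpa using hr)
  simpa [tdM] using step

----------------------------------------------------------------
-- Backward direction: helper lemmas
----------------------------------------------------------------

lemma cons_eq_append_singleton {α : Type _} {a x : α} {Φ' Φs : List α}
    (h : a :: Φ' = Φs ++ [x]) :
    (Φ' = [] ∧ Φs = [] ∧ x = a) ∨ ∃ Φ₀', Φ' = Φ₀' ++ [x] ∧ Φs = a :: Φ₀' := by
  rcases List.eq_nil_or_concat Φ' with rfl | ⟨Φ₀', y, hy⟩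
  · have hlen := congrArg List.length h
    simp only [List.length_cons, List.length_nil, List.length_append,
      List.length_singleton] at hlen
    have hΦs : Φs = [] := List.eq_nil_of_length_eq_zero (by omega)
    subst hΦs
    simp only [List.nil_append, List.cons.injEq] at h
    exact Or.inl ⟨rfl, rfl, h.1.symm⟩
  · rw [List.concat_eq_append] at hy
    subst hy
    have h' : (a :: Φ₀') ++ [y] = Φs ++ [x] := by simpa using h
    obtain ⟨h1, h2⟩ := List.append_inj' h' rfl
    simp only [List.cons.injEq, and_true] at h2
    exact Or.inr ⟨Φ₀', by rw [h2], h1.symm⟩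

lemma enc_inj : ∀ {δ δ' : List Γ}, enc δ = enc δ' → δ = δ' := by
  intro δ
  induction δ with
  | nil => intro δ' h; cases δ' <;> simp [enc] at h ⊢
  | cons a δ ih =>
    intro δ' h
    cases δ' with
    | nil => simp [enc] at h
    | cons b δ' =>
      simp only [enc, List.map_cons, List.cons.injEq, Option.some.injEq] at h
      simp only [List.cons.injEq]
      exact ⟨h.1, ih h.2⟩

lemma enc_snoc_eq {δ : List Γ} {σs : List (Option Γ)} {x : Option Γ}
    (h : (none : Option Γ) :: enc δ = σs ++ [x]) :
    (δ = [] ∧ σs = [] ∧ x = none) ∨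
    ∃ δ' b, δ = δ' ++ [b] ∧ σs = none :: enc δ' ∧ x = some b := by
  rcases List.eq_nil_or_concat δ with rfl | ⟨δ', b, hδ⟩
  · have h0 : (none : Option Γ) :: ([] : List (Option Γ)) = σs ++ [x] := by
      simpa [enc] using h
    rcases cons_eq_append_singleton h0 with ⟨_, h2, h3⟩ | ⟨Φ₀', h1, _⟩
    · exact Or.inl ⟨rfl, h2, h3⟩
    · exact absurd (congrArg List.length h1) (by simp)
  · rw [List.concat_eq_append] at hδ
    subst hδ
    have h' : ((none : Option Γ) :: enc δ') ++ [some b] = σs ++ [x] := by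
      simpa [enc] using h
    obtain ⟨h1, h2⟩ := List.append_inj' h' rfl
    simp only [List.cons.injEq] at h2
    exact Or.inr ⟨δ', b, rfl, h1.symm, h2.1.symm⟩

lemma popSeq_mem {lab : TDLab N Γ} {nm : List (Option Γ) → TDSt Q N T Γ} {dst a} :
    ∀ {l} {tr : TD Q N T Γ}, tr ∈ popSeq lab nm dst a l →
    ∃ l', l' <:+ l ∧
      ((∃ x l'', l' = x :: l'' ∧
          tr = .repl (nm l') lab [x] none (nm l'') [] lab [] []) ∨
       (l' = [] ∧ tr = .popT (nm []) lab [none] a dst)) := by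
  intro l
  induction l with
  | nil =>
    intro tr htr
    rcases List.mem_singleton.1 htr with rfl
    exact ⟨[], List.suffix_rfl, Or.inr ⟨rfl, rfl⟩⟩
  | cons x l ih =>
    intro tr htr
    rcases List.mem_cons.1 htr with rfl | htr
    · exact ⟨x :: l, List.suffix_rfl, Or.inl ⟨x, l, rfl, rfl⟩⟩
    · obtain ⟨l', hsuf, hc⟩ := ih htr
      exact ⟨l', hsuf.trans (List.suffix_cons x l), hc⟩

lemma replSeq_mem {lab : TDLab N Γ} {nm : List (Option Γ) → TDSt Q N T Γ}
    {a : Option T} {q : Q} {Ψ : List (N × List Γ)} {Y β'} {Ψ' : List (N × List Γ)} :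
    ∀ {l} {tr : TD Q N T Γ}, tr ∈ replSeq lab nm a q Ψ Y β' Ψ' l →
    ∃ l', l' <:+ l ∧
      ((∃ x y l'', l' = x :: y :: l'' ∧
          tr = .repl (nm l') lab [x] none (nm (y :: l'')) [] lab [] []) ∨
       (∃ x, l' = [x] ∧
          tr = .repl (nm [x]) lab [x] a (.orig q) (lazyL Ψ) (.act Y)
            (enc β' ++ [none]) (lazyL Ψ'))) := by
  intro l
  induction l with
  | nil => intro tr htr; simp [replSeq] at htr
  | cons x l ih =>
    cases l with
    | nil =>
      intro tr htr
      rcases List.mem_singleton.1 htr with rfl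
      exact ⟨[x], List.suffix_rfl, Or.inr ⟨x, rfl, rfl⟩⟩
    | cons y l' =>
      intro tr htr
      rcases List.mem_cons.1 htr with rfl | htr
      · exact ⟨x :: y :: l', List.suffix_rfl, Or.inl ⟨x, y, l', rfl, rfl⟩⟩
      · obtain ⟨l'', hsuf, hc⟩ := ih htr
        exact ⟨l'', hsuf.trans (List.suffix_cons x (y :: l')), hc⟩

lemma transOf_mem {tr : TD Q N T Γ} (h : tr ∈ transOf M) :
    tr = .repl .start .s0 [none] none (.orig M.qInit) [] .bot [none]
        (lazyL M.stackInit) ∨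
    (∃ t ∈ M.trans, tr ∈ macroOf t) ∨
    (∃ p ∈ stSet M, ∃ s ∈ lazySet M,
      tr = .repl (.orig p) (.laz s.1 s.2) [none] none (.orig p) [] (.act s.1)
        (none :: (enc s.2 ++ [none])) []) ∨
    tr = .repl (.orig M.qFin) .bot [none] none (.bst M.stackFin.length) [] .bot
        [none] [] ∨
    (∃ s ∈ M.stackFin,
      tr = .repl (.orig M.qFin) (.laz s.1 s.2) [none] none
          (.bst M.stackFin.length) [] (.laz s.1 s.2) [none] [] ∨
      tr = .repl (.orig M.qFin) (.act s.1) [none] none (.bst M.stackFin.length)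
          [] (.act s.1) [none] []) ∨
    (∃ k s, M.stackFin[k]? = some s ∧
      (tr = .popT (.bst (k + 1)) (.laz s.1 s.2) [none] none (.bst k) ∨
       tr ∈ popSeq (.act s.1) (nmCl (k + 1) (s.2.length + 1)) (.bst k) none
         (none :: enc s.2.reverse))) ∨
    tr = .popT (.bst 0) .bot [none] none .fin := by
  simp only [transOf, List.mem_append, List.mem_flatMap, List.mem_cons,
    List.mem_map, List.mem_singleton] at h
  rcases h with ((((h | h) | h) | h) | h) | h
  · rcases h with rfl | h
    · exact Or.inl rfl
    · simp at h
  · exact Or.inr (Or.inl (by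
      obtain ⟨t, ht, hm⟩ := h
      exact ⟨t, ht, hm⟩))
  · obtain ⟨p, hp, s, hs, rfl⟩ := h
    exact Or.inr (Or.inr (Or.inl ⟨p, hp, s, hs, rfl⟩))
  · rcases h with rfl | ⟨s, hs, hc⟩
    · exact Or.inr (Or.inr (Or.inr (Or.inl rfl)))
    · rcases hc with rfl | hc
      · exact Or.inr (Or.inr (Or.inr (Or.inr (Or.inl ⟨s, hs, Or.inl rfl⟩))))
      · rcases hc with rfl | hc
        · exact Or.inr (Or.inr (Or.inr (Or.inr (Or.inl ⟨s, hs, Or.inr rfl⟩))))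
        · simp at hc
  · obtain ⟨k, _, hm⟩ := h
    cases hk : M.stackFin[k]? with
    | none => rw [hk] at hm; simp at hm
    | some s =>
      rw [hk] at hm
      rcases List.mem_cons.1 hm with rfl | hm
      · exact Or.inr (Or.inr (Or.inr (Or.inr (Or.inr (Or.inl
          ⟨k, s, hk, Or.inl rfl⟩)))))
      · exact Or.inr (Or.inr (Or.inr (Or.inr (Or.inr (Or.inl
          ⟨k, s, hk, Or.inr hm⟩)))))
  · rcases h with rfl | h
    · exact Or.inr (Or.inr (Or.inr (Or.inr (Or.inr (Or.inr rfl)))))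
    · simp at h

----------------------------------------------------------------
-- Backward invariant
----------------------------------------------------------------

def GoalW (M : WEPDA Q N T Γ A) (c : Q × List (N × List Γ)) (w : List T) : Prop :=
  Nonempty (Run M c (M.qFin, M.stackFin) w)

structure BwdP (M : WEPDA Q N T Γ A)
    (D : TDSt Q N T Γ × List (TDLab N Γ × List (Option Γ))) (w : List T) : Prop where
  orig : ∀ p Φ' Φ, D = (.orig p, (.bot, [(none : Option Γ)]) :: Φ') →
    Enc (lazySet M) Φ Φ' → GoalW M (p, Φ) w
  midRepl : ∀ pp X β a q Ψ Y β' Ψ' l Φ₀' Φ₀ δ,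
    D = (.mid (ETrans.repl pp X β a q Ψ Y β' Ψ') l,
         (.bot, [(none : Option Γ)]) :: (Φ₀' ++ [(.act X, none :: enc δ)])) →
    ETrans.repl pp X β a q Ψ Y β' Ψ' ∈ M.trans → Enc (lazySet M) Φ₀ Φ₀' →
    ∃ w' σ, w = a.toList ++ w' ∧ enc δ = enc σ ++ l.reverse ∧
      GoalW M (q, Φ₀ ++ Ψ ++ [(Y, σ ++ β')] ++ Ψ') w'
  midPop : ∀ pp X β a q l Φ₀' Φ₀ δ,
    D = (.mid (ETrans.popT pp X β a q) l,
         (.bot, [(none : Option Γ)]) :: (Φ₀' ++ [(.act X, none :: enc δ)])) →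
    ETrans.popT pp X β a q ∈ M.trans → Enc (lazySet M) Φ₀ Φ₀' →
    ∃ w', w = a.toList ++ w' ∧ enc δ = l.reverse ∧ GoalW M (q, Φ₀) w'
  bstC : ∀ i Φ' Φ, D = (.bst i, (.bot, [(none : Option Γ)]) :: Φ') →
    Enc (lazySet M) Φ Φ' → w = [] ∧ Φ = M.stackFin.take i
  cstC : ∀ i l Φ₀' Φ₀ X δ,
    D = (.cst i l, (.bot, [(none : Option Γ)]) :: (Φ₀' ++ [(.act X, none :: enc δ)])) →
    Enc (lazySet M) Φ₀ Φ₀' →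
    w = [] ∧ enc δ = l.reverse ∧ Φ₀ = M.stackFin.take (i - 1)
  startC : D = (.start, [(.s0, [(none : Option Γ)])]) →
    GoalW M (M.qInit, M.stackInit) w
  finC : ∀ Δ, D = (.fin, Δ) → w = [] ∧ Δ = []

lemma bwdP_orig {M : WEPDA Q N T Γ A} {p st w}
    (h : ∀ Φ' Φ, st = (.bot, [(none : Option Γ)]) :: Φ' →
      Enc (lazySet M) Φ Φ' → GoalW M (p, Φ) w) :
    BwdP M (.orig p, st) w := by
  refine ⟨?_, ?_, ?_, ?_, ?_, ?_, ?_⟩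
  · intro p' Φ' Φ hD hE
    rw [Prod.mk.injEq] at hD
    obtain ⟨h1, h2⟩ := hD
    injection h1 with h1
    subst h1
    exact h Φ' Φ h2 hE
  · intro a1 a2 a3 a4 a5 a6 a7 a8 a9 a10 a11 a12 a13 hD
    exact absurd hD (by simp)
  · intro a1 a2 a3 a4 a5 a6 a7 a8 a9 hD
    exact absurd hD (by simp)
  · intro a1 a2 a3 hD
    exact absurd hD (by simp)
  · intro a1 a2 a3 a4 a5 a6 hD
    exact absurd hD (by simp)
  · intro hD
    exact absurd hD (by simp)
  · intro Δ hD
    exact absurd hD (by simp)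

lemma bwdP_midRepl {M : WEPDA Q N T Γ A} {pp X β a q Ψ Y β' Ψ' l st w}
    (h : ∀ Φ₀' Φ₀ δ,
      st = (.bot, [(none : Option Γ)]) :: (Φ₀' ++ [(.act X, none :: enc δ)]) →
      ETrans.repl pp X β a q Ψ Y β' Ψ' ∈ M.trans → Enc (lazySet M) Φ₀ Φ₀' →
      ∃ w' σ, w = a.toList ++ w' ∧ enc δ = enc σ ++ l.reverse ∧
        GoalW M (q, Φ₀ ++ Ψ ++ [(Y, σ ++ β')] ++ Ψ') w') :
    BwdP M (.mid (ETrans.repl pp X β a q Ψ Y β' Ψ') l, st) w := by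
  refine ⟨?_, ?_, ?_, ?_, ?_, ?_, ?_⟩
  · intro p' Φ' Φ hD hE
    exact absurd hD (by simp)
  · intro pp' X' β2 a' q' Ψ2 Y' β'2 Ψ'2 l' Φ₀' Φ₀ δ hD hM hE
    rw [Prod.mk.injEq] at hD
    obtain ⟨h1, h2⟩ := hD
    injection h1 with h1 h1l
    injection h1 with e1 e2 e3 e4 e5 e6 e7 e8 e9
    subst e1; subst e2; subst e3; subst e4; subst e5; subst e6; subst e7
    subst e8; subst e9; subst h1l
    exact h Φ₀' Φ₀ δ h2 hM hE
  · intro a1 a2 a3 a4 a5 a6 a7 a8 a9 hD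
    rw [Prod.mk.injEq] at hD
    obtain ⟨h1, -⟩ := hD
    injection h1 with h1 h1l
    exact nomatch h1
  · intro a1 a2 a3 hD
    exact absurd hD (by simp)
  · intro a1 a2 a3 a4 a5 a6 hD
    exact absurd hD (by simp)
  · intro hD
    exact absurd hD (by simp)
  · intro Δ hD
    exact absurd hD (by simp)

lemma bwdP_midPop {M : WEPDA Q N T Γ A} {pp X β a q l st w}
    (h : ∀ Φ₀' Φ₀ δ,
      st = (.bot, [(none : Option Γ)]) :: (Φ₀' ++ [(.act X, none :: enc δ)]) →
      ETrans.popT pp X β a q ∈ M.trans → Enc (lazySet M) Φ₀ Φ₀' →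
      ∃ w', w = a.toList ++ w' ∧ enc δ = l.reverse ∧ GoalW M (q, Φ₀) w') :
    BwdP M (.mid (ETrans.popT pp X β a q) l, st) w := by
  refine ⟨?_, ?_, ?_, ?_, ?_, ?_, ?_⟩
  · intro p' Φ' Φ hD hE
    exact absurd hD (by simp)
  · intro a1 a2 a3 a4 a5 a6 a7 a8 a9 a10 a11 a12 a13 hD hM hE
    rw [Prod.mk.injEq] at hD
    obtain ⟨h1, -⟩ := hD
    injection h1 with h1 h1l
    exact nomatch h1
  · intro pp' X' β2 a' q' l' Φ₀' Φ₀ δ hD hM hE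
    rw [Prod.mk.injEq] at hD
    obtain ⟨h1, h2⟩ := hD
    injection h1 with h1 h1l
    injection h1 with e1 e2 e3 e4 e5
    subst e1; subst e2; subst e3; subst e4; subst e5; subst h1l
    exact h Φ₀' Φ₀ δ h2 hM hE
  · intro a1 a2 a3 hD
    exact absurd hD (by simp)
  · intro a1 a2 a3 a4 a5 a6 hD
    exact absurd hD (by simp)
  · intro hD
    exact absurd hD (by simp)
  · intro Δ hD
    exact absurd hD (by simp)

lemma bwdP_bst {M : WEPDA Q N T Γ A} {i : ℕ} {st w}
    (h : ∀ Φ' Φ, st = (.bot, [(none : Option Γ)]) :: Φ' →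
      Enc (lazySet M) Φ Φ' → w = [] ∧ Φ = M.stackFin.take i) :
    BwdP M (.bst i, st) w := by
  refine ⟨?_, ?_, ?_, ?_, ?_, ?_, ?_⟩
  · intro p' Φ' Φ hD hE
    exact absurd hD (by simp)
  · intro a1 a2 a3 a4 a5 a6 a7 a8 a9 a10 a11 a12 a13 hD
    exact absurd hD (by simp)
  · intro a1 a2 a3 a4 a5 a6 a7 a8 a9 hD
    exact absurd hD (by simp)
  · intro i' Φ' Φ hD hE
    rw [Prod.mk.injEq] at hD
    obtain ⟨h1, h2⟩ := hD
    injection h1 with h1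
    subst h1
    exact h Φ' Φ h2 hE
  · intro a1 a2 a3 a4 a5 a6 hD
    exact absurd hD (by simp)
  · intro hD
    exact absurd hD (by simp)
  · intro Δ hD
    exact absurd hD (by simp)

lemma bwdP_cst {M : WEPDA Q N T Γ A} {i : ℕ} {l st w}
    (h : ∀ Φ₀' Φ₀ X δ,
      st = (.bot, [(none : Option Γ)]) :: (Φ₀' ++ [(.act X, none :: enc δ)]) →
      Enc (lazySet M) Φ₀ Φ₀' →
      w = [] ∧ enc δ = l.reverse ∧ Φ₀ = M.stackFin.take (i - 1)) :
    BwdP M (.cst i l, st) w := by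
  refine ⟨?_, ?_, ?_, ?_, ?_, ?_, ?_⟩
  · intro p' Φ' Φ hD hE
    exact absurd hD (by simp)
  · intro a1 a2 a3 a4 a5 a6 a7 a8 a9 a10 a11 a12 a13 hD
    exact absurd hD (by simp)
  · intro a1 a2 a3 a4 a5 a6 a7 a8 a9 hD
    exact absurd hD (by simp)
  · intro a1 a2 a3 hD
    exact absurd hD (by simp)
  · intro i' l' Φ₀' Φ₀ X δ hD hE
    rw [Prod.mk.injEq] at hD
    obtain ⟨h1, h2⟩ := hD
    injection h1 with h1 h1l
    subst h1; subst h1l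
    exact h Φ₀' Φ₀ X δ h2 hE
  · intro hD
    exact absurd hD (by simp)
  · intro Δ hD
    exact absurd hD (by simp)

lemma bwdP_start {M : WEPDA Q N T Γ A} {st w}
    (h : st = [(.s0, [(none : Option Γ)])] → GoalW M (M.qInit, M.stackInit) w) :
    BwdP M (.start, st) w := by
  refine ⟨?_, ?_, ?_, ?_, ?_, ?_, ?_⟩
  · intro p' Φ' Φ hD hE
    exact absurd hD (by simp)
  · intro a1 a2 a3 a4 a5 a6 a7 a8 a9 a10 a11 a12 a13 hD
    exact absurd hD (by simp)
  · intro a1 a2 a3 a4 a5 a6 a7 a8 a9 hD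
    exact absurd hD (by simp)
  · intro a1 a2 a3 hD
    exact absurd hD (by simp)
  · intro a1 a2 a3 a4 a5 a6 hD
    exact absurd hD (by simp)
  · intro hD
    rw [Prod.mk.injEq] at hD
    exact h hD.2
  · intro Δ hD
    exact absurd hD (by simp)

----------------------------------------------------------------
-- Stack-top extraction
----------------------------------------------------------------

lemma stack_top_act {L Φ : List (N × List Γ)} {Φ' Φs} {X : N}
    {cont : List (Option Γ)}
    (hst : (TDLab.bot, [(none : Option Γ)]) :: Φ' = Φs ++ [(TDLab.act X, cont)])
    (hE : Enc L Φ Φ') :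
    ∃ Φ₀' Φ₀ sM, Φ' = Φ₀' ++ [((TDLab.act X : TDLab N Γ), cont)] ∧
      Φs = (TDLab.bot, [(none : Option Γ)]) :: Φ₀' ∧ Φ = Φ₀ ++ [sM] ∧
      Enc L Φ₀ Φ₀' ∧ sM.1 = X ∧
      (none : Option Γ) :: (enc sM.2 ++ [none]) = cont := by
  rcases cons_eq_append_singleton hst with ⟨h1, h2, h3⟩ | ⟨Φ₀', h1, h2⟩
  · exfalso
    rw [Prod.mk.injEq] at h3
    exact nomatch h3.1
  · subst h1
    obtain ⟨Φ₀, sM, rfl, hE₀, hI⟩ := enc_concat_right hE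
    rcases hI with hI | ⟨_, hI⟩
    · rw [actE, Prod.mk.injEq] at hI
      obtain ⟨hI1, hI2⟩ := hI
      injection hI1 with hI1
      exact ⟨Φ₀', Φ₀, sM, rfl, h2, rfl, hE₀, hI1.symm, hI2.symm⟩
    · exfalso
      rw [lazyE, Prod.mk.injEq] at hI
      exact nomatch hI.1

lemma stack_top_laz {L Φ : List (N × List Γ)} {Φ' Φs} {Xl : N} {γl : List Γ}
    {cont : List (Option Γ)}
    (hst : (TDLab.bot, [(none : Option Γ)]) :: Φ' = Φs ++ [(TDLab.laz Xl γl, cont)])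
    (hE : Enc L Φ Φ') :
    ∃ Φ₀' Φ₀ sM, Φ' = Φ₀' ++ [((TDLab.laz Xl γl : TDLab N Γ), cont)] ∧
      Φs = (TDLab.bot, [(none : Option Γ)]) :: Φ₀' ∧ Φ = Φ₀ ++ [sM] ∧
      Enc L Φ₀ Φ₀' ∧ sM ∈ L ∧ sM = (Xl, γl) ∧ cont = [(none : Option Γ)] := by
  rcases cons_eq_append_singleton hst with ⟨h1, h2, h3⟩ | ⟨Φ₀', h1, h2⟩
  · exfalso
    rw [Prod.mk.injEq] at h3
    exact nomatch h3.1
  · subst h1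
    obtain ⟨Φ₀, sM, rfl, hE₀, hI⟩ := enc_concat_right hE
    rcases hI with hI | ⟨hmem, hI⟩
    · exfalso
      rw [actE, Prod.mk.injEq] at hI
      exact nomatch hI.1
    · rw [lazyE, Prod.mk.injEq] at hI
      obtain ⟨hI1, hI2⟩ := hI
      injection hI1 with ha hb
      refine ⟨Φ₀', Φ₀, sM, rfl, h2, rfl, hE₀, hmem, ?_, hI2⟩
      exact Prod.ext ha.symm hb.symm

lemma stack_top_bot {L Φ : List (N × List Γ)} {Φ' Φs}
    {cont : List (Option Γ)}
    (hst : (TDLab.bot, [(none : Option Γ)]) :: Φ' = Φs ++ [(TDLab.bot, cont)])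
    (hE : Enc L Φ Φ') :
    Φ' = [] ∧ Φs = [] ∧ Φ = [] ∧ cont = [(none : Option Γ)] := by
  rcases cons_eq_append_singleton hst with ⟨h1, h2, h3⟩ | ⟨Φ₀', h1, h2⟩
  · subst h1
    rw [Prod.mk.injEq] at h3
    exact ⟨rfl, h2, enc_nil_right hE, h3.2⟩
  · exfalso
    subst h1
    obtain ⟨Φ₀, sM, rfl, hE₀, hI⟩ := enc_concat_right hE
    rcases hI with hI | ⟨_, hI⟩
    · rw [actE, Prod.mk.injEq] at hI
      exact nomatch hI.1
    · rw [lazyE, Prod.mk.injEq] at hI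
      exact nomatch hI.1

lemma append_singleton_eq {α : Type _} {σs : List α} {a b : α}
    (h : σs ++ [a] = [b]) : σs = [] ∧ a = b := by
  have hl := congrArg List.length h
  simp only [List.length_append, List.length_singleton, List.length_cons,
    List.length_nil] at hl
  have h0 : σs = [] := List.eq_nil_of_length_eq_zero (by omega)
  subst h0
  simp only [List.nil_append, List.cons.injEq, and_true] at h
  exact ⟨rfl, h⟩

lemma cont_act_decomp {γ : List Γ} {σs : List (Option Γ)} {x : Option Γ}
    (h : (none : Option Γ) :: (enc γ ++ [none]) = σs ++ [x]) :
    σs = (none : Option Γ) :: enc γ ∧ x = none := by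
  have h' : ((none : Option Γ) :: enc γ) ++ [none] = σs ++ [x] := by simpa using h
  obtain ⟨h1, h2⟩ := List.append_inj' h' rfl
  simp only [List.cons.injEq, and_true] at h2
  exact ⟨h1.symm, h2.symm⟩

----------------------------------------------------------------
-- Backward lemmas per transition group
----------------------------------------------------------------

lemma bwd_init {Φs : List (TDLab N Γ × List (Option Γ))} {σs : List (Option Γ)}
    {w' : List T}
    (IH : BwdP M (.orig M.qInit,
      Φs ++ [] ++ [(.bot, σs ++ [none])] ++ lazyL M.stackInit) w') :
    BwdP M (.start, Φs ++ [(.s0, σs ++ [none])])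
      ((none : Option T).toList ++ w') := by
  apply bwdP_start
  intro hst
  have hlen := congrArg List.length hst
  simp only [List.length_append, List.length_cons, List.length_nil,
    List.length_singleton] at hlen
  have hΦs : Φs = [] := List.eq_nil_of_length_eq_zero (by omega)
  subst hΦs
  simp only [List.nil_append, List.cons.injEq, Prod.mk.injEq, and_true,
    true_and] at hst
  obtain ⟨hσ, -⟩ := append_singleton_eq hst
  subst hσ
  have := IH.orig M.qInit (lazyL M.stackInit) M.stackInit (by simp)
    (enc_lazyL fun z hz => mem_lazySet_init M hz)
  simpa using this

lemma bwd_unpack {p0 : Q} {s0 : N × List Γ}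
    {Φs : List (TDLab N Γ × List (Option Γ))} {σs : List (Option Γ)} {w' : List T}
    (IH : BwdP M (.orig p0,
      Φs ++ [] ++ [(.act s0.1, σs ++ (none :: (enc s0.2 ++ [none])))] ++ []) w') :
    BwdP M (.orig p0, Φs ++ [(.laz s0.1 s0.2, σs ++ [none])])
      ((none : Option T).toList ++ w') := by
  apply bwdP_orig
  intro Φ' Φ hst hE
  obtain ⟨Φ₀', Φ₀, sM, hΦ', hΦs, hΦ, hE₀, hmem, hsM, hcont⟩ :=
    stack_top_laz hst.symm hE
  obtain ⟨hσ, -⟩ := append_singleton_eq hcont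
  have := IH.orig p0 (Φ₀' ++ [actE sM]) (Φ₀ ++ [sM])
    (by rw [hΦs, hσ, hsM]; simp [actE])
    (Enc.append hE₀ (List.Forall₂.cons (Or.inl rfl) List.Forall₂.nil))
  rw [hΦ]
  simpa using this

lemma bwd_entry_bot {Φs : List (TDLab N Γ × List (Option Γ))}
    {σs : List (Option Γ)} {w' : List T}
    (IH : BwdP M (.bst M.stackFin.length,
      Φs ++ [] ++ [(.bot, σs ++ [none])] ++ []) w') :
    BwdP M (.orig M.qFin, Φs ++ [(.bot, σs ++ [none])])
      ((none : Option T).toList ++ w') := by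
  apply bwdP_orig
  intro Φ' Φ hst hE
  obtain ⟨hΦ', hΦs, hΦ, hcont⟩ := stack_top_bot hst.symm hE
  obtain ⟨hσ, -⟩ := append_singleton_eq hcont
  obtain ⟨hw, htake⟩ := IH.bstC M.stackFin.length [] []
    (by rw [hΦs, hσ]; simp) Enc.nil
  have hSF : M.stackFin = [] := by
    rw [List.take_length] at htake
    exact htake.symm
  subst hw
  rw [hΦ]
  exact ⟨by rw [hSF]; exact .refl _⟩

lemma bwd_entry_laz {s0 : N × List Γ}
    {Φs : List (TDLab N Γ × List (Option Γ))} {σs : List (Option Γ)} {w' : List T}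
    (IH : BwdP M (.bst M.stackFin.length,
      Φs ++ [] ++ [(.laz s0.1 s0.2, σs ++ [none])] ++ []) w') :
    BwdP M (.orig M.qFin, Φs ++ [(.laz s0.1 s0.2, σs ++ [none])])
      ((none : Option T).toList ++ w') := by
  apply bwdP_orig
  intro Φ' Φ hst hE
  obtain ⟨Φ₀', Φ₀, sM, hΦ', hΦs, hΦ, hE₀, hmem, hsM, hcont⟩ :=
    stack_top_laz hst.symm hE
  obtain ⟨hσ, -⟩ := append_singleton_eq hcont
  obtain ⟨hw, htake⟩ := IH.bstC M.stackFin.length (Φ₀' ++ [lazyE sM]) (Φ₀ ++ [sM])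
    (by rw [hΦs, hσ, hsM]; simp [lazyE])
    (Enc.append hE₀ (List.Forall₂.cons (Or.inr ⟨hmem, rfl⟩) List.Forall₂.nil))
  rw [List.take_length] at htake
  subst hw
  rw [hΦ]
  exact ⟨by rw [htake]; exact .refl _⟩

lemma bwd_entry_act {s0 : N × List Γ}
    {Φs : List (TDLab N Γ × List (Option Γ))} {σs : List (Option Γ)} {w' : List T}
    (IH : BwdP M (.bst M.stackFin.length,
      Φs ++ [] ++ [(.act s0.1, σs ++ [none])] ++ []) w') :
    BwdP M (.orig M.qFin, Φs ++ [(.act s0.1, σs ++ [none])])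
      ((none : Option T).toList ++ w') := by
  apply bwdP_orig
  intro Φ' Φ hst hE
  obtain ⟨Φ₀', Φ₀, sM, hΦ', hΦs, hΦ, hE₀, hsM1, hcont⟩ :=
    stack_top_act hst.symm hE
  obtain ⟨hw, htake⟩ := IH.bstC M.stackFin.length (Φ₀' ++ [actE sM]) (Φ₀ ++ [sM])
    (by rw [hΦs]; simp [actE, hsM1, hcont])
    (Enc.append hE₀ (List.Forall₂.cons (Or.inl rfl) List.Forall₂.nil))
  rw [List.take_length] at htake
  subst hw
  rw [hΦ]
  exact ⟨by rw [htake]; exact .refl _⟩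

lemma nmMac_ne {t : ETrans Q N T Γ} {p : Q} {k : ℕ} {l : List (Option Γ)}
    (h : l.length ≠ k) : nmMac t p k l = .mid t l := if_neg h

lemma nmMac_eqk {t : ETrans Q N T Γ} {p : Q} {k : ℕ} {l : List (Option Γ)}
    (h : l.length = k) : nmMac t p k l = .orig p := if_pos h

lemma nmCl_ne {i k : ℕ} {l : List (Option Γ)} (h : l.length ≠ k) :
    nmCl i k l = (.cst i l : TDSt Q N T Γ) := if_neg h

lemma nmCl_eqk {i k : ℕ} {l : List (Option Γ)} (h : l.length = k) :
    nmCl i k l = (.bst i : TDSt Q N T Γ) := if_pos h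

lemma suffix_drop_head {x : Option Γ} {l l₀ : List (Option Γ)}
    (hsuf : (x :: l) <:+ ((none : Option Γ) :: l₀))
    (hne : (x :: l).length ≠ l₀.length + 1) : (x :: l) <:+ l₀ := by
  rcases List.suffix_cons_iff.1 hsuf with h | h
  · exact absurd (by rw [h]; simp) hne
  · exact h

lemma head_some_of_suffix_enc {x : Option Γ} {l : List (Option Γ)} {ρ : List Γ}
    (h : (x :: l) <:+ enc ρ) : ∃ b, x = some b := by
  have hx : x ∈ enc ρ := h.subset (List.mem_cons_self)
  obtain ⟨b, -, hb⟩ := List.mem_map.1 hx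
  exact ⟨b, hb.symm⟩

lemma bwd_macro_repl_plain {pp : Q} {X : N} {β : List Γ} {a : Option T} {q : Q}
    {Ψ : List (N × List Γ)} {Y : N} {β' : List Γ} {Ψ' : List (N × List Γ)}
    (htM : ETrans.repl pp X β a q Ψ Y β' Ψ' ∈ M.trans)
    {x y : Option Γ} {l'' : List (Option Γ)}
    (hsuf : (x :: y :: l'') <:+ ((none : Option Γ) :: enc β.reverse))
    {Φs : List (TDLab N Γ × List (Option Γ))} {σs : List (Option Γ)} {w' : List T}
    (IH : BwdP M
      (nmMac (ETrans.repl pp X β a q Ψ Y β' Ψ') pp (β.length + 1) (y :: l''),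
        Φs ++ [] ++ [(.act X, σs ++ [])] ++ []) w') :
    BwdP M
      (nmMac (ETrans.repl pp X β a q Ψ Y β' Ψ') pp (β.length + 1) (x :: y :: l''),
        Φs ++ [(.act X, σs ++ [x])]) ((none : Option T).toList ++ w') := by
  have hlen2 : (y :: l'').length ≠ β.length + 1 := by
    have := hsuf.length_le
    simp only [List.length_cons, enc, List.length_map, List.length_reverse] at this ⊢
    omega
  rw [nmMac_ne hlen2] at IH
  by_cases hfull : (x :: y :: l'').length = β.length + 1
  · have heq : x :: y :: l'' = (none : Option Γ) :: enc β.reverse :=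
      hsuf.eq_of_length (by simpa [enc] using hfull)
    injection heq with hx hyl
    subst hx
    rw [nmMac_eqk hfull]
    apply bwdP_orig
    intro Φ' Φ hst hE
    obtain ⟨Φ₀', Φ₀, sM, hΦ', hΦs, hΦ, hE₀, hsM1, hcont⟩ := stack_top_act hst.symm hE
    obtain ⟨hσ, -⟩ := cont_act_decomp hcont
    obtain ⟨w₂, σ2, hw, hencEq, hrun⟩ := IH.midRepl pp X β a q Ψ Y β' Ψ'
      (y :: l'') Φ₀' Φ₀ sM.2 (by rw [hΦs, hσ]; simp) htM hE₀
    have h2 : sM.2 = σ2 ++ β := by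
      apply enc_inj
      rw [hencEq, hyl]
      simp [enc]
    have hsMeq : sM = (X, σ2 ++ β) := Prod.ext hsM1 h2
    rw [hΦ, hsMeq]
    have run := WEPDA.Run.repl Φ₀ σ2 pp X β a q Ψ Y β' Ψ' htM hrun.some
    have hword : ((none : Option T).toList ++ w') = a.toList ++ w₂ := by simp [hw]
    rw [hword]
    exact ⟨run⟩
  · rw [nmMac_ne hfull]
    have hsub : (x :: y :: l'') <:+ enc β.reverse :=
      suffix_drop_head hsuf (by simpa [enc] using hfull)
    obtain ⟨b, rfl⟩ := head_some_of_suffix_enc hsub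
    apply bwdP_midRepl
    intro Φ₀' Φ₀ δ hst htM' hE₀
    have h' : ((TDLab.bot, [(none : Option Γ)]) :: Φ₀') ++
        [((TDLab.act X : TDLab N Γ), none :: enc δ)] =
        Φs ++ [((TDLab.act X : TDLab N Γ), σs ++ [some b])] := by
      simpa using hst.symm
    obtain ⟨h1, h2⟩ := List.append_inj' h' rfl
    simp only [List.cons.injEq, Prod.mk.injEq, and_true, true_and] at h2
    rcases enc_snoc_eq h2 with ⟨-, -, hxn⟩ | ⟨δ'', b2, hδ, hσ, hx2⟩
    · simp at hxn
    · obtain ⟨w₂, σ2, hw, henc2, hrun⟩ := IH.midRepl pp X β a q Ψ Y β' Ψ'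
        (y :: l'') Φ₀' Φ₀ δ'' (by rw [← h1, hσ]; simp) htM hE₀
      refine ⟨w₂, σ2, by simp [hw], ?_, hrun⟩
      rw [hδ]
      have : enc (δ'' ++ [b2]) = enc δ'' ++ [some b2] := by simp [enc]
      rw [this, henc2]
      injection hx2 with hb2
      subst hb2
      simp

lemma bwd_macro_repl_final {pp : Q} {X : N} {β : List Γ} {a : Option T} {q : Q}
    {Ψ : List (N × List Γ)} {Y : N} {β' : List Γ} {Ψ' : List (N × List Γ)}
    (htM : ETrans.repl pp X β a q Ψ Y β' Ψ' ∈ M.trans)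
    {x : Option Γ} (hsuf : [x] <:+ ((none : Option Γ) :: enc β.reverse))
    {Φs : List (TDLab N Γ × List (Option Γ))} {σs : List (Option Γ)} {w' : List T}
    (IH : BwdP M (.orig q,
      Φs ++ lazyL Ψ ++ [(.act Y, σs ++ (enc β' ++ [none]))] ++ lazyL Ψ') w') :
    BwdP M (nmMac (ETrans.repl pp X β a q Ψ Y β' Ψ') pp (β.length + 1) [x],
      Φs ++ [(.act X, σs ++ [x])]) (a.toList ++ w') := by
  have hEΨ : ∀ z ∈ Ψ, z ∈ lazySet M :=
    fun z hz => mem_lazySet_repl M htM (by simp [hz])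
  have hEΨ' : ∀ z ∈ Ψ', z ∈ lazySet M :=
    fun z hz => mem_lazySet_repl M htM (by simp [hz])
  by_cases hfull : ([x] : List (Option Γ)).length = β.length + 1
  · have hβ : β = [] := List.length_eq_zero_iff.1 (by simpa using hfull.symm)
    subst hβ
    have heq : [x] = [(none : Option Γ)] := hsuf.eq_of_length (by simp [enc])
    injection heq with hx htl
    subst hx
    rw [nmMac_eqk hfull]
    apply bwdP_orig
    intro Φ' Φ hst hE
    obtain ⟨Φ₀', Φ₀, sM, hΦ', hΦs, hΦ, hE₀, hsM1, hcont⟩ := stack_top_act hst.symm hE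
    obtain ⟨hσ, -⟩ := cont_act_decomp hcont
    have hEpost : Enc (lazySet M) (Φ₀ ++ Ψ ++ [(Y, sM.2 ++ β')] ++ Ψ')
        (Φ₀' ++ lazyL Ψ ++ [actE (Y, sM.2 ++ β')] ++ lazyL Ψ') :=
      Enc.append (Enc.append (Enc.append hE₀ (enc_lazyL hEΨ))
        (List.Forall₂.cons (Or.inl rfl) List.Forall₂.nil)) (enc_lazyL hEΨ')
    have hrun := IH.orig q (Φ₀' ++ lazyL Ψ ++ [actE (Y, sM.2 ++ β')] ++ lazyL Ψ')
      (Φ₀ ++ Ψ ++ [(Y, sM.2 ++ β')] ++ Ψ')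
      (by rw [hΦs, hσ]; simp [actE, enc]) hEpost
    have run := WEPDA.Run.repl Φ₀ sM.2 pp X [] a q Ψ Y β' Ψ' htM hrun.some
    rw [hΦ, show sM = (X, sM.2) from Prod.ext hsM1 rfl]
    exact ⟨by simpa using run⟩
  · rw [nmMac_ne hfull]
    have hsub : [x] <:+ enc β.reverse :=
      suffix_drop_head hsuf (by simpa [enc] using hfull)
    obtain ⟨b, rfl⟩ := head_some_of_suffix_enc hsub
    apply bwdP_midRepl
    intro Φ₀' Φ₀ δ hst htM' hE₀
    have h' : ((TDLab.bot, [(none : Option Γ)]) :: Φ₀') ++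
        [((TDLab.act X : TDLab N Γ), none :: enc δ)] =
        Φs ++ [((TDLab.act X : TDLab N Γ), σs ++ [some b])] := by
      simpa using hst.symm
    obtain ⟨h1, h2⟩ := List.append_inj' h' rfl
    simp only [List.cons.injEq, Prod.mk.injEq, and_true, true_and] at h2
    rcases enc_snoc_eq h2 with ⟨-, -, hxn⟩ | ⟨δ'', b2, hδ, hσ, hx2⟩
    · simp at hxn
    · have hEpost : Enc (lazySet M) (Φ₀ ++ Ψ ++ [(Y, δ'' ++ β')] ++ Ψ')
          (Φ₀' ++ lazyL Ψ ++ [actE (Y, δ'' ++ β')] ++ lazyL Ψ') :=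
        Enc.append (Enc.append (Enc.append hE₀ (enc_lazyL hEΨ))
          (List.Forall₂.cons (Or.inl rfl) List.Forall₂.nil)) (enc_lazyL hEΨ')
      have hrun := IH.orig q (Φ₀' ++ lazyL Ψ ++ [actE (Y, δ'' ++ β')] ++ lazyL Ψ')
        (Φ₀ ++ Ψ ++ [(Y, δ'' ++ β')] ++ Ψ')
        (by rw [← h1, hσ]; simp [actE, enc]) hEpost
      refine ⟨w', δ'', rfl, ?_, hrun⟩
      rw [hδ]
      injection hx2 with hb2
      subst hb2
      simp [enc]

lemma bwd_macro_pop_plain {pp : Q} {X : N} {β : List Γ} {a : Option T} {q : Q}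
    (htM : ETrans.popT pp X β a q ∈ M.trans)
    {x : Option Γ} {l'' : List (Option Γ)}
    (hsuf : (x :: l'') <:+ ((none : Option Γ) :: enc β.reverse))
    {Φs : List (TDLab N Γ × List (Option Γ))} {σs : List (Option Γ)} {w' : List T}
    (IH : BwdP M (nmMac (ETrans.popT pp X β a q) pp (β.length + 1) l'',
      Φs ++ [] ++ [(.act X, σs ++ [])] ++ []) w') :
    BwdP M (nmMac (ETrans.popT pp X β a q) pp (β.length + 1) (x :: l''),
      Φs ++ [(.act X, σs ++ [x])]) ((none : Option T).toList ++ w') := by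
  have hlen2 : l''.length ≠ β.length + 1 := by
    have := hsuf.length_le
    simp only [List.length_cons, enc, List.length_map, List.length_reverse] at this ⊢
    omega
  rw [nmMac_ne hlen2] at IH
  by_cases hfull : (x :: l'').length = β.length + 1
  · have heq : x :: l'' = (none : Option Γ) :: enc β.reverse :=
      hsuf.eq_of_length (by simpa [enc] using hfull)
    injection heq with hx hyl
    subst hx
    rw [nmMac_eqk hfull]
    apply bwdP_orig
    intro Φ' Φ hst hE
    obtain ⟨Φ₀', Φ₀, sM, hΦ', hΦs, hΦ, hE₀, hsM1, hcont⟩ := stack_top_act hst.symm hE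
    obtain ⟨hσ, -⟩ := cont_act_decomp hcont
    obtain ⟨w₂, hw, hencEq, hrun⟩ := IH.midPop pp X β a q l'' Φ₀' Φ₀ sM.2
      (by rw [hΦs, hσ]; simp) htM hE₀
    have h2 : sM.2 = β := by
      apply enc_inj
      rw [hencEq, hyl]
      simp [enc]
    have run := WEPDA.Run.popT Φ₀ pp X β a q htM hrun.some
    rw [hΦ, show sM = (X, β) from Prod.ext hsM1 h2]
    have hword : ((none : Option T).toList ++ w') = a.toList ++ w₂ := by simp [hw]
    rw [hword]
    exact ⟨run⟩
  · rw [nmMac_ne hfull]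
    have hsub : (x :: l'') <:+ enc β.reverse :=
      suffix_drop_head hsuf (by simpa [enc] using hfull)
    obtain ⟨b, rfl⟩ := head_some_of_suffix_enc hsub
    apply bwdP_midPop
    intro Φ₀' Φ₀ δ hst htM' hE₀
    have h' : ((TDLab.bot, [(none : Option Γ)]) :: Φ₀') ++
        [((TDLab.act X : TDLab N Γ), none :: enc δ)] =
        Φs ++ [((TDLab.act X : TDLab N Γ), σs ++ [some b])] := by
      simpa using hst.symm
    obtain ⟨h1, h2⟩ := List.append_inj' h' rfl
    simp only [List.cons.injEq, Prod.mk.injEq, and_true, true_and] at h2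
    rcases enc_snoc_eq h2 with ⟨-, -, hxn⟩ | ⟨δ'', b2, hδ, hσ, hx2⟩
    · simp at hxn
    · obtain ⟨w₂, hw, henc2, hrun⟩ := IH.midPop pp X β a q l'' Φ₀' Φ₀ δ''
        (by rw [← h1, hσ]; simp) htM hE₀
      refine ⟨w₂, by simp [hw], ?_, hrun⟩
      rw [hδ]
      have : enc (δ'' ++ [b2]) = enc δ'' ++ [some b2] := by simp [enc]
      rw [this, henc2]
      injection hx2 with hb2
      subst hb2
      simp

lemma bwd_macro_pop_final {pp : Q} {X : N} {β : List Γ} {a : Option T} {q : Q}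
    (htM : ETrans.popT pp X β a q ∈ M.trans)
    {Φs : List (TDLab N Γ × List (Option Γ))} {w' : List T}
    (IH : BwdP M (.orig q, Φs) w') :
    BwdP M (nmMac (ETrans.popT pp X β a q) pp (β.length + 1) [],
      Φs ++ [(.act X, [none])]) (a.toList ++ w') := by
  rw [nmMac_ne (by simp)]
  apply bwdP_midPop
  intro Φ₀' Φ₀ δ hst htM' hE₀
  have h' : ((TDLab.bot, [(none : Option Γ)]) :: Φ₀') ++
      [((TDLab.act X : TDLab N Γ), none :: enc δ)] =
      Φs ++ [((TDLab.act X : TDLab N Γ), [none])] := by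
    simpa using hst.symm
  obtain ⟨h1, h2⟩ := List.append_inj' h' rfl
  simp only [List.cons.injEq, Prod.mk.injEq, and_true, true_and] at h2
  have hδ : δ = [] := by
    cases δ with
    | nil => rfl
    | cons c δ => simp [enc] at h2
  have hrun := IH.orig q Φ₀' Φ₀ (by rw [← h1]) hE₀
  exact ⟨w', rfl, by simp [hδ, enc], hrun⟩

lemma bwd_clean_plain {k : ℕ} {s0 : N × List Γ}
    (hk : M.stackFin[k]? = some s0)
    {x : Option Γ} {l'' : List (Option Γ)}
    (hsuf : (x :: l'') <:+ ((none : Option Γ) :: enc s0.2.reverse))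
    {Φs : List (TDLab N Γ × List (Option Γ))} {σs : List (Option Γ)} {w' : List T}
    (IH : BwdP M (nmCl (k + 1) (s0.2.length + 1) l'',
      Φs ++ [] ++ [(.act s0.1, σs ++ [])] ++ []) w') :
    BwdP M (nmCl (k + 1) (s0.2.length + 1) (x :: l''),
      Φs ++ [(.act s0.1, σs ++ [x])]) ((none : Option T).toList ++ w') := by
  have hgetElem : M.stackFin[k]? = some s0 := by
    exact hk
  have hlen2 : l''.length ≠ s0.2.length + 1 := by
    have := hsuf.length_le
    simp only [List.length_cons, enc, List.length_map, List.length_reverse] at this ⊢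
    omega
  rw [nmCl_ne hlen2] at IH
  by_cases hfull : (x :: l'').length = s0.2.length + 1
  · have heq : x :: l'' = (none : Option Γ) :: enc s0.2.reverse :=
      hsuf.eq_of_length (by simpa [enc] using hfull)
    injection heq with hx hyl
    subst hx
    rw [nmCl_eqk hfull]
    apply bwdP_bst
    intro Φ' Φ hst hE
    obtain ⟨Φ₀', Φ₀, sM, hΦ', hΦs, hΦ, hE₀, hsM1, hcont⟩ := stack_top_act hst.symm hE
    obtain ⟨hσ, -⟩ := cont_act_decomp hcont
    obtain ⟨hw, hencEq, htake⟩ := IH.cstC (k + 1) l'' Φ₀' Φ₀ s0.1 sM.2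
      (by rw [hΦs, hσ]; simp) hE₀
    have h2 : sM.2 = s0.2 := by
      apply enc_inj
      rw [hencEq, hyl]
      simp [enc]
    have hsM : sM = s0 := Prod.ext hsM1 h2
    refine ⟨by simp [hw], ?_⟩
    rw [hΦ, hsM, show Φ₀ = M.stackFin.take k from by simpa using htake,
      List.take_succ, hgetElem]
    simp
  · rw [nmCl_ne hfull]
    have hsub : (x :: l'') <:+ enc s0.2.reverse :=
      suffix_drop_head hsuf (by simpa [enc] using hfull)
    obtain ⟨b, rfl⟩ := head_some_of_suffix_enc hsub
    apply bwdP_cst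
    intro Φ₀' Φ₀ X δ hst hE₀
    have h' : ((TDLab.bot, [(none : Option Γ)]) :: Φ₀') ++
        [((TDLab.act X : TDLab N Γ), none :: enc δ)] =
        Φs ++ [((TDLab.act s0.1 : TDLab N Γ), σs ++ [some b])] := by
      simpa using hst.symm
    obtain ⟨h1, h2⟩ := List.append_inj' h' rfl
    simp only [List.cons.injEq, Prod.mk.injEq] at h2
    obtain ⟨⟨hX, hcnt⟩, -⟩ := h2
    injection hX with hX
    subst hX
    rcases enc_snoc_eq hcnt with ⟨-, -, hxn⟩ | ⟨δ'', b2, hδ, hσ, hx2⟩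
    · simp at hxn
    · obtain ⟨hw, henc2, htake⟩ := IH.cstC (k + 1) l'' Φ₀' Φ₀ s0.1 δ''
        (by rw [← h1, hσ]; simp) hE₀
      refine ⟨by simp [hw], ?_, by simpa using htake⟩
      rw [hδ]
      have : enc (δ'' ++ [b2]) = enc δ'' ++ [some b2] := by simp [enc]
      rw [this, henc2]
      injection hx2 with hb2
      subst hb2
      simp

lemma bwd_clean_laz {k : ℕ} {s0 : N × List Γ}
    (hk : M.stackFin[k]? = some s0)
    {Φs : List (TDLab N Γ × List (Option Γ))} {w' : List T}
    (IH : BwdP M (.bst k, Φs) w') :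
    BwdP M (.bst (k + 1), Φs ++ [(.laz s0.1 s0.2, [none])])
      ((none : Option T).toList ++ w') := by
  have hgetElem : M.stackFin[k]? = some s0 := by
    exact hk
  apply bwdP_bst
  intro Φ' Φ hst hE
  obtain ⟨Φ₀', Φ₀, sM, hΦ', hΦs, hΦ, hE₀, hmem, hsM, hcont⟩ :=
    stack_top_laz hst.symm hE
  obtain ⟨hw, htake⟩ := IH.bstC k Φ₀' Φ₀ (by rw [hΦs]) hE₀
  refine ⟨by simp [hw], ?_⟩
  rw [hΦ, show sM = s0 from by rw [hsM], htake, List.take_succ, hgetElem]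
  simp

lemma bwd_clean_final {k : ℕ} {s0 : N × List Γ}
    (hk : M.stackFin[k]? = some s0)
    {Φs : List (TDLab N Γ × List (Option Γ))} {w' : List T}
    (IH : BwdP M (.bst k, Φs) w') :
    BwdP M (nmCl (k + 1) (s0.2.length + 1) [],
      Φs ++ [(.act s0.1, [none])]) ((none : Option T).toList ++ w') := by
  rw [nmCl_ne (by simp)]
  apply bwdP_cst
  intro Φ₀' Φ₀ X δ hst hE₀
  have h' : ((TDLab.bot, [(none : Option Γ)]) :: Φ₀') ++
      [((TDLab.act X : TDLab N Γ), none :: enc δ)] =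
      Φs ++ [((TDLab.act s0.1 : TDLab N Γ), [none])] := by
    simpa using hst.symm
  obtain ⟨h1, h2⟩ := List.append_inj' h' rfl
  simp only [List.cons.injEq, Prod.mk.injEq] at h2
  obtain ⟨⟨-, hcnt⟩, -⟩ := h2
  have hδ : δ = [] := by
    cases δ with
    | nil => rfl
    | cons c δ => simp [enc] at hcnt
  obtain ⟨hw, htake⟩ := IH.bstC k Φ₀' Φ₀ (by rw [← h1]) hE₀
  exact ⟨by simp [hw], by simp [hδ, enc], by simpa using htake⟩

lemma bwd_bst0 {Φs : List (TDLab N Γ × List (Option Γ))} {w' : List T}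
    (IH : BwdP M (.fin, Φs) w') :
    BwdP M (.bst 0, Φs ++ [(.bot, [none])]) ((none : Option T).toList ++ w') := by
  apply bwdP_bst
  intro Φ' Φ hst hE
  obtain ⟨hΦ', hΦs, hΦ, -⟩ := stack_top_bot hst.symm hE
  obtain ⟨hw, -⟩ := IH.finC Φs rfl
  exact ⟨by simp [hw], by rw [hΦ]; simp⟩

lemma bwd_run : ∀ {D E w}, Run (tdM M) D E w →
    E = ((.fin : TDSt Q N T Γ), []) → BwdP M D w := by
  intro D E w r
  induction r with
  | refl c =>
    intro hE
    subst hE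
    refine ⟨?_, ?_, ?_, ?_, ?_, ?_, ?_⟩
    · intro p Φ' Φ hD hE
      exact absurd hD (by simp)
    · intro a1 a2 a3 a4 a5 a6 a7 a8 a9 a10 a11 a12 a13 hD
      exact absurd hD (by simp)
    · intro a1 a2 a3 a4 a5 a6 a7 a8 a9 hD
      exact absurd hD (by simp)
    · intro i Φ' Φ hD hE
      exact absurd hD (by simp)
    · intro a1 a2 a3 a4 a5 a6 hD
      exact absurd hD (by simp)
    · intro hD
      exact absurd hD (by simp)
    · intro Δ hD
      rw [Prod.mk.injEq] at hD
      exact ⟨rfl, hD.2.symm⟩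
  | repl Φs σs ps Xs βs as qs Ψs Ys β's Ψ's ht r ih =>
    rename_i c' w'
    intro hE
    have IH := ih hE
    rcases transOf_mem M ht with hTR | ⟨t, htM, hmac⟩ | ⟨p0, hp0, s0, hs0, hTR⟩ |
      hTR | ⟨s0, hs0, hTR⟩ | ⟨k, s0, hk, hTR⟩ | hTR
    · injection hTR with e1 e2 e3 e4 e5 e6 e7 e8 e9
      subst e1; subst e2; subst e3; subst e4; subst e5; subst e6; subst e7
      subst e8; subst e9
      exact bwd_init M IH
    · cases t with
      | repl pp X β a q Ψ Y β' Ψ' =>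
        simp only [macroOf] at hmac
        obtain ⟨l', hsuf, hcase⟩ := replSeq_mem hmac
        rcases hcase with ⟨x, y, l'', rfl, hTR⟩ | ⟨x, rfl, hTR⟩
        · injection hTR with e1 e2 e3 e4 e5 e6 e7 e8 e9
          subst e1; subst e2; subst e3; subst e4; subst e5; subst e6; subst e7
          subst e8; subst e9
          exact bwd_macro_repl_plain M htM hsuf IH
        · injection hTR with e1 e2 e3 e4 e5 e6 e7 e8 e9
          subst e1; subst e2; subst e3; subst e4; subst e5; subst e6; subst e7
          subst e8; subst e9
          exact bwd_macro_repl_final M htM hsuf IH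
      | popT pp X β a q =>
        simp only [macroOf] at hmac
        obtain ⟨l', hsuf, hcase⟩ := popSeq_mem hmac
        rcases hcase with ⟨x, l'', rfl, hTR⟩ | ⟨rfl, hTR⟩
        · injection hTR with e1 e2 e3 e4 e5 e6 e7 e8 e9
          subst e1; subst e2; subst e3; subst e4; subst e5; subst e6; subst e7
          subst e8; subst e9
          exact bwd_macro_pop_plain M htM hsuf IH
        · exact nomatch hTR
    · injection hTR with e1 e2 e3 e4 e5 e6 e7 e8 e9
      subst e1; subst e2; subst e3; subst e4; subst e5; subst e6; subst e7
      subst e8; subst e9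
      exact bwd_unpack M IH
    · injection hTR with e1 e2 e3 e4 e5 e6 e7 e8 e9
      subst e1; subst e2; subst e3; subst e4; subst e5; subst e6; subst e7
      subst e8; subst e9
      exact bwd_entry_bot M IH
    · rcases hTR with hTR | hTR
      · injection hTR with e1 e2 e3 e4 e5 e6 e7 e8 e9
        subst e1; subst e2; subst e3; subst e4; subst e5; subst e6; subst e7
        subst e8; subst e9
        exact bwd_entry_laz M IH
      · injection hTR with e1 e2 e3 e4 e5 e6 e7 e8 e9
        subst e1; subst e2; subst e3; subst e4; subst e5; subst e6; subst e7
        subst e8; subst e9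
        exact bwd_entry_act M IH
    · rcases hTR with hTR | hTR
      · exact nomatch hTR
      · obtain ⟨l', hsuf, hcase⟩ := popSeq_mem hTR
        rcases hcase with ⟨x, l'', rfl, hTR2⟩ | ⟨rfl, hTR2⟩
        · injection hTR2 with e1 e2 e3 e4 e5 e6 e7 e8 e9
          subst e1; subst e2; subst e3; subst e4; subst e5; subst e6; subst e7
          subst e8; subst e9
          exact bwd_clean_plain M hk hsuf IH
        · exact nomatch hTR2
    · exact nomatch hTR
  | popT Φs ps Xs βs as qs ht r ih =>
    rename_i c' w'
    intro hE
    have IH := ih hE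
    rcases transOf_mem M ht with hTR | ⟨t, htM, hmac⟩ | ⟨p0, hp0, s0, hs0, hTR⟩ |
      hTR | ⟨s0, hs0, hTR⟩ | ⟨k, s0, hk, hTR⟩ | hTR
    · exact nomatch hTR
    · cases t with
      | repl pp X β a q Ψ Y β' Ψ' =>
        simp only [macroOf] at hmac
        obtain ⟨l', hsuf, hcase⟩ := replSeq_mem hmac
        rcases hcase with ⟨x, y, l'', rfl, hTR⟩ | ⟨x, rfl, hTR⟩
        · exact nomatch hTR
        · exact nomatch hTR
      | popT pp X β a q =>
        simp only [macroOf] at hmac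
        obtain ⟨l', hsuf, hcase⟩ := popSeq_mem hmac
        rcases hcase with ⟨x, l'', rfl, hTR⟩ | ⟨rfl, hTR⟩
        · exact nomatch hTR
        · injection hTR with e1 e2 e3 e4 e5
          subst e1; subst e2; subst e3; subst e4; subst e5
          exact bwd_macro_pop_final M htM IH
    · exact nomatch hTR
    · exact nomatch hTR
    · rcases hTR with hTR | hTR
      · exact nomatch hTR
      · exact nomatch hTR
    · rcases hTR with hTR | hTR
      · injection hTR with e1 e2 e3 e4 e5
        subst e1; subst e2; subst e3; subst e4; subst e5
        exact bwd_clean_laz M hk IH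
      · obtain ⟨l', hsuf, hcase⟩ := popSeq_mem hTR
        rcases hcase with ⟨x, l'', rfl, hTR2⟩ | ⟨rfl, hTR2⟩
        · exact nomatch hTR2
        · injection hTR2 with e1 e2 e3 e4 e5
          subst e1; subst e2; subst e3; subst e4; subst e5
          exact bwd_clean_final M hk IH
    · injection hTR with e1 e2 e3 e4 e5
      subst e1; subst e2; subst e3; subst e4; subst e5
      exact bwd_bst0 M IH

lemma tdM_language : (tdM M).language = M.language := by
  ext w
  simp only [WEPDA.language, Set.mem_setOf_eq]
  constructor
  · intro h
    exact (bwd_run M h.some rfl).startC rfl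
  · intro h
    exact fwd_main M h

end TopDown


/-- Every weighted embedded pushdown automaton is weakly equivalent to a
top-down WEPDA. -/
theorem every_wepda_weakly_equivalent_to_topDown
    {Q N T Γ A : Type} [Semiring A] (M : WEPDA Q N T Γ A) :
    ∃ (Q' N' Γ' : Type) (M' : WEPDA Q' N' T Γ' A),
      M'.IsTopDown ∧ M'.language = M.language := by
  exact ⟨TDSt Q N T Γ, TDLab N Γ, Option Γ, tdM M, tdM_isTopDown M, tdM_language M⟩

end CtrlForm
end
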